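/- arXiv:1808.05430 — 7 statements merged into one kernel-verified Lean document; each statement's English description precedes it below -/
import Mathlib

section
/- For every n ≥ 1, the number of permutations of {1,...,n} avoiding both 312 and 123 equals 1 + n(n-1)/2. -/
abbrev Avoids312 {n : ℕ} (σ : Equiv.Perm (Fin n)) : Prop :=
  ¬ ∃ i j k : Fin n, i < j ∧ j < k ∧ σ j < σ k ∧ σ k < σ i

abbrev Avoids21 {n : ℕ} (σ : Equiv.Perm (Fin n)) : Prop :=
  ¬ ∃ i j : Fin n, i < j ∧ σ j < σ i

abbrev Avoids123 {n : ℕ} (σ : Equiv.Perm (Fin n)) : Prop :=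
  ¬ ∃ i j k : Fin n, i < j ∧ j < k ∧ σ i < σ j ∧ σ j < σ k

abbrev Avoids132 {n : ℕ} (σ : Equiv.Perm (Fin n)) : Prop :=
  ¬ ∃ i j k : Fin n, i < j ∧ j < k ∧ σ i < σ k ∧ σ k < σ j

abbrev Avoids213 {n : ℕ} (σ : Equiv.Perm (Fin n)) : Prop :=
  ¬ ∃ i j k : Fin n, i < j ∧ j < k ∧ σ j < σ i ∧ σ i < σ k

abbrev Avoids231 {n : ℕ} (σ : Equiv.Perm (Fin n)) : Prop :=
  ¬ ∃ i j k : Fin n, i < j ∧ j < k ∧ σ k < σ i ∧ σ i < σ j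

abbrev Avoids321 {n : ℕ} (σ : Equiv.Perm (Fin n)) : Prop :=
  ¬ ∃ i j k : Fin n, i < j ∧ j < k ∧ σ k < σ j ∧ σ j < σ i

abbrev Avoids1234 {n : ℕ} (σ : Equiv.Perm (Fin n)) : Prop :=
  ¬ ∃ i j k l : Fin n, i < j ∧ j < k ∧ k < l ∧ σ i < σ j ∧ σ j < σ k ∧ σ k < σ l

abbrev Avoids1243 {n : ℕ} (σ : Equiv.Perm (Fin n)) : Prop :=
  ¬ ∃ i j k l : Fin n, i < j ∧ j < k ∧ k < l ∧ σ i < σ j ∧ σ j < σ l ∧ σ l < σ k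

abbrev AvoidsIncr {n : ℕ} (m : ℕ) (σ : Equiv.Perm (Fin n)) : Prop :=
  ¬ ∃ f : Fin m → Fin n,
      (∀ i j : Fin m, i < j → f i < f j) ∧ (∀ i j : Fin m, i < j → σ (f i) < σ (f j))

/-- Length of the longest increasing subsequence of a permutation of `{1,…,n}`. -/
def lis {n : ℕ} (σ : Equiv.Perm (Fin n)) : ℕ :=
  Nat.findGreatest (fun k => ∃ f : Fin k → Fin n,
    (∀ i j : Fin k, i < j → f i < f j) ∧ (∀ i j : Fin k, i < j → σ (f i) < σ (f j))) n


def tfun (n p b : ℕ) : Fin n → Fin n := fun i =>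
  if h1 : (i : ℕ) < p then ⟨n - 1 - i - b, by have := i.isLt; omega⟩
  else if h2 : (i : ℕ) < p + b then ⟨n - 1 - i + p, by have := i.isLt; omega⟩
  else ⟨n - 1 - i, by have := i.isLt; omega⟩

lemma tfun_val (n p b : ℕ) (i : Fin n) :
    (tfun n p b i : ℕ) =
      if (i : ℕ) < p then n - 1 - i - b
      else if (i : ℕ) < p + b then n - 1 - i + p
      else n - 1 - i := by
  unfold tfun; split_ifs <;> rfl

lemma anti_gap (f : ℕ → ℕ) (lo hi : ℕ)
    (h : ∀ i j, lo ≤ i → i < j → j < hi → f j < f i) :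
    ∀ d i, lo ≤ i → i + d < hi → f (i + d) + d ≤ f i := by
  intro d
  induction d with
  | zero => intro i _ _; simp
  | succ d ih =>
    intro i hi hlt
    have h1 := ih i hi (by omega)
    have h2 := h (i + d) (i + d + 1) (by omega) (by omega) (by omega)
    have e : i + (d + 1) = i + d + 1 := by omega
    rw [e]; omega

section Classify

variable {n : ℕ} (σ : Equiv.Perm (Fin n))

def Fv (m : ℕ) : ℕ := if h : m < n then (σ ⟨m, h⟩ : ℕ) else 0

def Gv (v : ℕ) : ℕ := if h : v < n then (σ.symm ⟨v, h⟩ : ℕ) else 0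

lemma Fv_lt {m : ℕ} (hm : m < n) : Fv σ m < n := by
  rw [Fv, dif_pos hm]; exact (σ ⟨m, hm⟩).isLt

lemma Gv_lt {v : ℕ} (hv : v < n) : Gv σ v < n := by
  rw [Gv, dif_pos hv]; exact (σ.symm ⟨v, hv⟩).isLt

lemma Fv_Gv {v : ℕ} (hv : v < n) : Fv σ (Gv σ v) = v := by
  rw [Gv, dif_pos hv, Fv, dif_pos (σ.symm ⟨v, hv⟩).isLt]
  simp

lemma Fv_inj {i j : ℕ} (hi : i < n) (hj : j < n) (h : Fv σ i = Fv σ j) : i = j := by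
  rw [Fv, dif_pos hi, Fv, dif_pos hj] at h
  exact congrArg Fin.val (σ.injective (Fin.ext h))

lemma Fv_mk (m : ℕ) (hm : m < n) : (σ ⟨m, hm⟩ : ℕ) = Fv σ m := by rw [Fv, dif_pos hm]

lemma classify (hn : 1 ≤ n)
    (h1 : ¬ ∃ i j k : Fin n, i < j ∧ j < k ∧ σ j < σ k ∧ σ k < σ i)
    (h2 : ¬ ∃ i j k : Fin n, i < j ∧ j < k ∧ σ i < σ j ∧ σ j < σ k) :
    ∃ p b : ℕ, p + b ≤ n ∧ Gv σ (n-1) = p ∧ n - 1 - Fv σ 0 = b ∧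
      (p = 0 → b = 0) ∧ (1 ≤ p → 1 ≤ b) ∧ (∀ i : Fin n, σ i = tfun n p b i) := by
  set p := Gv σ (n-1) with hpdef
  set a := Fv σ 0 with hadef
  have hp_lt : p < n := Gv_lt σ (by omega)
  have ha_lt : a < n := Fv_lt σ (by omega)
  have hFp : Fv σ p = n - 1 := Fv_Gv σ (by omega)
  have H1 : ∀ i j k : ℕ, i < j → j < k → k < n →
      ¬(Fv σ j < Fv σ k ∧ Fv σ k < Fv σ i) := by
    intro i j k hij hjk hk ⟨u, v⟩
    apply h1
    refine ⟨⟨i, by omega⟩, ⟨j, by omega⟩, ⟨k, hk⟩, Fin.mk_lt_mk.mpr hij,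
      Fin.mk_lt_mk.mpr hjk, ?_, ?_⟩ <;>
      rw [Fin.lt_def, Fv_mk σ _ (by omega), Fv_mk σ _ (by omega)]
    · exact u
    · exact v
  have H2 : ∀ i j k : ℕ, i < j → j < k → k < n →
      ¬(Fv σ i < Fv σ j ∧ Fv σ j < Fv σ k) := by
    intro i j k hij hjk hk ⟨u, v⟩
    apply h2
    refine ⟨⟨i, by omega⟩, ⟨j, by omega⟩, ⟨k, hk⟩, Fin.mk_lt_mk.mpr hij,
      Fin.mk_lt_mk.mpr hjk, ?_, ?_⟩ <;>
      rw [Fin.lt_def, Fv_mk σ _ (by omega), Fv_mk σ _ (by omega)]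
    · exact u
    · exact v
  have dec1 : ∀ i j : ℕ, i < j → j < p → Fv σ j < Fv σ i := by
    intro i j hij hjp
    by_contra hc
    push_neg at hc
    have hne : Fv σ i ≠ Fv σ j := fun e => by
      have := Fv_inj σ (by omega) (by omega) e; omega
    have hjne : Fv σ j ≠ n - 1 := fun e => by
      have := Fv_inj σ (by omega) hp_lt (e.trans hFp.symm); omega
    have hjn := Fv_lt σ (show j < n by omega)
    exact H2 i j p hij hjp hp_lt ⟨by omega, by omega⟩
  have dec2 : ∀ j k : ℕ, p ≤ j → j < k → k < n → Fv σ k < Fv σ j := by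
    intro j k hpj hjk hk
    have hkne : Fv σ k ≠ n - 1 := fun e => by
      have := Fv_inj σ hk hp_lt (e.trans hFp.symm); omega
    have hkn := Fv_lt σ hk
    rcases eq_or_lt_of_le hpj with he | hlt
    · rw [← he, hFp]; omega
    · by_contra hc
      push_neg at hc
      have hne : Fv σ j ≠ Fv σ k := fun e => by
        have := Fv_inj σ (by omega) hk e; omega
      exact H1 p j k hlt hjk hk ⟨by omega, by rw [hFp]; omega⟩
  have gap1 : ∀ i j : ℕ, i ≤ j → j < p → Fv σ j + (j - i) ≤ Fv σ i := by
    intro i j hij hjp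
    have := anti_gap (Fv σ) 0 p (fun x y _ hxy hyp => dec1 x y hxy hyp)
      (j - i) i (by omega) (by omega)
    rwa [show i + (j - i) = j by omega] at this
  have gap2 : ∀ i j : ℕ, p ≤ i → i ≤ j → j < n → Fv σ j + (j - i) ≤ Fv σ i := by
    intro i j hpi hij hjn
    have := anti_gap (Fv σ) p n (fun x y hx hxy hyn => dec2 x y hx hxy hyn)
      (j - i) i hpi (by omega)
    rwa [show i + (j - i) = j by omega] at this
  rcases Nat.eq_zero_or_pos p with hp0 | hp1
  · -- p = 0 : σ is the reversal
    have ha : a = n - 1 := by rw [hadef, ← hp0]; exact hFp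
    refine ⟨0, 0, by omega, by omega, by omega, fun _ => rfl, by omega, ?_⟩
    intro i
    have hi := i.isLt
    have u1 : Fv σ (i : ℕ) + ((i : ℕ) - 0) ≤ Fv σ 0 := gap2 0 i (by omega) (by omega) hi
    have u2 : Fv σ (n-1) + ((n-1) - (i : ℕ)) ≤ Fv σ (i : ℕ) := gap2 i (n-1) (by omega) (by omega) (by omega)
    apply Fin.ext
    rw [Fv_mk σ _ hi, tfun_val]
    split_ifs <;> omega
  · -- p ≥ 1
    have ha_ne : a ≠ n - 1 := fun e => by
      have := Fv_inj σ (by omega) hp_lt (e.trans hFp.symm); omega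
    set b := n - 1 - a with hbdef
    have hb1 : 1 ≤ b := by omega
    set m0 := Fv σ (p-1) with hm0def
    have hm0a : m0 + (p - 1) ≤ a := gap1 0 (p-1) (by omega) (by omega)
    have hIcc : ∀ v, m0 ≤ v → v ≤ a → Gv σ v < p := by
      intro v hv1 hv2
      have hvn : v < n := by omega
      by_contra hc
      push_neg at hc
      have hkn : Gv σ v < n := Gv_lt σ hvn
      have hFk : Fv σ (Gv σ v) = v := Fv_Gv σ hvn
      have hkp : Gv σ v ≠ p := fun e => by rw [e, hFp] at hFk; omega
      have hva : v ≠ a := fun e => by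
        have : Gv σ v = 0 := Fv_inj σ hkn (by omega) (by rw [hFk, e])
        omega
      have hvm : v ≠ m0 := fun e => by
        have : Gv σ v = p - 1 := Fv_inj σ hkn (by omega) (by rw [hFk, e])
        omega
      have hp2 : 2 ≤ p := by
        by_contra hpc
        have hpe : p = 1 := by omega
        rw [hm0def, hpe] at hv1
        simp only [Nat.sub_self] at hv1
        omega
      exact H1 0 (p-1) (Gv σ v) (by omega) (by omega) hkn ⟨by omega, by omega⟩
    have hGinj : ∀ s : Finset ℕ, (∀ v ∈ s, v < n) → Set.InjOn (Gv σ) s := by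
      intro s hs v1 h1' v2 h2' he
      have := Fv_Gv σ (hs v1 h1')
      rw [he, Fv_Gv σ (hs v2 h2')] at this
      omega
    have hcard : a + 1 ≤ m0 + p := by
      have hle := Finset.card_le_card_of_injOn (Gv σ) (s := Finset.Icc m0 a)
        (t := Finset.range p)
        (fun v hv => by
          rw [Finset.mem_coe, Finset.mem_Icc] at hv
          exact Finset.mem_range.mpr (hIcc v hv.1 hv.2))
        (hGinj _ (fun v hv => by rw [Finset.mem_Icc] at hv; omega))
      rw [Nat.card_Icc, Finset.card_range] at hle
      omega
    have C1 : ∀ m, m < p → Fv σ m = a - m := by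
      intro m hm
      have u1 : Fv σ m + (m - 0) ≤ Fv σ 0 := gap1 0 m (by omega) hm
      have u2 : m0 + ((p-1) - m) ≤ Fv σ m := gap1 m (p-1) (by omega) (by omega)
      omega
    have hpb : p + b ≤ n := by omega
    have C2 : ∀ m, p ≤ m → m < p + b → Fv σ m = n - 1 - m + p := by
      intro m hm1 hm2
      have hmn : m < n := by omega
      have u1 : Fv σ m + (m - p) ≤ Fv σ p := gap2 p m (by omega) hm1 hmn
      rw [hFp] at u1
      have hmem : ∀ c, a ≤ c → Fv σ m ≤ c → c < n →
          (Finset.Icc (c+1) (n-1)).card ≤ (Finset.Ico p m).card := by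
        intro c hc1 hc2 hc3
        refine Finset.card_le_card_of_injOn (Gv σ) ?_ (hGinj _ (fun v hv => by
          rw [Finset.mem_Icc] at hv; omega))
        intro v hv
        rw [Finset.mem_coe, Finset.mem_Icc] at hv
        have hvn : v < n := by omega
        have hkn : Gv σ v < n := Gv_lt σ hvn
        have hFk : Fv σ (Gv σ v) = v := Fv_Gv σ hvn
        rw [Finset.mem_coe, Finset.mem_Ico]
        constructor
        · by_contra hcp
          push_neg at hcp
          have := C1 _ hcp
          omega
        · by_contra hcm
          push_neg at hcm
          have := gap2 m (Gv σ v) (by omega) hcm hkn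
          omega
      rcases le_or_gt (Fv σ m) a with hle | hgt
      · exfalso
        have := hmem a (le_refl a) hle ha_lt
        rw [Nat.card_Icc, Nat.card_Ico] at this
        omega
      · have := hmem (Fv σ m) (by omega) (le_refl _) (Fv_lt σ hmn)
        rw [Nat.card_Icc, Nat.card_Ico] at this
        omega
    have excl : ∀ m, p + b ≤ m → m < n → Fv σ m + p ≤ a := by
      intro m hm1 hm2
      by_contra hc
      push_neg at hc
      have hFm := Fv_lt σ hm2
      rcases le_or_gt (Fv σ m) a with h' | h'
      · have hs : a - Fv σ m < p := by omega
        have he : Fv σ (a - Fv σ m) = Fv σ m := by rw [C1 _ hs]; omega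
        have := Fv_inj σ (by omega) hm2 he
        omega
      · have he : Fv σ (p + (n - 1 - Fv σ m)) = Fv σ m := by
          rw [C2 _ (by omega) (by omega)]; omega
        have := Fv_inj σ (by omega) hm2 he
        omega
    have C3 : ∀ m, p + b ≤ m → m < n → Fv σ m = n - 1 - m := by
      intro m hm1 hm2
      have u2 : Fv σ (n-1) + ((n-1) - m) ≤ Fv σ m := gap2 m (n-1) (by omega) (by omega) (by omega)
      have u1 : Fv σ m + (m - (p + b)) ≤ Fv σ (p + b) := gap2 (p+b) m (by omega) hm1 hm2
      have u3 : Fv σ (p + b) + p ≤ a := excl (p+b) (le_refl _) (by omega)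
      omega
    refine ⟨p, b, hpb, rfl, rfl, fun h0 => by omega, fun _ => hb1, ?_⟩
    intro i
    have hi := i.isLt
    apply Fin.ext
    rw [Fv_mk σ _ hi, tfun_val]
    split_ifs with hc1 hc2
    · rw [C1 _ hc1]; omega
    · exact C2 _ (by omega) hc2
    · exact C3 _ (by omega) hi

end Classify

lemma tfun_inj (n p b : ℕ) (hpb : p + b ≤ n) : Function.Injective (tfun n p b) := by
  intro x y h
  have hx := x.isLt
  have hy := y.isLt
  have h' : (tfun n p b x : ℕ) = (tfun n p b y : ℕ) := congrArg Fin.val h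
  rw [tfun_val, tfun_val] at h'
  exact Fin.ext (by split_ifs at h' <;> omega)

lemma tfun_bij (n p b : ℕ) (hpb : p + b ≤ n) : Function.Bijective (tfun n p b) :=
  Finite.injective_iff_bijective.mp (tfun_inj n p b hpb)

noncomputable def mkPerm (n p b : ℕ) : Equiv.Perm (Fin n) :=
  if h : Function.Bijective (tfun n p b) then Equiv.ofBijective _ h else 1

lemma mkPerm_apply (n p b : ℕ) (hpb : p + b ≤ n) (i : Fin n) :
    mkPerm n p b i = tfun n p b i := by
  rw [mkPerm, dif_pos (tfun_bij n p b hpb)]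
  rfl

lemma mkPerm_avoids312 (n p b : ℕ) (hpb : p + b ≤ n) :
    ¬ ∃ i j k : Fin n, i < j ∧ j < k ∧
      mkPerm n p b j < mkPerm n p b k ∧ mkPerm n p b k < mkPerm n p b i := by
  rintro ⟨i, j, k, hij, hjk, h1, h2⟩
  rw [mkPerm_apply n p b hpb, mkPerm_apply n p b hpb] at h1 h2
  rw [Fin.lt_def] at hij hjk h1 h2
  rw [tfun_val, tfun_val] at h1 h2
  have hi := i.isLt; have hj := j.isLt; have hk := k.isLt
  split_ifs at h1 h2 <;> omega

lemma mkPerm_avoids123 (n p b : ℕ) (hpb : p + b ≤ n) :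
    ¬ ∃ i j k : Fin n, i < j ∧ j < k ∧
      mkPerm n p b i < mkPerm n p b j ∧ mkPerm n p b j < mkPerm n p b k := by
  rintro ⟨i, j, k, hij, hjk, h1, h2⟩
  rw [mkPerm_apply n p b hpb, mkPerm_apply n p b hpb] at h1 h2
  rw [Fin.lt_def] at hij hjk h1 h2
  rw [tfun_val, tfun_val] at h1 h2
  have hi := i.isLt; have hj := j.isLt; have hk := k.isLt
  split_ifs at h1 h2 <;> omega

theorem stmt_2' (n : ℕ) (hn : 1 ≤ n) :
    (Finset.univ.filter (fun σ : Equiv.Perm (Fin n) =>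
      (¬ ∃ i j k : Fin n, i < j ∧ j < k ∧ σ j < σ k ∧ σ k < σ i) ∧
      (¬ ∃ i j k : Fin n, i < j ∧ j < k ∧ σ i < σ j ∧ σ j < σ k))).card
      = 1 + n * (n - 1) / 2 := by
  classical
  set T : Finset (ℕ × ℕ) :=
    (Finset.Icc 1 (n-1)).biUnion (fun p => (Finset.Icc 1 (n-p)).image fun b => (p, b)) with hT
  have hmemT : ∀ q : ℕ × ℕ, q ∈ T ↔ 1 ≤ q.1 ∧ q.1 ≤ n - 1 ∧ 1 ≤ q.2 ∧ q.2 ≤ n - q.1 := by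
    intro q
    simp only [hT, Finset.mem_biUnion, Finset.mem_image, Finset.mem_Icc]
    constructor
    · rintro ⟨p, ⟨hp1, hp2⟩, b, ⟨hb1, hb2⟩, rfl⟩
      exact ⟨hp1, hp2, hb1, hb2⟩
    · rintro ⟨h1, h2, h3, h4⟩
      exact ⟨q.1, ⟨h1, h2⟩, q.2, ⟨h3, h4⟩, rfl⟩
  have h00 : (0, 0) ∉ T := by
    rw [hmemT]; omega
  have hcardT : T.card = n * (n - 1) / 2 := by
    rw [hT, Finset.card_biUnion]
    · have hstep : ∀ p ∈ Finset.Icc 1 (n-1),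
          ((Finset.Icc 1 (n-p)).image fun b => (p, b)).card = n - p := by
        intro p _
        rw [Finset.card_image_of_injective _ (fun b1 b2 h => by
          exact (Prod.mk.injEq _ _ _ _ ▸ h : _ ∧ _).2), Nat.card_Icc]
        omega
      rw [Finset.sum_congr rfl hstep]
      have := Finset.sum_nbij' (s := Finset.Icc 1 (n-1)) (t := Finset.Icc 1 (n-1))
        (f := fun p => n - p) (g := fun p => p)
        (i := fun p => n - p) (j := fun q => n - q)
        (fun p hp => by simp only [Finset.mem_Icc] at *; omega)
        (fun q hq => by simp only [Finset.mem_Icc] at *; omega)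
        (fun p hp => by simp only [Finset.mem_Icc] at hp; show n - (n - p) = p; omega)
        (fun q hq => by simp only [Finset.mem_Icc] at hq; show n - (n - q) = q; omega)
        (fun p hp => rfl)
      rw [this]
      have hr : Finset.range n = insert 0 (Finset.Icc 1 (n-1)) := by
        ext x
        simp only [Finset.mem_range, Finset.mem_insert, Finset.mem_Icc]
        omega
      have h0 : (0:ℕ) ∉ Finset.Icc 1 (n-1) := by rw [Finset.mem_Icc]; omega
      have := Finset.sum_range_id n
      rw [hr, Finset.sum_insert h0] at this
      simpa using this
    · intro x hx y hy hxy
      simp only [Function.onFun]; rw [Finset.disjoint_left]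
      rintro q hqx hqy
      rw [Finset.mem_image] at hqx hqy
      obtain ⟨b1, _, rfl⟩ := hqx
      obtain ⟨b2, _, he⟩ := hqy
      exact hxy (congrArg Prod.fst he).symm
  rw [show 1 + n * (n-1) / 2 = (insert ((0:ℕ),(0:ℕ)) T).card by
    rw [Finset.card_insert_of_notMem h00, hcardT]; omega]
  apply Finset.card_nbij' (i := fun σ => (Gv σ (n-1), n - 1 - Fv σ 0))
    (j := fun q => mkPerm n q.1 q.2)
  · -- forward membership
    intro σ hσ
    simp only [Finset.mem_coe, Finset.mem_filter] at hσ ⊢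
    obtain ⟨p, b, hpb, hgp, hfb, hz, hb1, _⟩ := classify σ hn hσ.2.1 hσ.2.2
    rw [hgp, hfb]
    rcases Nat.eq_zero_or_pos p with h0 | h1
    · rw [h0, hz h0]; exact Finset.mem_insert_self _ _
    · apply Finset.mem_insert_of_mem
      rw [hmemT]
      have := hb1 h1
      exact ⟨h1, by omega, this, by omega⟩
  · -- backward membership
    intro q hq
    have hpb : q.1 + q.2 ≤ n := by
      rcases Finset.mem_insert.mp hq with he | hm
      · rw [he]; omega
      · rw [hmemT] at hm; omega
    simp only [Finset.mem_coe, Finset.mem_filter]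
    exact ⟨Finset.mem_univ _, mkPerm_avoids312 n q.1 q.2 hpb, mkPerm_avoids123 n q.1 q.2 hpb⟩
  · -- left inverse
    intro σ hσ
    simp only [Finset.mem_coe, Finset.mem_filter] at hσ ⊢
    obtain ⟨p, b, hpb, hgp, hfb, hz, hb1, hform⟩ := classify σ hn hσ.2.1 hσ.2.2
    rw [hgp, hfb]
    exact Equiv.ext fun i => (mkPerm_apply n p b hpb i).trans (hform i).symm
  · -- right inverse
    intro q hq
    have hcond : (q.1 = 0 ∧ q.2 = 0) ∨ (1 ≤ q.1 ∧ q.1 ≤ n - 1 ∧ 1 ≤ q.2 ∧ q.2 ≤ n - q.1) := by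
      rcases Finset.mem_insert.mp hq with he | hm
      · left; rw [he]; exact ⟨rfl, rfl⟩
      · right; rwa [hmemT] at hm
    have hpb : q.1 + q.2 ≤ n := by rcases hcond with ⟨h1, h2⟩ | h <;> omega
    have hp_lt : q.1 < n := by rcases hcond with ⟨h1, h2⟩ | h <;> omega
    set σ := mkPerm n q.1 q.2 with hσ
    have happ : σ ⟨q.1, hp_lt⟩ = ⟨n-1, by omega⟩ := by
      rw [hσ, mkPerm_apply n q.1 q.2 hpb]
      apply Fin.ext
      rw [tfun_val]
      simp only
      rcases hcond with ⟨h1, h2⟩ | h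
      · rw [h1, h2]; simp
      · rw [if_neg (by omega), if_pos (by omega)]; omega
    have hGv : Gv σ (n-1) = q.1 := by
      rw [Gv, dif_pos (show n-1 < n by omega)]
      have : σ.symm ⟨n-1, by omega⟩ = ⟨q.1, hp_lt⟩ := by
        rw [Equiv.symm_apply_eq, happ]
      rw [this]
    have hFv : n - 1 - Fv σ 0 = q.2 := by
      rw [Fv, dif_pos (show 0 < n by omega)]
      have : (σ ⟨0, by omega⟩ : ℕ) = (tfun n q.1 q.2 ⟨0, by omega⟩ : ℕ) := by
        rw [hσ, mkPerm_apply n q.1 q.2 hpb]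
      rw [this, tfun_val]
      simp only
      rcases hcond with ⟨h1, h2⟩ | h
      · rw [h1, h2]; simp
      · rw [if_pos (by omega)]; omega
    show (Gv σ (n-1), n - 1 - Fv σ 0) = q; rw [hGv, hFv]

/-- `|S_n(312,123)| = 1 + n(n-1)/2` for `n ≥ 1`. -/
theorem stmt_2 (n : ℕ) (hn : 1 ≤ n) :
    (Finset.univ.filter (fun σ : Equiv.Perm (Fin n) => Avoids312 σ ∧ Avoids123 σ)).card
      = 1 + n * (n - 1) / 2 := by
  exact stmt_2' n hn
end

section
/- For every n ≥ 1, the sum over all permutations σ of {1,...,n} avoiding both 312 and 123 of L(σ) equals 2(n² - n + 1), where L(σ) is the length of the longest increasing subsequence of σ. Equivalently, the expected value of L over the uniform distribution on S_n(312,123) is 2(n²-n+1)/(n²-n+2). -/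
namespace Stmt4Aux

/-- The value function of the family of permutations avoiding 312 and 123. -/
def fm (n a c : ℕ) (i : ℕ) : ℕ :=
  if i < a then c - i
  else if i ≤ a + (n - 2 - c) then n - 1 - i + a
  else n - 1 - i

lemma fm_lt {n a c : ℕ} (h1 : 1 ≤ a) (h2 : a ≤ c + 1) (h3 : c + 2 ≤ n)
    {i : ℕ} (hi : i < n) : fm n a c i < n := by
  unfold fm; split_ifs <;> omega

lemma fm_inj {n a c : ℕ} (h1 : 1 ≤ a) (h2 : a ≤ c + 1) (h3 : c + 2 ≤ n)
    {i j : ℕ} (hi : i < n) (hj : j < n) (h : fm n a c i = fm n a c j) : i = j := by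
  unfold fm at h; split_ifs at h <;> omega

/-- The family member as a permutation (junk value `1` if constraints fail). -/
noncomputable def pf (n a c : ℕ) : Equiv.Perm (Fin n) :=
  if h : 1 ≤ a ∧ a ≤ c + 1 ∧ c + 2 ≤ n then
    Equiv.ofBijective (fun i => ⟨fm n a c i.val, fm_lt h.1 h.2.1 h.2.2 i.isLt⟩)
      (Finite.injective_iff_bijective.mp fun i j hij =>
        Fin.ext (fm_inj h.1 h.2.1 h.2.2 i.isLt j.isLt (congrArg Fin.val hij)))
  else 1

lemma pf_apply {n a c : ℕ} (h1 : 1 ≤ a) (h2 : a ≤ c + 1) (h3 : c + 2 ≤ n) (i : Fin n) :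
    (pf n a c i).val = fm n a c i.val := by
  rw [pf, dif_pos ⟨h1, h2, h3⟩]; rfl

end Stmt4Aux

namespace Stmt4Aux

lemma pf_avoids312 {n a c : ℕ} (h1 : 1 ≤ a) (h2 : a ≤ c + 1) (h3 : c + 2 ≤ n) :
    ¬ ∃ i j k : Fin n, i < j ∧ j < k ∧ pf n a c j < pf n a c k ∧ pf n a c k < pf n a c i := by
  rintro ⟨i, j, k, hij, hjk, hA, hB⟩
  rw [Fin.lt_def] at hij hjk hA hB
  rw [pf_apply h1 h2 h3, pf_apply h1 h2 h3] at hA hB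
  have hi := i.isLt; have hj := j.isLt; have hk := k.isLt
  unfold fm at hA hB; split_ifs at hA hB <;> omega

lemma pf_avoids123 {n a c : ℕ} (h1 : 1 ≤ a) (h2 : a ≤ c + 1) (h3 : c + 2 ≤ n) :
    ¬ ∃ i j k : Fin n, i < j ∧ j < k ∧ pf n a c i < pf n a c j ∧ pf n a c j < pf n a c k := by
  rintro ⟨i, j, k, hij, hjk, hA, hB⟩
  rw [Fin.lt_def] at hij hjk hA hB
  rw [pf_apply h1 h2 h3, pf_apply h1 h2 h3] at hA hB
  have hi := i.isLt; have hj := j.isLt; have hk := k.isLt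
  unfold fm at hA hB; split_ifs at hA hB <;> omega

lemma rev_avoids312 {n : ℕ} :
    ¬ ∃ i j k : Fin n, i < j ∧ j < k ∧ Fin.revPerm j < Fin.revPerm k ∧ Fin.revPerm k < Fin.revPerm i := by
  rintro ⟨i, j, k, hij, hjk, hA, hB⟩
  rw [Fin.lt_def] at hij hjk hA hB
  simp only [Fin.revPerm_apply, Fin.val_rev] at hA hB
  omega

lemma rev_avoids123 {n : ℕ} :
    ¬ ∃ i j k : Fin n, i < j ∧ j < k ∧ Fin.revPerm i < Fin.revPerm j ∧ Fin.revPerm j < Fin.revPerm k := by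
  rintro ⟨i, j, k, hij, hjk, hA, hB⟩
  rw [Fin.lt_def] at hij hjk hA hB
  simp only [Fin.revPerm_apply, Fin.val_rev] at hA hB
  omega




variable {n : ℕ} (σ : Equiv.Perm (Fin n))

lemma dec_low (h123 : ¬ ∃ i j k : Fin n, i < j ∧ j < k ∧ σ i < σ j ∧ σ j < σ k)
    {a : ℕ} (ha : a < n) (hmax : (σ ⟨a, ha⟩).val = n - 1) :
    ∀ i j : Fin n, i.val < j.val → j.val < a → (σ j).val < (σ i).val := by
  intro i j h1 h2
  by_contra hcon
  have hne : (σ i).val ≠ (σ j).val := fun e => by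
    have := σ.injective (Fin.ext e); rw [this] at h1; omega
  have hlt : (σ i).val < (σ j).val := by omega
  have hjm : (σ j).val < n - 1 := by
    have h := (σ j).isLt
    rcases Nat.lt_or_ge (σ j).val (n-1) with h' | h'
    · exact h'
    · exfalso
      have hv : (σ j).val = n - 1 := by omega
      have he : σ j = σ ⟨a, ha⟩ := Fin.ext (by rw [hv, hmax])
      have := σ.injective he
      rw [this] at h2; simp only [Fin.val_mk] at h2; omega
  exact h123 ⟨i, j, ⟨a, ha⟩,
    by simp only [Fin.lt_def, Fin.val_mk]; omega,
    by simp only [Fin.lt_def, Fin.val_mk]; omega,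
    by simp only [Fin.lt_def, Fin.val_mk]; omega,
    by simp only [Fin.lt_def, Fin.val_mk, hmax]; omega⟩

lemma dec_high (h312 : ¬ ∃ i j k : Fin n, i < j ∧ j < k ∧ σ j < σ k ∧ σ k < σ i)
    {a : ℕ} (ha : a < n) (hmax : (σ ⟨a, ha⟩).val = n - 1) :
    ∀ i j : Fin n, a ≤ i.val → i.val < j.val → (σ j).val < (σ i).val := by
  intro i j h1 h2
  have hne : (σ i).val ≠ (σ j).val := fun e => by
    have := σ.injective (Fin.ext e); rw [this] at h2; omega
  have hjm : (σ j).val ≤ n - 1 := by have := (σ j).isLt; omega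
  have hjne : (σ j).val ≠ n - 1 := by
    intro h
    have he : σ j = σ ⟨a, ha⟩ := Fin.ext (by rw [h, hmax])
    have := σ.injective he
    rw [this] at h2; simp only [Fin.val_mk] at h2; omega
  rcases Nat.eq_or_lt_of_le h1 with he | hlt
  · have hi : i = ⟨a, ha⟩ := Fin.ext he.symm
    rw [hi, hmax]; omega
  · by_contra hcon
    have hlt2 : (σ i).val < (σ j).val := by omega
    exact h312 ⟨⟨a, ha⟩, i, j,
      by simp only [Fin.lt_def, Fin.val_mk]; omega,
      by simp only [Fin.lt_def, Fin.val_mk]; omega,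
      by simp only [Fin.lt_def, Fin.val_mk]; omega,
      by simp only [Fin.lt_def, Fin.val_mk, hmax]; omega⟩

lemma dec_all_eq_rev (hanti : ∀ i j : Fin n, i.val < j.val → (σ j).val < (σ i).val) :
    σ = Fin.revPerm := by
  have key : ∀ k, ∀ hk : k < n, (σ ⟨k, hk⟩).val = n - 1 - k := by
    intro k
    induction k with
    | zero =>
      intro hk
      obtain ⟨p, hσp⟩ : ∃ p : Fin n, (σ p).val = n - 1 :=
        ⟨σ.symm ⟨n-1, by omega⟩, by rw [Equiv.apply_symm_apply]⟩
      rcases Nat.eq_zero_or_pos p.val with h0 | h0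
      · have hp0 : p = ⟨0, hk⟩ := Fin.ext h0
        rw [← hp0]; exact hσp
      · exfalso
        have := hanti ⟨0, hk⟩ p (by simp only [Fin.val_mk]; omega)
        have h2 := (σ ⟨0, hk⟩).isLt
        omega
    | succ k ih =>
      intro hk
      have hkn : k < n := by omega
      have hIH := ih hkn
      have hu : (σ ⟨k+1, hk⟩).val < (σ ⟨k, hkn⟩).val :=
        hanti _ _ (by simp only [Fin.val_mk]; omega)
      by_contra hne
      have hun : (σ ⟨k+1, hk⟩).val + 1 < n := by omega
      obtain ⟨p, hσp⟩ : ∃ p : Fin n, (σ p).val = (σ ⟨k+1, hk⟩).val + 1 :=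
        ⟨σ.symm ⟨_, hun⟩, by rw [Equiv.apply_symm_apply]⟩
      rcases Nat.lt_trichotomy p.val k with h' | h' | h'
      · have := hanti p ⟨k, hkn⟩ (by simp only [Fin.val_mk]; omega); omega
      · have hp : p = ⟨k, hkn⟩ := Fin.ext h'
        rw [hp] at hσp; omega
      · rcases Nat.eq_or_lt_of_le h' with h'' | h''
        · have hp : p = ⟨k+1, hk⟩ := Fin.ext h''.symm
          rw [hp] at hσp; omega
        · have := hanti ⟨k+1, hk⟩ p (by simp only [Fin.val_mk]; omega); omega
  apply Equiv.ext; intro i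
  apply Fin.ext
  have hkey := key i.val i.isLt
  simp only [Fin.eta] at hkey
  rw [hkey]
  simp only [Fin.revPerm_apply, Fin.val_rev]
  omega

lemma first_block (h312 : ¬ ∃ i j k : Fin n, i < j ∧ j < k ∧ σ j < σ k ∧ σ k < σ i)
    (h123 : ¬ ∃ i j k : Fin n, i < j ∧ j < k ∧ σ i < σ j ∧ σ j < σ k)
    {a : ℕ} (ha : a < n) (hmax : (σ ⟨a, ha⟩).val = n - 1) :
    ∀ k, (hk : k < a) → ∀ hk' : k < n,
      (σ ⟨k, hk'⟩).val = (σ ⟨0, by omega⟩).val - k := by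
  have hn0 : 0 < n := by omega
  have hdl := dec_low σ h123 ha hmax
  have hc : (σ ⟨0, hn0⟩).val ≤ n - 1 := by have := (σ ⟨0, hn0⟩).isLt; omega
  intro k
  induction k with
  | zero => intro hk hk'; rfl
  | succ k ih =>
    intro hk hk'
    have hkn : k < n := by omega
    have hIH := ih (by omega) hkn
    have hu : (σ ⟨k+1, hk'⟩).val < (σ ⟨k, hkn⟩).val :=
      hdl _ _ (by simp only [Fin.val_mk]; omega) (by simp only [Fin.val_mk]; omega)
    by_contra hne
    have hult : (σ ⟨k+1, hk'⟩).val + 1 < (σ ⟨0, hn0⟩).val - k := by omega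
    have hun : (σ ⟨k+1, hk'⟩).val + 1 < n := by omega
    obtain ⟨p, hσp⟩ : ∃ p : Fin n, (σ p).val = (σ ⟨k+1, hk'⟩).val + 1 :=
      ⟨σ.symm ⟨_, hun⟩, by rw [Equiv.apply_symm_apply]⟩
    rcases Nat.lt_trichotomy p.val k with h' | h' | h'
    · have := hdl p ⟨k, hkn⟩ (by simp only [Fin.val_mk]; omega)
        (by simp only [Fin.val_mk]; omega)
      omega
    · have hp : p = ⟨k, hkn⟩ := Fin.ext h'; rw [hp] at hσp; omega
    · rcases Nat.eq_or_lt_of_le h' with h'' | h''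
      · have hp : p = ⟨k+1, hk'⟩ := Fin.ext h''.symm
        rw [hp] at hσp; omega
      · rcases Nat.lt_trichotomy p.val a with q | q | q
        · have := hdl ⟨k+1, hk'⟩ p (by simp only [Fin.val_mk]; omega) q; omega
        · have hp : p = ⟨a, ha⟩ := Fin.ext q
          rw [hp, hmax] at hσp; omega
        · exact h312 ⟨⟨k, hkn⟩, ⟨k+1, hk'⟩, p,
            by simp only [Fin.lt_def, Fin.val_mk]; omega,
            by simp only [Fin.lt_def, Fin.val_mk]; omega,
            by simp only [Fin.lt_def, Fin.val_mk]; omega,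
            by simp only [Fin.lt_def, Fin.val_mk]; omega⟩





lemma second_block {a c : ℕ} (h1 : 1 ≤ a) (h2 : a ≤ c + 1) (h3 : c + 2 ≤ n)
    (hdh : ∀ i j : Fin n, a ≤ i.val → i.val < j.val → (σ j).val < (σ i).val)
    (hmax : ∀ ha : a < n, (σ ⟨a, ha⟩).val = n - 1)
    (hfirst : ∀ k, k < a → ∀ hk' : k < n, (σ ⟨k, hk'⟩).val = c - k) :
    ∀ k, a ≤ k → ∀ hk : k < n, (σ ⟨k, hk⟩).val = fm n a c k := by
  have han : a < n := by omega
  -- gap values lie in the first-block interval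
  have gap : ∀ k, a ≤ k → ∀ hk1 : k + 1 < n, ∀ v : ℕ,
      (σ ⟨k+1, hk1⟩).val < v → v < (σ ⟨k, by omega⟩).val → c + 1 - a ≤ v ∧ v ≤ c := by
    intro k hka hk1 v hv1 hv2
    have hvn : v < n := by have := (σ (⟨k, by omega⟩ : Fin n)).isLt; omega
    obtain ⟨p, hσp⟩ : ∃ p : Fin n, (σ p).val = v :=
      ⟨σ.symm ⟨v, hvn⟩, by rw [Equiv.apply_symm_apply]⟩
    rcases Nat.lt_or_ge p.val a with hpa | hpa
    · have := hfirst p.val hpa p.isLt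
      simp only [Fin.eta] at this
      omega
    · exfalso
      rcases Nat.lt_trichotomy p.val k with h' | h' | h'
      · have := hdh p ⟨k, by omega⟩ hpa (by simp only [Fin.val_mk]; omega); omega
      · have hp : p = ⟨k, by omega⟩ := Fin.ext h'; rw [hp] at hσp; omega
      · rcases Nat.eq_or_lt_of_le h' with h'' | h''
        · have hp : p = ⟨k+1, hk1⟩ := Fin.ext h''.symm
          rw [hp] at hσp; omega
        · have := hdh ⟨k+1, hk1⟩ p (by simp only [Fin.val_mk]; omega)
            (by simp only [Fin.val_mk]; omega)
          omega
  -- second-block values avoid the first-block interval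
  have notin : ∀ k, a ≤ k → ∀ hk : k < n,
      ¬ (c + 1 - a ≤ (σ ⟨k, hk⟩).val ∧ (σ ⟨k, hk⟩).val ≤ c) := by
    rintro k hka hk ⟨hl, hr⟩
    have hia : c - (σ ⟨k, hk⟩).val < a := by omega
    have hin : c - (σ ⟨k, hk⟩).val < n := by omega
    have he := hfirst (c - (σ ⟨k, hk⟩).val) hia hin
    have hval : (σ ⟨c - (σ ⟨k, hk⟩).val, hin⟩).val = (σ ⟨k, hk⟩).val := by omega
    have := σ.injective (Fin.ext hval)
    have : c - (σ ⟨k, hk⟩).val = k := congrArg Fin.val this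
    omega
  intro k hka
  induction k, hka using Nat.le_induction with
  | base =>
    intro hk
    have := hmax hk
    unfold fm; split_ifs <;> omega
  | succ k hka ih =>
    intro hk1
    have hkn : k < n := by omega
    have hIH := ih hkn
    have hu : (σ ⟨k+1, hk1⟩).val < (σ ⟨k, hkn⟩).val :=
      hdh _ _ (by simp only [Fin.val_mk]; omega) (by simp only [Fin.val_mk]; omega)
    have hni := notin (k+1) (by omega) hk1
    rcases Nat.eq_or_lt_of_le (Nat.succ_le_of_lt hu) with he | hl
    · unfold fm at hIH ⊢; split_ifs at hIH ⊢ <;> omega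
    · have k1 := gap k (by omega) hk1 ((σ ⟨k+1, hk1⟩).val + 1) (by omega) (by omega)
      have k2 := gap k (by omega) hk1 ((σ ⟨k, hkn⟩).val - 1) (by omega) (by omega)
      unfold fm at hIH ⊢; split_ifs at hIH ⊢ <;> omega


variable {n : ℕ} (σ : Equiv.Perm (Fin n))

theorem structure_thm (hn : 1 ≤ n)
    (h312 : ¬ ∃ i j k : Fin n, i < j ∧ j < k ∧ σ j < σ k ∧ σ k < σ i)
    (h123 : ¬ ∃ i j k : Fin n, i < j ∧ j < k ∧ σ i < σ j ∧ σ j < σ k) :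
    σ = Fin.revPerm ∨ ∃ a c : ℕ, 1 ≤ a ∧ a ≤ c + 1 ∧ c + 2 ≤ n ∧ σ = pf n a c := by
  have hn0 : 0 < n := hn
  obtain ⟨a, han, hmax⟩ : ∃ a : ℕ, ∃ h : a < n, (σ ⟨a, h⟩).val = n - 1 :=
    ⟨(σ.symm ⟨n-1, by omega⟩).val, (σ.symm ⟨n-1, by omega⟩).isLt, by
      simpa only [Fin.eta] using congrArg Fin.val (Equiv.apply_symm_apply σ ⟨n-1, by omega⟩)⟩
  have hdh := dec_high σ h312 han hmax
  rcases Nat.eq_zero_or_pos a with hA | hA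
  · left
    exact dec_all_eq_rev σ (fun i j h => hdh i j (by omega) h)
  · right
    obtain ⟨c, hc⟩ : ∃ c : ℕ, ∀ h0 : 0 < n, (σ ⟨0, h0⟩).val = c := ⟨(σ ⟨0, hn0⟩).val, fun _ => rfl⟩
    have hcn : c < n := by rw [← hc hn0]; exact (σ ⟨0, hn0⟩).isLt
    have hfirst : ∀ k, k < a → ∀ hk' : k < n, (σ ⟨k, hk'⟩).val = c - k := by
      intro k hk hk'
      rw [first_block σ h312 h123 han hmax k hk hk', hc]
    have h_ca : a ≤ c + 1 := by
      by_contra hcon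
      have e1 := hfirst c (by omega) (by omega)
      have e2 := hfirst (c + 1) (by omega) (by omega)
      have hval : (σ ⟨c, by omega⟩).val = (σ ⟨c + 1, by omega⟩).val := by omega
      have := congrArg Fin.val (σ.injective (Fin.ext hval))
      simp only [Fin.val_mk] at this
      omega
    have h_c2 : c + 2 ≤ n := by
      rcases Nat.lt_or_ge (c + 1) n with h | h
      · omega
      · exfalso
        have hv : (σ ⟨0, hn0⟩).val = (σ ⟨a, han⟩).val := by rw [hc hn0, hmax]; omega
        have := congrArg Fin.val (σ.injective (Fin.ext hv))
        simp only [Fin.val_mk] at this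
        omega
    refine ⟨a, c, hA, h_ca, h_c2, ?_⟩
    have hsec := second_block σ hA h_ca h_c2 hdh (fun _ => hmax) hfirst
    apply Equiv.ext; intro i
    apply Fin.ext
    rw [pf_apply hA h_ca h_c2]
    rcases Nat.lt_or_ge i.val a with h | h
    · have hv := hfirst i.val h i.isLt
      simp only [Fin.eta] at hv
      rw [hv]
      unfold fm
      rw [if_pos h]
    · have hv := hsec i.val h i.isLt
      simp only [Fin.eta] at hv
      rw [hv]

lemma lis_eq_one (hn : 1 ≤ n) (hanti : ∀ i j : Fin n, i < j → σ j < σ i) : lis σ = 1 := by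
  rw [lis, Nat.findGreatest_eq_iff]
  refine ⟨hn, fun _ => ⟨fun _ => ⟨0, hn⟩, ?_, ?_⟩, ?_⟩
  · intro i j hij
    rw [Fin.lt_def] at hij
    have := i.isLt; have := j.isLt; omega
  · intro i j hij
    rw [Fin.lt_def] at hij
    have := i.isLt; have := j.isLt; omega
  · rintro k hk1 hkn ⟨f, hf1, hf2⟩
    have h01 : (⟨0, by omega⟩ : Fin k) < ⟨1, by omega⟩ := by
      rw [Fin.lt_def]; simp
    exact absurd (hf2 _ _ h01) (not_lt.mpr (le_of_lt (hanti _ _ (hf1 _ _ h01))))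

lemma lis_eq_two (h123 : ¬ ∃ i j k : Fin n, i < j ∧ j < k ∧ σ i < σ j ∧ σ j < σ k)
    {i j : Fin n} (hij : i < j) (hσ : σ i < σ j) : lis σ = 2 := by
  have hn2 : 2 ≤ n := by
    have := j.isLt; rw [Fin.lt_def] at hij; omega
  rw [lis, Nat.findGreatest_eq_iff]
  refine ⟨hn2, fun _ => ⟨fun t => if t.val = 0 then i else j, ?_, ?_⟩, ?_⟩
  · intro s t hst
    rw [Fin.lt_def] at hst
    have hs := s.isLt; have ht := t.isLt
    have hs0 : s.val = 0 := by omega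
    have ht1 : t.val ≠ 0 := by omega
    simpa [hs0, ht1] using hij
  · intro s t hst
    rw [Fin.lt_def] at hst
    have hs := s.isLt; have ht := t.isLt
    have hs0 : s.val = 0 := by omega
    have ht1 : t.val ≠ 0 := by omega
    simpa [hs0, ht1] using hσ
  · rintro k hk1 hkn ⟨f, hf1, hf2⟩
    have h01 : (⟨0, by omega⟩ : Fin k) < ⟨1, by omega⟩ := by rw [Fin.lt_def]; simp
    have h12 : (⟨1, by omega⟩ : Fin k) < ⟨2, by omega⟩ := by rw [Fin.lt_def]; simp
    exact h123 ⟨f ⟨0, by omega⟩, f ⟨1, by omega⟩, f ⟨2, by omega⟩,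
      hf1 _ _ h01, hf1 _ _ h12, hf2 _ _ h01, hf2 _ _ h12⟩

lemma lis_rev (hn : 1 ≤ n) : lis (Fin.revPerm : Equiv.Perm (Fin n)) = 1 := by
  apply lis_eq_one _ hn
  intro i j h
  rw [Fin.lt_def] at h ⊢
  simp only [Fin.revPerm_apply, Fin.val_rev]
  omega

lemma lis_pf {a c : ℕ} (h1 : 1 ≤ a) (h2 : a ≤ c + 1) (h3 : c + 2 ≤ n) :
    lis (pf n a c) = 2 := by
  have hi : a - 1 < n := by omega
  have hj : a < n := by omega
  apply lis_eq_two (pf n a c) (pf_avoids123 h1 h2 h3) (i := ⟨a-1, hi⟩) (j := ⟨a, hj⟩)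
  · rw [Fin.lt_def]; simp only [Fin.val_mk]; omega
  · rw [Fin.lt_def, pf_apply h1 h2 h3, pf_apply h1 h2 h3]
    simp only [Fin.val_mk]
    unfold fm
    split_ifs <;> omega

end Stmt4Aux


/-- the expected longest increasing subsequence length over the uniform
distribution on `S_n(312,123)` equals `2(n²-n+1)/(n²-n+2)`. -/
theorem stmt_4 (n : ℕ) (hn : 1 ≤ n) :
    (∑ σ ∈ Finset.univ.filter (fun σ : Equiv.Perm (Fin n) => Avoids312 σ ∧ Avoids123 σ),
        (lis σ : ℚ)) /
      ((Finset.univ.filter (fun σ : Equiv.Perm (Fin n) => Avoids312 σ ∧ Avoids123 σ)).card : ℚ)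
      = 2 * ((n : ℚ) ^ 2 - n + 1) / ((n : ℚ) ^ 2 - n + 2) := by
  classical
  have hn0 : 0 < n := hn
  set S := Finset.univ.filter (fun σ : Equiv.Perm (Fin n) => Avoids312 σ ∧ Avoids123 σ) with hSdef
  set P : Finset ((_ : ℕ) × ℕ) := (Finset.range (n-1)).sigma fun c => Finset.Icc 1 (c+1) with hPdef
  have hPmem : ∀ p : (_ : ℕ) × ℕ, p ∈ P ↔ p.fst < n - 1 ∧ 1 ≤ p.snd ∧ p.snd ≤ p.fst + 1 := by
    intro p
    simp [hPdef, Finset.mem_sigma, Finset.mem_range, Finset.mem_Icc]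
  have hSeq : S = insert Fin.revPerm (P.image fun p => Stmt4Aux.pf n p.snd p.fst) := by
    ext σ
    simp only [hSdef, Finset.mem_filter, Finset.mem_univ, true_and, Finset.mem_insert,
      Finset.mem_image]
    constructor
    · rintro ⟨ha, hb⟩
      rcases Stmt4Aux.structure_thm σ hn ha hb with h | ⟨a, c, h1, h2, h3, h4⟩
      · left; exact h
      · right
        exact ⟨⟨c, a⟩, (hPmem ⟨c, a⟩).mpr ⟨show c < n - 1 by omega, h1, h2⟩, h4.symm⟩
    · rintro (rfl | ⟨p, hp, rfl⟩)
      · exact ⟨Stmt4Aux.rev_avoids312, Stmt4Aux.rev_avoids123⟩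
      · obtain ⟨q1, q2, q3⟩ := (hPmem p).mp hp
        exact ⟨Stmt4Aux.pf_avoids312 q2 q3 (by omega),
          Stmt4Aux.pf_avoids123 q2 q3 (by omega)⟩
  have hinj : Set.InjOn (fun p : (_ : ℕ) × ℕ => Stmt4Aux.pf n p.snd p.fst) ↑P := by
    intro p hp q hq heq
    obtain ⟨p1, p2, p3⟩ := (hPmem p).mp hp
    obtain ⟨q1, q2, q3⟩ := (hPmem q).mp hq
    simp only at heq
    have hc : p.fst = q.fst := by
      have := congrArg (fun e : Equiv.Perm (Fin n) => (e ⟨0, hn0⟩).val) heq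
      rw [Stmt4Aux.pf_apply p2 p3 (by omega), Stmt4Aux.pf_apply q2 q3 (by omega)] at this
      unfold Stmt4Aux.fm at this
      simp only [Fin.val_mk] at this
      split_ifs at this <;> omega
    have ha : p.snd = q.snd := by
      by_contra hne
      rcases Nat.lt_or_ge p.snd q.snd with h | h
      · have hlt : p.snd < n := by omega
        have := congrArg (fun e : Equiv.Perm (Fin n) => (e ⟨p.snd, hlt⟩).val) heq
        rw [Stmt4Aux.pf_apply p2 p3 (by omega), Stmt4Aux.pf_apply q2 q3 (by omega)] at this
        unfold Stmt4Aux.fm at this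
        simp only [Fin.val_mk] at this
        split_ifs at this <;> omega
      · have hlt : q.snd < n := by omega
        have := congrArg (fun e : Equiv.Perm (Fin n) => (e ⟨q.snd, hlt⟩).val) heq
        rw [Stmt4Aux.pf_apply p2 p3 (by omega), Stmt4Aux.pf_apply q2 q3 (by omega)] at this
        unfold Stmt4Aux.fm at this
        simp only [Fin.val_mk] at this
        split_ifs at this <;> omega
    obtain ⟨pc, pa⟩ := p
    obtain ⟨qc, qa⟩ := q
    simp only at hc ha
    rw [hc, ha]
  have hnotin : Fin.revPerm ∉ P.image fun p => Stmt4Aux.pf n p.snd p.fst := by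
    intro hmem
    obtain ⟨p, hp, heq⟩ := Finset.mem_image.mp hmem
    obtain ⟨q1, q2, q3⟩ := (hPmem p).mp hp
    have hlt : p.snd < n := by omega
    have := congrArg (fun e : Equiv.Perm (Fin n) => (e ⟨p.snd, hlt⟩).val) heq
    simp only [Fin.revPerm_apply, Fin.val_rev] at this
    rw [Stmt4Aux.pf_apply q2 q3 (by omega)] at this
    unfold Stmt4Aux.fm at this
    simp only [Fin.val_mk] at this
    split_ifs at this <;> omega
  have hcard : S.card = P.card + 1 := by
    rw [hSeq, Finset.card_insert_of_notMem hnotin, Finset.card_image_of_injOn hinj]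
  have hPcard : P.card * 2 = n * (n - 1) := by
    obtain ⟨m, rfl⟩ : ∃ m, n = m + 1 := ⟨n - 1, by omega⟩
    rw [hPdef, Finset.card_sigma]
    simp only [Nat.card_Icc]
    have h1 : ∑ c ∈ Finset.range (m + 1 - 1), (c + 1 + 1 - 1) = ∑ i ∈ Finset.range (m+1), i := by
      rw [Finset.sum_range_succ']
      simp
    rw [h1, Finset.sum_range_id_mul_two]
  have hsum : ∑ σ ∈ S, (lis σ : ℚ) = 1 + 2 * P.card := by
    rw [hSeq, Finset.sum_insert hnotin, Finset.sum_image (fun p hp q hq => hinj hp hq),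
      Stmt4Aux.lis_rev hn]
    have h2 : ∀ p ∈ P, ((lis (Stmt4Aux.pf n p.snd p.fst) : ℚ)) = 2 := by
      intro p hp
      obtain ⟨q1, q2, q3⟩ := (hPmem p).mp hp
      rw [Stmt4Aux.lis_pf q2 q3 (by omega)]
      norm_num
    rw [Finset.sum_congr rfl h2, Finset.sum_const, nsmul_eq_mul]
    push_cast
    ring
  rw [hsum, hcard]
  have hq : (P.card : ℚ) * 2 = (n : ℚ) ^ 2 - n := by
    have := hPcard
    have hcast : ((P.card * 2 : ℕ) : ℚ) = ((n * (n - 1) : ℕ) : ℚ) := by rw [hPcard]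
    push_cast [Nat.cast_sub hn] at hcast
    linarith [hcast]
  have hd1 : ((P.card + 1 : ℕ) : ℚ) ≠ 0 := by positivity
  have hd2 : ((n : ℚ) ^ 2 - n + 2) ≠ 0 := by
    have : (n : ℚ) ^ 2 - n + 2 = (P.card : ℚ) * 2 + 2 := by rw [hq]
    rw [this]
    positivity
  rw [div_eq_div_iff hd1 hd2]
  push_cast
  linear_combination hq
end

section
/- For every n ≥ 1, the sum over all permutations σ of {1,...,n} avoiding both 312 and 123 of L(σ)² equals (n²-n+2)·(2(2n²-2n+1))/(n²-n+2), i.e. equals 2(2n²-2n+1); equivalently the expectation of L² on S_n(312,123) is 2(2n²-2n+1)/(n²-n+2). -/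
namespace Stmt5Aux

def gfun (n a j i : ℕ) : ℕ :=
  if i < j then a - 1 - i else if i < j + (n - a) then n - 1 - (i - j) else n - 1 - i

def Valid (n a j : ℕ) : Prop := (a < n ∧ 1 ≤ j ∧ j ≤ a) ∨ (a = 0 ∧ j = 0)

lemma gfun_lt {n a j : ℕ} (h : Valid n a j) {i : ℕ} (hi : i < n) :
    gfun n a j i < n := by
  unfold gfun; rcases h with h | h <;> split_ifs <;> omega

def pfun (n a j : ℕ) (i : Fin n) : Fin n := ⟨gfun n a j i % n, Nat.mod_lt _ i.pos⟩

lemma pfun_coe {n a j : ℕ} (h : Valid n a j) (i : Fin n) :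
    ((pfun n a j i : Fin n) : ℕ) = gfun n a j i := by
  simp [pfun, Nat.mod_eq_of_lt (gfun_lt h i.isLt)]

lemma pfun_inj {n a j : ℕ} (h : Valid n a j) : Function.Injective (pfun n a j) := by
  intro x y hxy
  have hx := pfun_coe h x
  have hy := pfun_coe h y
  have hgv : gfun n a j x = gfun n a j y := by rw [← hx, ← hy, hxy]
  have hx' := x.isLt
  have hy' := y.isLt
  apply Fin.ext
  unfold gfun at hgv
  rcases h with h | h <;> split_ifs at hgv <;> omega

open Classical in
noncomputable def Pmap (n : ℕ) (p : ℕ × ℕ) : Equiv.Perm (Fin n) :=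
  if h : Valid n p.1 p.2 then
    Equiv.ofBijective _ ((Finite.injective_iff_bijective).mp (pfun_inj h)) else 1

lemma Pmap_coe {n a j : ℕ} (h : Valid n a j) (i : Fin n) :
    ((Pmap n (a, j) i : Fin n) : ℕ) = gfun n a j i := by
  rw [Pmap, dif_pos h]
  simp [Equiv.ofBijective_apply, pfun_coe h]

lemma Pmap_avoids {n a j : ℕ} (h : Valid n a j) :
    Avoids312 (Pmap n (a, j)) ∧ Avoids123 (Pmap n (a, j)) := by
  constructor
  · rintro ⟨x, y, z, h1, h2, h3, h4⟩
    have hx := x.isLt; have hy := y.isLt; have hz := z.isLt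
    rw [Fin.lt_def] at h1 h2 h3 h4
    rw [Pmap_coe h] at h3 h4
    rw [Pmap_coe h] at h3 h4
    unfold gfun at h3 h4
    rcases h with h | h <;> split_ifs at h3 h4 <;> omega
  · rintro ⟨x, y, z, h1, h2, h3, h4⟩
    have hx := x.isLt; have hy := y.isLt; have hz := z.isLt
    rw [Fin.lt_def] at h1 h2 h3 h4
    rw [Pmap_coe h] at h3 h4
    rw [Pmap_coe h] at h3 h4
    unfold gfun at h3 h4
    rcases h with h | h <;> split_ifs at h3 h4 <;> omega
lemma lis_le_two {n : ℕ} {σ : Equiv.Perm (Fin n)} (hσ : Avoids123 σ) : lis σ ≤ 2 := by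
  by_contra hgt
  push_neg at hgt
  have hQ := Nat.findGreatest_of_ne_zero (P := fun k => ∃ f : Fin k → Fin n,
      (∀ i j : Fin k, i < j → f i < f j) ∧
        (∀ i j : Fin k, i < j → σ (f i) < σ (f j))) (n := n) (m := lis σ) rfl (by omega)
  obtain ⟨f, hf1, hf2⟩ := hQ
  have h01 : (⟨0, by omega⟩ : Fin (lis σ)) < ⟨1, by omega⟩ := by
    exact Fin.mk_lt_mk.mpr (by omega)
  have h12 : (⟨1, by omega⟩ : Fin (lis σ)) < ⟨2, by omega⟩ := by
    exact Fin.mk_lt_mk.mpr (by omega)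
  exact hσ ⟨f ⟨0, by omega⟩, f ⟨1, by omega⟩, f ⟨2, by omega⟩,
    hf1 _ _ h01, hf1 _ _ h12, hf2 _ _ h01, hf2 _ _ h12⟩

lemma lis_eq_two {n : ℕ} {σ : Equiv.Perm (Fin n)} (hσ : Avoids123 σ)
    {p q : Fin n} (hpq : p < q) (hv : σ p < σ q) : lis σ = 2 := by
  have hn : 2 ≤ n := by
    have := q.isLt
    have := Fin.lt_def.mp hpq
    omega
  have h2 : 2 ≤ lis σ := by
    apply Nat.le_findGreatest hn
    refine ⟨fun t => if (t : ℕ) = 0 then p else q, ?_, ?_⟩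
    · intro i j hij
      have hi := i.isLt; have hj := j.isLt
      have hij' := Fin.lt_def.mp hij
      have : (i : ℕ) = 0 ∧ (j : ℕ) = 1 := by omega
      simp [this.1, this.2, hpq]
    · intro i j hij
      have hi := i.isLt; have hj := j.isLt
      have hij' := Fin.lt_def.mp hij
      have : (i : ℕ) = 0 ∧ (j : ℕ) = 1 := by omega
      simp [this.1, this.2, hv]
  have := lis_le_two hσ
  omega

lemma lis_eq_one {n : ℕ} (hn : 0 < n) {σ : Equiv.Perm (Fin n)}
    (hdec : ∀ p q : Fin n, p < q → σ q < σ p) : lis σ = 1 := by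
  have h1 : 1 ≤ lis σ := by
    apply Nat.le_findGreatest hn
    refine ⟨fun _ => ⟨0, hn⟩, ?_, ?_⟩ <;>
      · intro i j hij
        have hi := i.isLt; have hj := j.isLt
        have := Fin.lt_def.mp hij
        omega
  by_contra hne
  have h2 : 2 ≤ lis σ := by omega
  have hQ := Nat.findGreatest_of_ne_zero (P := fun k => ∃ f : Fin k → Fin n,
      (∀ i j : Fin k, i < j → f i < f j) ∧
        (∀ i j : Fin k, i < j → σ (f i) < σ (f j))) (n := n) (m := lis σ) rfl (by omega)
  obtain ⟨f, hf1, hf2⟩ := hQ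
  have h01 : (⟨0, by omega⟩ : Fin (lis σ)) < ⟨1, by omega⟩ := by
    exact Fin.mk_lt_mk.mpr (by omega)
  exact absurd (hf2 _ _ h01) (not_lt.mpr (le_of_lt (hdec _ _ (hf1 _ _ h01))))
section Structure

variable {n : ℕ} {σ : Equiv.Perm (Fin n)}

lemma val_lt_of_ne_max {m : ℕ} (hmn : m < n)
    (hmax : σ ⟨m, hmn⟩ = ⟨n - 1, by omega⟩) (i : Fin n) (hi : (i : ℕ) ≠ m) :
    (σ i : ℕ) < n - 1 := by
  have h1 := (σ i).isLt
  by_contra hc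
  push_neg at hc
  have heq : σ i = σ ⟨m, hmn⟩ := by
    rw [hmax]
    exact Fin.ext (show (σ i : ℕ) = n - 1 by omega)
  have := σ.injective heq
  exact hi (show (i : ℕ) = m from congrArg Fin.val this)

lemma ne_vals {p q : ℕ} (hp : p < n) (hq : q < n) (hne : p ≠ q) :
    (σ ⟨p, hp⟩ : ℕ) ≠ (σ ⟨q, hq⟩ : ℕ) := by
  intro he
  have h2 := σ.injective (Fin.val_injective he)
  rw [Fin.mk.injEq] at h2
  exact hne h2

lemma prefix_dec (h123 : Avoids123 σ) {m : ℕ} (hmn : m < n)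
    (hmax : σ ⟨m, hmn⟩ = ⟨n - 1, by omega⟩) {p q : ℕ} (hpq : p < q) (hq : q < m)
    (hp' : p < n) (hq' : q < n) :
    (σ ⟨q, hq'⟩ : ℕ) < (σ ⟨p, hp'⟩ : ℕ) := by
  by_contra hc
  push_neg at hc
  have hne := ne_vals (σ := σ) hp' hq' (by omega)
  have hv := val_lt_of_ne_max hmn hmax ⟨q, hq'⟩ (show q ≠ m by omega)
  refine h123 ⟨⟨p, hp'⟩, ⟨q, hq'⟩, ⟨m, hmn⟩,
    Fin.mk_lt_mk.mpr hpq, Fin.mk_lt_mk.mpr hq, Fin.lt_def.mpr (by omega), ?_⟩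
  rw [Fin.lt_def, hmax]
  exact hv

lemma suffix_dec (h312 : Avoids312 σ) {m : ℕ} (hmn : m < n)
    (hmax : σ ⟨m, hmn⟩ = ⟨n - 1, by omega⟩) {p q : ℕ} (hmp : m ≤ p) (hpq : p < q)
    (hp' : p < n) (hq' : q < n) :
    (σ ⟨q, hq'⟩ : ℕ) < (σ ⟨p, hp'⟩ : ℕ) := by
  have hvq := val_lt_of_ne_max hmn hmax ⟨q, hq'⟩ (show q ≠ m by omega)
  rcases eq_or_lt_of_le hmp with he | hlt
  · have : (⟨p, hp'⟩ : Fin n) = ⟨m, hmn⟩ := Fin.ext (show p = m from he.symm)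
    rw [this, hmax]
    exact hvq
  · by_contra hc
    push_neg at hc
    have hne := ne_vals (σ := σ) hp' hq' (by omega)
    refine h312 ⟨⟨m, hmn⟩, ⟨p, hp'⟩, ⟨q, hq'⟩,
      Fin.mk_lt_mk.mpr hlt, Fin.mk_lt_mk.mpr hpq, Fin.lt_def.mpr (by omega), ?_⟩
    rw [Fin.lt_def, hmax]
    exact hvq

lemma prefix_vals (h312 : Avoids312 σ) (h123 : Avoids123 σ) {m : ℕ} (hmn : m < n)
    (hmax : σ ⟨m, hmn⟩ = ⟨n - 1, by omega⟩) :
    ∀ p (hp : p < m) (hp' : p < n) (h0 : 0 < n),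
      (σ ⟨p, hp'⟩ : ℕ) + p = (σ ⟨0, h0⟩ : ℕ) := by
  intro p
  induction p with
  | zero => intro _ _ _; rfl
  | succ p ih =>
    intro hp hp' h0
    have hpn : p < n := by omega
    have ihv := ih (by omega) hpn h0
    have hdec : (σ ⟨p + 1, hp'⟩ : ℕ) < (σ ⟨p, hpn⟩ : ℕ) :=
      prefix_dec h123 hmn hmax (by omega) hp hpn hp'
    by_contra hne
    have hgap : (σ ⟨p + 1, hp'⟩ : ℕ) + 1 < (σ ⟨p, hpn⟩ : ℕ) := by omega
    have hpm : (σ ⟨p, hpn⟩ : ℕ) < n - 1 :=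
      val_lt_of_ne_max hmn hmax ⟨p, hpn⟩ (show p ≠ m by omega)
    set v : Fin n := ⟨(σ ⟨p, hpn⟩ : ℕ) - 1, by omega⟩ with hv
    have hσq : σ (σ.symm v) = v := Equiv.apply_symm_apply σ v
    set qv : ℕ := (σ.symm v : ℕ) with hqv
    have hqn : qv < n := (σ.symm v).isLt
    have hqe : σ ⟨qv, hqn⟩ = v := by
      have : (⟨qv, hqn⟩ : Fin n) = σ.symm v := Fin.ext rfl
      rw [this, hσq]
    have hqval : (σ ⟨qv, hqn⟩ : ℕ) = (σ ⟨p, hpn⟩ : ℕ) - 1 := by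
      rw [hqe]
    have hqm : m < qv := by
      rcases Nat.lt_trichotomy qv m with h | h | h
      · exfalso
        rcases Nat.lt_trichotomy qv p with h2 | h2 | h2
        · have := prefix_dec h123 hmn hmax h2 (by omega) hqn hpn
          omega
        · have : (⟨qv, hqn⟩ : Fin n) = ⟨p, hpn⟩ := Fin.ext h2
          rw [this] at hqval
          omega
        · have hle : (σ ⟨qv, hqn⟩ : ℕ) ≤ (σ ⟨p + 1, hp'⟩ : ℕ) := by
            rcases eq_or_lt_of_le (show p + 1 ≤ qv by omega) with he | hlt2
            · have : (⟨qv, hqn⟩ : Fin n) = ⟨p + 1, hp'⟩ := Fin.ext he.symm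
              rw [this]
            · exact le_of_lt (prefix_dec h123 hmn hmax hlt2 h hp' hqn)
          omega
      · have : (⟨qv, hqn⟩ : Fin n) = ⟨m, hmn⟩ := Fin.ext h
        rw [this, hmax] at hqval
        have : ((⟨n - 1, by omega⟩ : Fin n) : ℕ) = n - 1 := rfl
        omega
      · exact h
    refine h312 ⟨⟨p, hpn⟩, ⟨p + 1, hp'⟩, ⟨qv, hqn⟩,
      Fin.mk_lt_mk.mpr (by omega), Fin.mk_lt_mk.mpr (by omega),
      Fin.lt_def.mpr (by omega), Fin.lt_def.mpr (by omega)⟩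

end Structure
lemma symm_ge_iff {n : ℕ} (σ : Equiv.Perm (Fin n)) {m : ℕ} (hmn : m < n) (x : Fin n) :
    (∃ t : Fin (n - m), σ ⟨m + (t : ℕ), by omega⟩ = x) ↔ m ≤ (σ.symm x : ℕ) := by
  constructor
  · rintro ⟨t, ht⟩
    have : σ.symm x = ⟨m + (t : ℕ), by omega⟩ := by
      rw [← ht, Equiv.symm_apply_apply]
    rw [this]
    exact Nat.le_add_right m t
  · intro hle
    have hq := (σ.symm x).isLt
    refine ⟨⟨(σ.symm x : ℕ) - m, by omega⟩, ?_⟩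
    have harg : (⟨m + ((⟨(σ.symm x : ℕ) - m, by omega⟩ : Fin (n - m)) : ℕ), by omega⟩ :
        Fin n) = σ.symm x := Fin.ext (by show m + ((σ.symm x : ℕ) - m) = _; omega)
    rw [harg, Equiv.apply_symm_apply]

lemma unique_perm {n : ℕ} {σ τ : Equiv.Perm (Fin n)}
    (hσ312 : Avoids312 σ) (hσ123 : Avoids123 σ)
    (hτ312 : Avoids312 τ) (hτ123 : Avoids123 τ)
    {m : ℕ} (hmn : m < n)
    (hσm : σ ⟨m, hmn⟩ = ⟨n - 1, by omega⟩)
    (hτm : τ ⟨m, hmn⟩ = ⟨n - 1, by omega⟩)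
    (h0 : m ≠ 0 → σ ⟨0, by omega⟩ = τ ⟨0, by omega⟩) : σ = τ := by
  have hn : 0 < n := by omega
  have hpre : ∀ p (hp' : p < n), p < m → σ ⟨p, hp'⟩ = τ ⟨p, hp'⟩ := by
    intro p hp' hp
    have h0' := congrArg Fin.val (h0 (by omega))
    have h1 := prefix_vals hσ312 hσ123 hmn hσm p hp hp' hn
    have h2 := prefix_vals hτ312 hτ123 hmn hτm p hp hp' hn
    exact Fin.ext (by omega)
  have hsymm : ∀ x : Fin n, m ≤ (σ.symm x : ℕ) ↔ m ≤ (τ.symm x : ℕ) := by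
    have key : ∀ (ρ π : Equiv.Perm (Fin n)),
        (∀ p (hp' : p < n), p < m → ρ ⟨p, hp'⟩ = π ⟨p, hp'⟩) →
        ∀ x : Fin n, (π.symm x : ℕ) < m → (ρ.symm x : ℕ) < m := by
      intro ρ π hagree x hx
      have hval : ρ ⟨(π.symm x : ℕ), (π.symm x).isLt⟩ = x := by
        rw [hagree _ _ hx]
        have : (⟨(π.symm x : ℕ), (π.symm x).isLt⟩ : Fin n) = π.symm x := Fin.ext rfl
        rw [this, Equiv.apply_symm_apply]
      have h2 : ρ.symm x = ⟨(π.symm x : ℕ), (π.symm x).isLt⟩ :=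
        (Equiv.symm_apply_eq ρ).mpr hval.symm
      rw [h2]
      exact hx
    intro x
    constructor
    · intro h
      by_contra hc
      push_neg at hc
      exact absurd (key σ τ hpre x hc) (by omega)
    · intro h
      by_contra hc
      push_neg at hc
      exact absurd (key τ σ (fun p hp' hp => (hpre p hp' hp).symm) x hc) (by omega)
  have hsuf : ∀ p (hp' : p < n), m ≤ p → σ ⟨p, hp'⟩ = τ ⟨p, hp'⟩ := by
    have hfanti : StrictAnti (fun t : Fin (n - m) => σ ⟨m + (t : ℕ), by omega⟩) := by
      intro t t' ht
      exact Fin.lt_def.mpr (suffix_dec hσ312 hmn hσm (Nat.le_add_right m t)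
        (Nat.add_lt_add_left (Fin.lt_def.mp ht) m) (by omega) (by omega))
    have hganti : StrictAnti (fun t : Fin (n - m) => τ ⟨m + (t : ℕ), by omega⟩) := by
      intro t t' ht
      exact Fin.lt_def.mpr (suffix_dec hτ312 hmn hτm (Nat.le_add_right m t)
        (Nat.add_lt_add_left (Fin.lt_def.mp ht) m) (by omega) (by omega))
    have hrange : Set.range (fun t : Fin (n - m) => σ ⟨m + (t : ℕ), by omega⟩) =
        Set.range (fun t : Fin (n - m) => τ ⟨m + (t : ℕ), by omega⟩) := by
      ext x
      simp only [Set.mem_range]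
      rw [show (∃ t : Fin (n - m), σ ⟨m + (t : ℕ), by omega⟩ = x) ↔ m ≤ (σ.symm x : ℕ)
          from symm_ge_iff σ hmn x,
        show (∃ t : Fin (n - m), τ ⟨m + (t : ℕ), by omega⟩ = x) ↔ m ≤ (τ.symm x : ℕ)
          from symm_ge_iff τ hmn x]
      exact hsymm x
    have hfg := (StrictAnti.range_inj hfanti hganti).mp hrange
    intro p hp' hp
    have e1 : (⟨p, hp'⟩ : Fin n) =
        ⟨m + ((⟨p - m, by omega⟩ : Fin (n - m)) : ℕ), by omega⟩ :=
      Fin.ext (by show p = m + (p - m); omega)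
    rw [e1]
    exact congrFun hfg ⟨p - m, by omega⟩
  apply Equiv.ext
  intro i
  have hieta : i = ⟨(i : ℕ), i.isLt⟩ := Fin.ext rfl
  rcases Nat.lt_or_ge (i : ℕ) m with hi | hi
  · rw [hieta]; exact hpre _ _ hi
  · rw [hieta]; exact hsuf _ _ hi
lemma Pmap_max {n a j : ℕ} (h : Valid n a j) (hj : j < n) :
    Pmap n (a, j) ⟨j, hj⟩ = ⟨n - 1, by omega⟩ := by
  apply Fin.ext
  rw [Pmap_coe h]
  show gfun n a j j = n - 1
  unfold gfun
  rcases h with h | h <;> split_ifs <;> omega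

lemma Pmap_zero {n a j : ℕ} (h : Valid n a j) (hn : 0 < n) :
    ((Pmap n (a, j)) ⟨0, hn⟩ : ℕ) = if j = 0 then n - 1 else a - 1 := by
  rw [Pmap_coe h]
  show gfun n a j 0 = _
  unfold gfun
  rcases h with h | h <;> split_ifs <;> omega

lemma lis_Pmap_zero {n : ℕ} (hn : 0 < n) : lis (Pmap n (0, 0)) = 1 := by
  have hv : Valid n 0 0 := Or.inr ⟨rfl, rfl⟩
  apply lis_eq_one hn
  intro p q hpq
  rw [Fin.lt_def]
  rw [Pmap_coe hv, Pmap_coe hv]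
  show gfun n 0 0 (q : ℕ) < gfun n 0 0 (p : ℕ)
  have hp := p.isLt; have hq := q.isLt
  have hpq' := Fin.lt_def.mp hpq
  unfold gfun
  split_ifs <;> omega

lemma lis_Pmap_pos {n a j : ℕ} (h1 : a < n) (h2 : 1 ≤ j) (h3 : j ≤ a) :
    lis (Pmap n (a, j)) = 2 := by
  have hv : Valid n a j := Or.inl ⟨h1, h2, h3⟩
  apply lis_eq_two (Pmap_avoids hv).2 (p := ⟨j - 1, by omega⟩) (q := ⟨j, by omega⟩)
    (Fin.mk_lt_mk.mpr (by omega))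
  rw [Fin.lt_def, Pmap_coe hv, Pmap_coe hv]
  show gfun n a j (j - 1) < gfun n a j j
  unfold gfun
  split_ifs <;> omega

def Tset (n : ℕ) : Finset (ℕ × ℕ) :=
  insert (0, 0) ((Finset.range n).biUnion fun a => (Finset.Icc 1 a).image fun j => (a, j))

lemma mem_Tset {n : ℕ} (p : ℕ × ℕ) : p ∈ Tset n ↔ Valid n p.1 p.2 := by
  obtain ⟨a, j⟩ := p
  simp only [Tset, Finset.mem_insert, Finset.mem_biUnion, Finset.mem_image, Finset.mem_Icc,
    Finset.mem_range, Prod.mk.injEq, Valid]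
  constructor
  · rintro (⟨rfl, rfl⟩ | ⟨a', ha', j', ⟨hj1, hj2⟩, rfl, rfl⟩)
    · right; exact ⟨rfl, rfl⟩
    · left; omega
  · rintro (⟨h1, h2, h3⟩ | ⟨rfl, rfl⟩)
    · right; exact ⟨a, h1, j, ⟨h2, h3⟩, rfl, rfl⟩
    · left; exact ⟨rfl, rfl⟩

lemma notmem_B {n : ℕ} :
    (0, 0) ∉ (Finset.range n).biUnion (fun a => (Finset.Icc 1 a).image fun j => (a, j)) := by
  simp only [Finset.mem_biUnion, Finset.mem_image, Finset.mem_Icc, Finset.mem_range,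
    Prod.mk.injEq, not_exists]
  rintro a ⟨ha, j, ⟨hj1, hj2⟩, rfl, hj0⟩
  omega

lemma card_B {n : ℕ} :
    ((Finset.range n).biUnion (fun a => (Finset.Icc 1 a).image fun j => (a, j))).card * 2
      = n * (n - 1) := by
  rw [Finset.card_biUnion]
  · have : ∀ a ∈ Finset.range n, ((Finset.Icc 1 a).image fun j => (a, j)).card = a := by
      intro a _
      rw [Finset.card_image_of_injective _ (fun x y hxy => (Prod.mk.injEq _ _ _ _).mp hxy |>.2),
        Nat.card_Icc]
      omega
    rw [Finset.sum_congr rfl this]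
    exact Finset.sum_range_id_mul_two n
  · intro x _ y _ hxy
    simp only [Finset.disjoint_left, Finset.mem_image, Finset.mem_Icc]
    rintro p ⟨j, hj, rfl⟩ ⟨j', hj', he⟩
    exact hxy ((Prod.mk.injEq _ _ _ _).mp he.symm).1


def topF (n : ℕ) (hn : 0 < n) : Fin n := ⟨n - 1, by omega⟩

def GmF (n : ℕ) (hn : 0 < n) (σ : Equiv.Perm (Fin n)) : ℕ × ℕ :=
  ((if (σ.symm (topF n hn) : ℕ) = 0 then 0 else (σ ⟨0, hn⟩ : ℕ) + 1),
    (σ.symm (topF n hn) : ℕ))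

lemma maxF {n : ℕ} (hn : 0 < n) (σ : Equiv.Perm (Fin n)) :
    σ ⟨(σ.symm (topF n hn) : ℕ), (σ.symm (topF n hn)).isLt⟩ = ⟨n - 1, by omega⟩ := by
  have h1 : (⟨(σ.symm (topF n hn) : ℕ), (σ.symm (topF n hn)).isLt⟩ : Fin n) =
      σ.symm (topF n hn) := Fin.ext rfl
  rw [h1, Equiv.apply_symm_apply]
  rfl

lemma hGP_lemma {n : ℕ} (hn : 0 < n) {a j : ℕ} (hv : Valid n a j) :
    GmF n hn (Pmap n (a, j)) = (a, j) := by
  have hj : j < n := by rcases id hv with h | h <;> omega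
  have hsymm : ((Pmap n (a, j)).symm (topF n hn) : ℕ) = j := by
    have h1 : (Pmap n (a, j)).symm (topF n hn) = ⟨j, hj⟩ :=
      (Equiv.symm_apply_eq _).mpr (by rw [Pmap_max hv hj]; rfl)
    rw [h1]
  unfold GmF
  rw [hsymm]
  rcases id hv with h | h
  · rw [if_neg (by omega), Pmap_zero hv hn, if_neg (by omega), Prod.mk.injEq]
    exact ⟨by omega, rfl⟩
  · rw [if_pos h.2, Prod.mk.injEq]
    exact ⟨h.1.symm, rfl⟩

lemma GmF_cases {n : ℕ} (hn : 0 < n) {σ : Equiv.Perm (Fin n)}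
    (h312 : Avoids312 σ) (h123 : Avoids123 σ) :
    ∃ (A J : ℕ) (hv : Valid n A J), GmF n hn σ = (A, J) ∧
      J = (σ.symm (topF n hn) : ℕ) ∧
      (J ≠ 0 → A = (σ ⟨0, hn⟩ : ℕ) + 1) := by
  set m := (σ.symm (topF n hn) : ℕ) with hm
  have hmn : m < n := (σ.symm (topF n hn)).isLt
  have hmax : σ ⟨m, hmn⟩ = ⟨n - 1, by omega⟩ := maxF hn σ
  by_cases hm0 : m = 0
  · refine ⟨0, 0, Or.inr ⟨rfl, rfl⟩, ?_, by omega, fun h => absurd rfl h⟩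
    unfold GmF
    rw [← hm, hm0, if_pos rfl]
  · refine ⟨(σ ⟨0, hn⟩ : ℕ) + 1, m, Or.inl ⟨?_, by omega, ?_⟩, ?_, rfl, fun _ => rfl⟩
    · have := val_lt_of_ne_max hmn hmax ⟨0, hn⟩ (show (0 : ℕ) ≠ m by omega)
      omega
    · have := prefix_vals h312 h123 hmn hmax (m - 1) (by omega) (by omega) hn
      omega
    · unfold GmF
      rw [← hm, if_neg hm0]

lemma hPG_lemma {n : ℕ} (hn : 0 < n) {σ : Equiv.Perm (Fin n)}
    (h312 : Avoids312 σ) (h123 : Avoids123 σ) :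
    Pmap n (GmF n hn σ) = σ := by
  obtain ⟨A, J, hv, hAJ, hJ, hA⟩ := GmF_cases hn h312 h123
  have hmn : J < n := by rw [hJ]; exact (σ.symm (topF n hn)).isLt
  have hmax : σ ⟨J, hmn⟩ = ⟨n - 1, by omega⟩ := by
    subst hJ; exact maxF hn σ
  rw [hAJ]
  refine unique_perm (Pmap_avoids hv).1 (Pmap_avoids hv).2 h312 h123 hmn
    (Pmap_max hv hmn) hmax ?_
  intro hJ0
  apply Fin.ext
  rw [Pmap_zero hv hn, if_neg hJ0]
  have := hA hJ0
  omega

lemma final_arith (n : ℕ) (hn : 1 ≤ n) (Bc : ℚ) (hBc : Bc * 2 = (n : ℚ) * ((n : ℚ) - 1))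
    (hB0 : 0 ≤ Bc) :
    (1 + Bc * 4) / (Bc + 1) = 2 * (2 * (n : ℚ) ^ 2 - 2 * n + 1) / ((n : ℚ) ^ 2 - n + 2) := by
  have hn1 : (1 : ℚ) ≤ (n : ℚ) := by exact_mod_cast hn
  have h1 : Bc + 1 ≠ 0 := by positivity
  have h2 : (n : ℚ) ^ 2 - n + 2 ≠ 0 := by nlinarith
  rw [div_eq_div_iff h1 h2]
  linear_combination 3 * hBc

end Stmt5Aux

open Stmt5Aux

/-- the expectation of `L²` on `S_n(312,123)` equals `2(2n²-2n+1)/(n²-n+2)`. -/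
theorem stmt_5 (n : ℕ) (hn : 1 ≤ n) :
    (∑ σ ∈ Finset.univ.filter (fun σ : Equiv.Perm (Fin n) => Avoids312 σ ∧ Avoids123 σ),
        (lis σ : ℚ) ^ 2) /
      ((Finset.univ.filter (fun σ : Equiv.Perm (Fin n) => Avoids312 σ ∧ Avoids123 σ)).card : ℚ)
      = 2 * (2 * (n : ℚ) ^ 2 - 2 * n + 1) / ((n : ℚ) ^ 2 - n + 2) := by
  classical
  have hn0 : 0 < n := hn
  set F := Finset.univ.filter (fun σ : Equiv.Perm (Fin n) => Avoids312 σ ∧ Avoids123 σ) with hF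
  have hmemF : ∀ σ : Equiv.Perm (Fin n), σ ∈ F ↔ Avoids312 σ ∧ Avoids123 σ := by
    intro σ; rw [hF, Finset.mem_filter]; simp
  have hGT : ∀ σ ∈ F, GmF n hn0 σ ∈ Tset n := by
    intro σ hσ
    obtain ⟨h312, h123⟩ := (hmemF σ).mp hσ
    obtain ⟨A, J, hv, hAJ, -, -⟩ := GmF_cases hn0 h312 h123
    rw [hAJ, mem_Tset]
    exact hv
  have hPF : ∀ p ∈ Tset n, Pmap n p ∈ F := by
    intro p hp
    obtain ⟨a, j⟩ := p
    have hv := (mem_Tset _).mp hp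
    exact (hmemF _).mpr (Pmap_avoids hv)
  have hPG : ∀ σ ∈ F, Pmap n (GmF n hn0 σ) = σ := by
    intro σ hσ
    obtain ⟨h312, h123⟩ := (hmemF σ).mp hσ
    exact hPG_lemma hn0 h312 h123
  have hGP : ∀ p ∈ Tset n, GmF n hn0 (Pmap n p) = p := by
    intro p hp
    obtain ⟨a, j⟩ := p
    exact hGP_lemma hn0 ((mem_Tset _).mp hp)
  have hcard : F.card = (Tset n).card :=
    Finset.card_nbij' (GmF n hn0) (Pmap n) hGT hPF hPG hGP
  have hsum : ∑ σ ∈ F, (lis σ : ℚ) ^ 2 = ∑ p ∈ Tset n, (lis (Pmap n p) : ℚ) ^ 2 :=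
    Finset.sum_nbij' (GmF n hn0) (Pmap n) hGT hPF hPG hGP
      (fun σ hσ => by rw [hPG σ hσ])
  set B := (Finset.range n).biUnion (fun a => (Finset.Icc 1 a).image fun j => (a, j)) with hB
  have hTins : Tset n = insert (0, 0) B := rfl
  have hsum2 : ∑ p ∈ Tset n, (lis (Pmap n p) : ℚ) ^ 2 = 1 + (B.card : ℚ) * 4 := by
    rw [hTins, Finset.sum_insert notmem_B, lis_Pmap_zero hn0]
    have hB4 : ∀ p ∈ B, (lis (Pmap n p) : ℚ) ^ 2 = 4 := by
      intro p hp
      obtain ⟨a, j⟩ := p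
      rw [hB] at hp
      simp only [Finset.mem_biUnion, Finset.mem_image, Finset.mem_Icc,
        Finset.mem_range, Prod.mk.injEq] at hp
      obtain ⟨a', ha', j', ⟨hj1, hj2⟩, rfl, rfl⟩ := hp
      rw [lis_Pmap_pos ha' hj1 hj2]
      norm_num
    rw [Finset.sum_congr rfl hB4, Finset.sum_const, nsmul_eq_mul]
    norm_num
  have hcardT : ((Tset n).card : ℚ) = (B.card : ℚ) + 1 := by
    rw [hTins, Finset.card_insert_of_notMem notmem_B]
    push_cast
    ring
  have hB2 : ((B.card : ℚ)) * 2 = (n : ℚ) * ((n : ℚ) - 1) := by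
    have h := card_B (n := n)
    rw [← hB] at h
    have h2 := congrArg (Nat.cast : ℕ → ℚ) h
    push_cast [Nat.cast_sub hn] at h2
    linarith
  rw [hsum, hsum2, hcard, hcardT]
  exact final_arith n hn _ hB2 (by positivity)
end

section
/- For every n ≥ 1, the sum over all permutations σ of {1,...,n} avoiding both 312 and 132 of L(σ) equals 2^{n-1}·(n+1)/2; equivalently the expected longest increasing subsequence length on S_n(312,132) equals (n+1)/2. -/
namespace Stmt6

variable {m : ℕ}

/-- trues among indices `< k` -/
def Tcnt (b : Fin m → Bool) (k : ℕ) : ℕ :=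
  (Finset.univ.filter (fun j : Fin m => j.val < k ∧ b j)).card

/-- falses among indices `> k` -/
def Fafter (b : Fin m → Bool) (k : ℕ) : ℕ :=
  (Finset.univ.filter (fun j : Fin m => k < j.val ∧ ¬ b j)).card

/-- all falses -/
def Fall (b : Fin m → Bool) : ℕ :=
  (Finset.univ.filter (fun j : Fin m => ¬ b j)).card

def w (b : Fin m → Bool) : ℕ → ℕ
  | 0 => Fall b
  | (k+1) => if hk : k < m then
      (if b ⟨k, hk⟩ then Fall b + Tcnt b (k+1) else Fafter b k) else 0

lemma Fall_add_Tcnt (b : Fin m → Bool) : Fall b + Tcnt b m = m := by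
  have h1 : (Finset.univ.filter (fun j : Fin m => j.val < m ∧ b j))
      = Finset.univ.filter (fun j : Fin m => b j) := by
    apply Finset.filter_congr; intro j _; simp [j.isLt]
  rw [Fall, Tcnt, h1, add_comm, Finset.card_filter_add_card_filter_not
    (p := fun j : Fin m => (b j : Prop))]
  simp

lemma Tcnt_le (b : Fin m → Bool) (k : ℕ) : Tcnt b k ≤ Tcnt b m := by
  apply Finset.card_le_card
  intro j hj
  simp only [Finset.mem_filter, Finset.mem_univ, true_and] at *
  exact ⟨j.isLt, hj.2⟩

lemma Fafter_le (b : Fin m → Bool) (k : ℕ) : Fafter b k ≤ Fall b := by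
  apply Finset.card_le_card
  intro j hj
  simp only [Finset.mem_filter, Finset.mem_univ, true_and] at *
  exact hj.2

lemma w_lt (b : Fin m → Bool) (p : ℕ) : w b p < m + 1 := by
  have key := Fall_add_Tcnt b
  match p with
  | 0 => simp only [w]; omega
  | (k+1) =>
    simp only [w]
    split
    · split
      · have := Tcnt_le b (k+1); omega
      · have := Fafter_le b k; omega
    · omega

end Stmt6
namespace Stmt6
variable {m : ℕ}

lemma card_lt_aux {α : Type*} [DecidableEq α] {s t : Finset α} (hsub : s ⊆ t)
    {x : α} (hxt : x ∈ t) (hxs : x ∉ s) : s.card < t.card :=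
  Finset.card_lt_card ((Finset.ssubset_iff_of_subset hsub).mpr ⟨x, hxt, hxs⟩)

lemma Tcnt_pos {b : Fin m → Bool} {k : ℕ} (hk : k < m) (hb : b ⟨k, hk⟩ = true) :
    0 < Tcnt b (k+1) := by
  apply Finset.card_pos.mpr
  exact ⟨⟨k, hk⟩, by simp [hb]⟩

lemma Tcnt_strict {b : Fin m → Bool} {k k' : ℕ} (hk : k < m) (hb : b ⟨k, hk⟩ = true)
    (h : k' < k) : Tcnt b (k'+1) < Tcnt b (k+1) :=
  card_lt_aux (x := ⟨k, hk⟩)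
    (fun j hj => by
      simp only [Finset.mem_filter, Finset.mem_univ, true_and] at *
      exact ⟨by omega, hj.2⟩)
    (by simp [hb]) (by simp; omega)

lemma Fafter_lt_Fall {b : Fin m → Bool} {k : ℕ} (hk : k < m) (hb : b ⟨k, hk⟩ = false) :
    Fafter b k < Fall b :=
  card_lt_aux (x := ⟨k, hk⟩)
    (fun j hj => by
      simp only [Finset.mem_filter, Finset.mem_univ, true_and] at *
      exact hj.2)
    (by simp [hb]) (by simp)

lemma Fafter_strict {b : Fin m → Bool} {k k' : ℕ} (hk : k < m) (hb : b ⟨k, hk⟩ = false)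
    (h : k' < k) : Fafter b k < Fafter b k' :=
  card_lt_aux (x := ⟨k, hk⟩)
    (fun j hj => by
      simp only [Finset.mem_filter, Finset.mem_univ, true_and] at *
      exact ⟨by omega, hj.2⟩)
    (by simp [hb]; omega) (by simp)

/-- value at a true position exceeds all earlier values -/
lemma w_lt_of_true {b : Fin m → Bool} {k : ℕ} (hk : k < m) (hb : b ⟨k, hk⟩ = true)
    {p : ℕ} (hp : p < k + 1) : w b p < w b (k+1) := by
  have h1 : w b (k+1) = Fall b + Tcnt b (k+1) := by simp [w, hk, hb]
  rw [h1]
  match p with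
  | 0 => simp only [w]; have := Tcnt_pos hk hb; omega
  | (p'+1) =>
    have hp' : p' < m := by omega
    simp only [w, dif_pos hp']
    by_cases hbp : b ⟨p', hp'⟩ = true
    · rw [if_pos hbp]
      have := Tcnt_strict hk hb (show p' < k by omega); omega
    · rw [if_neg hbp]
      have h2 := Fafter_lt_Fall hp' (by simpa using hbp)
      have := Tcnt_pos hk hb; omega

/-- value at a false position is below all earlier values -/
lemma w_lt_of_false {b : Fin m → Bool} {k : ℕ} (hk : k < m) (hb : b ⟨k, hk⟩ = false)
    {p : ℕ} (hp : p < k + 1) : w b (k+1) < w b p := by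
  have h1 : w b (k+1) = Fafter b k := by simp [w, hk, hb]
  rw [h1]
  match p with
  | 0 => simp only [w]; exact Fafter_lt_Fall hk hb
  | (p'+1) =>
    have hp' : p' < m := by omega
    simp only [w, dif_pos hp']
    by_cases hbp : b ⟨p', hp'⟩ = true
    · rw [if_pos hbp]
      have h2 := Fafter_lt_Fall hk hb
      omega
    · rw [if_neg hbp]
      exact Fafter_strict hk hb (by omega)

end Stmt6
namespace Stmt6
variable {m : ℕ}

def vfun (b : Fin m → Bool) : Fin (m+1) → Fin (m+1) := fun p => ⟨w b p.val, w_lt b p.val⟩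

lemma vfun_ne {b : Fin m → Bool} {p q : Fin (m+1)} (hpq : p < q) : vfun b p ≠ vfun b q := by
  have hq : q.val ≠ 0 := by
    intro h; have : p.val < q.val := hpq; omega
  obtain ⟨k, hk⟩ : ∃ k, q.val = k + 1 := ⟨q.val - 1, by omega⟩
  have hkm : k < m := by have := q.isLt; omega
  have hlt : p.val < k + 1 := by have : p.val < q.val := hpq; omega
  intro hE
  have hE' : w b p.val = w b q.val := congrArg Fin.val hE
  rw [hk] at hE'
  by_cases hb : b ⟨k, hkm⟩ = true
  · exact absurd hE' (Nat.ne_of_lt (w_lt_of_true hkm hb hlt))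
  · exact absurd hE'.symm (Nat.ne_of_lt (w_lt_of_false hkm (by simpa using hb) hlt))

lemma vfun_injective (b : Fin m → Bool) : Function.Injective (vfun b) := by
  intro p q h
  rcases lt_trichotomy p q with h1 | h1 | h1
  · exact absurd h (vfun_ne h1)
  · exact h1
  · exact absurd h.symm (vfun_ne h1)

noncomputable def perm (b : Fin m → Bool) : Equiv.Perm (Fin (m+1)) :=
  Equiv.ofBijective (vfun b)
    ((Fintype.bijective_iff_injective_and_card _).mpr ⟨vfun_injective b, rfl⟩)

@[simp] lemma perm_apply (b : Fin m → Bool) (p : Fin (m+1)) : perm b p = vfun b p := rfl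

lemma perm_lt_of_true {b : Fin m → Bool} {k : Fin m} (hb : b k = true)
    {p : Fin (m+1)} (hp : p < k.succ) : perm b p < perm b k.succ := by
  have h : w b p.val < w b (k.val + 1) :=
    w_lt_of_true k.isLt (by simpa [Fin.eta] using hb) (by simpa [Fin.lt_def] using hp)
  simpa [perm, vfun, Fin.lt_def] using h

lemma perm_lt_of_false {b : Fin m → Bool} {k : Fin m} (hb : b k = false)
    {p : Fin (m+1)} (hp : p < k.succ) : perm b k.succ < perm b p := by
  have h : w b (k.val + 1) < w b p.val :=
    w_lt_of_false k.isLt (by simpa [Fin.eta] using hb) (by simpa [Fin.lt_def] using hp)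
  simpa [perm, vfun, Fin.lt_def] using h

lemma perm_avoids (b : Fin m → Bool) : Avoids312 (perm b) ∧ Avoids132 (perm b) := by
  constructor
  · rintro ⟨i, j, k, hij, hjk, h1, h2⟩
    obtain ⟨t, rfl⟩ : ∃ t : Fin m, k = t.succ := by
      refine ⟨⟨k.val - 1, ?_⟩, ?_⟩
      · have := k.isLt; have : (0:ℕ) < k.val := by
          have : i.val < j.val := hij; have : j.val < k.val := hjk; omega
        omega
      · ext; simp [Fin.succ]
        have : i.val < j.val := hij; have : j.val < k.val := hjk; omega
    by_cases hb : b t = true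
    · exact absurd h2 (not_lt.mpr (le_of_lt (perm_lt_of_true hb (lt_trans hij hjk))))
    · exact absurd h1 (not_lt.mpr (le_of_lt (perm_lt_of_false (by simpa using hb) hjk)))
  · rintro ⟨i, j, k, hij, hjk, h1, h2⟩
    obtain ⟨t, rfl⟩ : ∃ t : Fin m, k = t.succ := by
      refine ⟨⟨k.val - 1, ?_⟩, ?_⟩
      · have := k.isLt; have : (0:ℕ) < k.val := by
          have : i.val < j.val := hij; have : j.val < k.val := hjk; omega
        omega
      · ext; simp [Fin.succ]
        have : i.val < j.val := hij; have : j.val < k.val := hjk; omega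
    by_cases hb : b t = true
    · exact absurd h2 (not_lt.mpr (le_of_lt (perm_lt_of_true hb hjk)))
    · exact absurd h1 (not_lt.mpr (le_of_lt (perm_lt_of_false (by simpa using hb) (lt_trans hij hjk))))

end Stmt6
namespace Stmt6
variable {m : ℕ}

def Ttot (b : Fin m → Bool) : ℕ := Tcnt b m

lemma Ttot_eq (b : Fin m → Bool) :
    Ttot b = (Finset.univ.filter (fun j : Fin m => b j)).card := by
  rw [Ttot, Tcnt]
  congr 1
  apply Finset.filter_congr
  intro j _; simp [j.isLt]

lemma Ttot_le (b : Fin m → Bool) : Ttot b ≤ m := by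
  have := Fall_add_Tcnt b; rw [Ttot]; omega

lemma exists_incr (b : Fin m → Bool) :
    ∃ f : Fin (Ttot b + 1) → Fin (m+1),
      (∀ i j, i < j → f i < f j) ∧ (∀ i j, i < j → perm b (f i) < perm b (f j)) := by
  classical
  set s : Finset (Fin (m+1)) :=
    insert 0 ((Finset.univ.filter (fun j : Fin m => b j)).image Fin.succ) with hs
  have hnotmem : (0 : Fin (m+1)) ∉ (Finset.univ.filter (fun j : Fin m => b j)).image Fin.succ := by
    simp only [Finset.mem_image, Finset.mem_filter, Finset.mem_univ, true_and, not_exists]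
    intro j h
    exact Fin.succ_ne_zero j h.2
  have hcard : s.card = Ttot b + 1 := by
    rw [hs, Finset.card_insert_of_notMem hnotmem,
      Finset.card_image_of_injective _ (Fin.succ_injective m), Ttot_eq]
  refine ⟨fun i => (s.orderIsoOfFin hcard i : Fin (m+1)), ?_, ?_⟩
  · intro i j hij
    exact (s.orderIsoOfFin hcard).strictMono hij
  · intro i j hij
    dsimp only
    have hlt : (s.orderIsoOfFin hcard i : Fin (m+1)) < (s.orderIsoOfFin hcard j : Fin (m+1)) :=
      (s.orderIsoOfFin hcard).strictMono hij
    have hmem : (s.orderIsoOfFin hcard j : Fin (m+1)) ∈ s := (s.orderIsoOfFin hcard j).2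
    simp only [hs, Finset.mem_insert] at hmem
    rcases hmem with h0 | hmem
    · rw [h0] at hlt
      exact absurd hlt (by simp [Fin.lt_def])
    · obtain ⟨t, ht, hteq⟩ := Finset.mem_image.mp hmem
      rw [← hteq]
      rw [← hteq] at hlt
      exact perm_lt_of_true (Finset.mem_filter.mp ht).2 hlt

lemma incr_le (b : Fin m → Bool) {L : ℕ}
    (f : Fin L → Fin (m+1))
    (hmono : ∀ i j, i < j → f i < f j)
    (hval : ∀ i j, i < j → perm b (f i) < perm b (f j)) :
    L ≤ Ttot b + 1 := by
  classical
  by_contra hL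
  push_neg at hL
  have hL2 : 2 ≤ L := by omega
  have i0 : Fin L := ⟨0, by omega⟩
  have hm : 0 < m := by
    have h01 : f ⟨0, by omega⟩ < f ⟨1, by omega⟩ := hmono _ _ (by simp [Fin.lt_def])
    have := (f ⟨1, by omega⟩).isLt
    have : 0 < (f ⟨1, by omega⟩).val := by
      have : (f ⟨0, by omega⟩).val < (f ⟨1, by omega⟩).val := h01
      omega
    omega
  -- every f i with 0 < i is a "true" position
  have key : ∀ i : Fin L, 0 < i.val → ∃ ht : (f i).val - 1 < m,
      b ⟨(f i).val - 1, ht⟩ = true ∧ 0 < (f i).val := by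
    intro i hi
    have h0i : f ⟨0, by omega⟩ < f i := hmono _ _ (by rw [Fin.lt_def]; simpa using hi)
    have hfi : 0 < (f i).val := by
      have : (f ⟨0, by omega⟩).val < (f i).val := h0i
      omega
    have ht : (f i).val - 1 < m := by have := (f i).isLt; omega
    refine ⟨ht, ?_, hfi⟩
    by_contra hb
    have hb' : b ⟨(f i).val - 1, ht⟩ = false := by simpa using hb
    have hsucc : (⟨(f i).val - 1, ht⟩ : Fin m).succ = f i := by
      ext; simp [Fin.succ]; omega
    have := perm_lt_of_false hb' (p := f ⟨0, by omega⟩) (by rw [hsucc]; exact h0i)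
    rw [hsucc] at this
    exact absurd (hval _ _ (by rw [Fin.lt_def]; simpa using hi)) (not_lt.mpr (le_of_lt this))
  -- injection into true positions
  have hcard : ((Finset.univ : Finset (Fin L)).filter (fun i => 0 < i.val)).card
      ≤ ((Finset.univ : Finset (Fin m)).filter (fun t => b t)).card := by
    apply Finset.card_le_card_of_injOn (fun i => ⟨(f i).val - 1, by have := (f i).isLt; omega⟩)
    · intro i hi
      simp only [Finset.coe_filter, Set.mem_setOf_eq, Finset.mem_filter, Finset.mem_univ, true_and] at hi ⊢
      exact (key i hi).choose_spec.1
    · intro i hi i' hi' heq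
      simp only [Finset.coe_filter, Set.mem_setOf_eq, Finset.mem_univ, true_and] at hi hi'
      have h1 := (key i hi).choose_spec.2
      have h2 := (key i' hi').choose_spec.2
      have : (f i).val - 1 = (f i').val - 1 := congrArg Fin.val heq
      have hff : f i = f i' := by ext; omega
      by_contra hne
      rcases lt_or_gt_of_ne hne with h | h
      · exact absurd hff (Fin.ne_of_lt (hmono _ _ h))
      · exact absurd hff.symm (Fin.ne_of_lt (hmono _ _ h))
  have hfiltL : ((Finset.univ : Finset (Fin L)).filter (fun i => 0 < i.val)).card = L - 1 := by
    have : ((Finset.univ : Finset (Fin L)).filter (fun i => 0 < i.val))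
        = Finset.univ.erase ⟨0, by omega⟩ := by
      ext i
      simp only [Finset.mem_filter, Finset.mem_univ, true_and, Finset.mem_erase, and_true,
        ne_eq, Fin.ext_iff]
      omega
    rw [this, Finset.card_erase_of_mem (Finset.mem_univ _)]
    simp
  rw [hfiltL, ← Ttot_eq] at hcard
  omega

lemma lis_perm (b : Fin m → Bool) : lis (perm b) = Ttot b + 1 := by
  rw [lis, Nat.findGreatest_eq_iff]
  refine ⟨by have := Ttot_le b; omega, fun _ => ?_, fun L hL hLe => ?_⟩
  · obtain ⟨f, h1, h2⟩ := exists_incr b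
    exact ⟨f, h1, h2⟩
  · rintro ⟨f, h1, h2⟩
    exact absurd (incr_le b f h1 h2) (by omega)

end Stmt6
namespace Stmt6
variable {m : ℕ}

lemma count_split (b : Fin m → Bool) {k : ℕ} (hk : k < m) :
    Tcnt b (k+1) + (Finset.univ.filter (fun j : Fin m => j.val < k+1 ∧ ¬ b j)).card = k+1 := by
  classical
  have hdisj : Disjoint (Finset.univ.filter (fun j : Fin m => j.val < k+1 ∧ b j))
      (Finset.univ.filter (fun j : Fin m => j.val < k+1 ∧ ¬ b j)) := by
    rw [Finset.disjoint_filter]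
    intro j _ h1 h2
    exact h2.2 h1.2
  rw [Tcnt, ← Finset.card_union_of_disjoint hdisj]
  have h1 : (Finset.univ.filter (fun j : Fin m => j.val < k+1 ∧ b j))
      ∪ (Finset.univ.filter (fun j : Fin m => j.val < k+1 ∧ ¬ b j))
      = Finset.Iic (⟨k, hk⟩ : Fin m) := by
    ext j
    simp only [Finset.mem_union, Finset.mem_filter, Finset.mem_univ, true_and,
      Finset.mem_Iic, Fin.le_def]
    constructor
    · rintro (⟨h, -⟩ | ⟨h, -⟩) <;> omega
    · intro h
      by_cases hb : b j = true
      · exact Or.inl ⟨by omega, hb⟩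
      · exact Or.inr ⟨by omega, hb⟩
  rw [h1, Fin.card_Iic]

lemma fall_split (b : Fin m → Bool) (k : ℕ) :
    (Finset.univ.filter (fun j : Fin m => j.val < k+1 ∧ ¬ b j)).card + Fafter b k = Fall b := by
  classical
  have hdisj : Disjoint (Finset.univ.filter (fun j : Fin m => j.val < k+1 ∧ ¬ b j))
      (Finset.univ.filter (fun j : Fin m => k < j.val ∧ ¬ b j)) := by
    rw [Finset.disjoint_filter]
    intro j _ h1 h2
    omega
  rw [Fafter, ← Finset.card_union_of_disjoint hdisj, Fall]
  congr 1
  ext j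
  simp only [Finset.mem_union, Finset.mem_filter, Finset.mem_univ, true_and]
  constructor
  · rintro (⟨-, h⟩ | ⟨-, h⟩) <;> exact h
  · intro h
    by_cases hj : j.val < k + 1
    · exact Or.inl ⟨hj, h⟩
    · exact Or.inr ⟨by omega, h⟩

lemma w_true_eq (b : Fin m → Bool) {k : ℕ} (hk : k < m) :
    (k+1) + Fafter b k = Fall b + Tcnt b (k+1) := by
  have h1 := count_split b hk
  have h2 := fall_split b k
  omega

/-- value of a permutation = number of smaller values -/
lemma val_eq_card {N : ℕ} (τ : Equiv.Perm (Fin N)) (p : Fin N) :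
    (τ p).val = (Finset.univ.filter (fun q => τ q < τ p)).card := by
  classical
  have h1 : (Finset.univ.filter (fun q => τ q < τ p))
      = (Finset.univ.filter (fun x => x < τ p)).image τ.symm := by
    ext q
    simp only [Finset.mem_filter, Finset.mem_univ, true_and, Finset.mem_image]
    constructor
    · intro h; exact ⟨τ q, h, τ.symm_apply_apply q⟩
    · rintro ⟨x, hx, rfl⟩; rwa [τ.apply_symm_apply]
  rw [h1, Finset.card_image_of_injective _ τ.symm.injective]
  have h2 : (Finset.univ.filter (fun x => x < τ p)) = Finset.Iio (τ p) := by
    ext x; simp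
  rw [h2, Fin.card_Iio]

end Stmt6
namespace Stmt6
variable {m : ℕ}

def bits (σ : Equiv.Perm (Fin (m+1))) : Fin m → Bool := fun k => decide (σ 0 < σ k.succ)

section
variable {σ : Equiv.Perm (Fin (m+1))} (h312 : Avoids312 σ) (h132 : Avoids132 σ)

include h312 h132 in
lemma dichotomy (p : Fin (m+1)) (hp : 0 < p) :
    (∀ q, q < p → σ q < σ p) ∨ (∀ q, q < p → σ p < σ q) := by
  by_contra h
  push_neg at h
  obtain ⟨⟨a, ha, ha'⟩, ⟨c, hc, hc'⟩⟩ := h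
  have hpa : σ p < σ a := lt_of_le_of_ne ha' (fun hE => (Fin.ne_of_lt ha).symm (σ.injective hE.symm).symm)
  have hcp : σ c < σ p := lt_of_le_of_ne hc' (fun hE => (Fin.ne_of_lt hc) (σ.injective hE))
  rcases lt_trichotomy a c with hac | hac | hac
  · exact h312 ⟨a, c, p, hac, hc, hcp, hpa⟩
  · rw [hac] at hpa; exact absurd (lt_trans hcp hpa) (lt_irrefl _)
  · exact h132 ⟨c, a, p, hac, ha, hcp, hpa⟩

include h312 h132 in
lemma all_lt_of_true {k : Fin m} (hb : bits σ k = true) :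
    ∀ q, q < k.succ → σ q < σ k.succ := by
  rcases dichotomy h312 h132 k.succ (Fin.succ_pos k) with h | h
  · exact h
  · have := h 0 (Fin.succ_pos k)
    have hb' := of_decide_eq_true hb
    exact absurd (lt_trans hb' this) (lt_irrefl _)

include h312 h132 in
lemma all_gt_of_false {k : Fin m} (hb : bits σ k = false) :
    ∀ q, q < k.succ → σ k.succ < σ q := by
  rcases dichotomy h312 h132 k.succ (Fin.succ_pos k) with h | h
  · have := h 0 (Fin.succ_pos k)
    have hb' := of_decide_eq_false hb
    exact absurd this hb'
  · exact h

end

end Stmt6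
namespace Stmt6
variable {m : ℕ}

section
variable {σ : Equiv.Perm (Fin (m+1))} (h312 : Avoids312 σ) (h132 : Avoids132 σ)

include h312 h132 in
lemma sigma_zero_val : (σ 0).val = Fall (bits σ) := by
  classical
  rw [val_eq_card σ 0, Fall]
  have hset : (Finset.univ.filter (fun q => σ q < σ 0))
      = (Finset.univ.filter (fun j : Fin m => ¬ bits σ j)).image Fin.succ := by
    ext q
    simp only [Finset.mem_filter, Finset.mem_univ, true_and, Finset.mem_image]
    induction q using Fin.cases with
    | zero =>
      simp only [lt_irrefl, false_iff, not_exists]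
      rintro j ⟨-, hj⟩
      exact Fin.succ_ne_zero j hj
    | succ j =>
      constructor
      · intro h
        refine ⟨j, ?_, rfl⟩
        simp only [bits, decide_eq_true_eq]
        exact fun h' => absurd (lt_trans h h') (lt_irrefl _)
      · rintro ⟨j', hj', hE⟩
        have hjj : j' = j := Fin.succ_injective m hE
        subst hjj
        simp only [bits, decide_eq_true_eq] at hj'
        have hne : σ j'.succ ≠ σ 0 := fun h => Fin.succ_ne_zero j' (σ.injective h)
        rcases lt_or_gt_of_ne hne with h | h
        · exact h
        · exact absurd h hj'
  rw [hset, Finset.card_image_of_injective _ (Fin.succ_injective m)]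

include h312 h132 in
lemma sigma_succ_val_true {k : Fin m} (hb : bits σ k = true) :
    (σ k.succ).val = Fall (bits σ) + Tcnt (bits σ) (k.val + 1) := by
  classical
  set b := bits σ with hbdef
  rw [val_eq_card σ k.succ]
  have hset : (Finset.univ.filter (fun q => σ q < σ k.succ))
      = Finset.Iio k.succ
        ∪ (Finset.univ.filter (fun j : Fin m => k.val < j.val ∧ ¬ b j)).image Fin.succ := by
    ext q
    simp only [Finset.mem_filter, Finset.mem_univ, true_and, Finset.mem_union,
      Finset.mem_Iio, Finset.mem_image]
    rcases lt_trichotomy q k.succ with hq | hq | hq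
    · exact iff_of_true (all_lt_of_true h312 h132 hb q hq) (Or.inl hq)
    · subst hq
      simp only [lt_irrefl, false_iff, not_or, not_exists]
      refine ⟨fun h => h, ?_⟩
      rintro j ⟨⟨hj, -⟩, hE⟩
      have : j = k := Fin.succ_injective m hE
      subst this
      exact absurd hj (lt_irrefl _)
    · have hq1 : 0 < q.val := by
        have : k.succ.val < q.val := hq
        simp [Fin.val_succ] at this
        omega
      have hqm : q.val - 1 < m := by have := q.isLt; omega
      set j : Fin m := ⟨q.val - 1, hqm⟩ with hjdef
      have hjq : j.succ = q := by
        ext; rw [Fin.val_succ]; show q.val - 1 + 1 = q.val; omega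
      have hkj : k.val < j.val := by
        have h' : k.succ.val < q.val := hq
        simp only [Fin.val_succ] at h'
        show k.val < q.val - 1
        omega
      by_cases hbj : b j = true
      · have h1 : σ k.succ < σ j.succ :=
          all_lt_of_true h312 h132 hbj k.succ (Fin.succ_lt_succ_iff.mpr (by rw [Fin.lt_def]; exact hkj))
        rw [hjq] at h1
        simp only [not_lt.mpr (le_of_lt h1), false_iff, not_or, not_exists]
        constructor
        · exact fun h => absurd (lt_trans h hq) (lt_irrefl _)
        · rintro j' ⟨⟨-, hj'⟩, hE⟩
          have : j' = j := by rw [← hjq] at hE; exact Fin.succ_injective m hE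
          subst this
          exact hj' hbj
      · have hbj' : b j = false := by simpa using hbj
        have h1 : σ j.succ < σ k.succ :=
          all_gt_of_false h312 h132 hbj' k.succ (Fin.succ_lt_succ_iff.mpr (by rw [Fin.lt_def]; exact hkj))
        rw [hjq] at h1
        simp only [h1, true_iff]
        exact Or.inr ⟨j, ⟨hkj, hbj⟩, hjq⟩
  rw [hset, Finset.card_union_of_disjoint, Fin.card_Iio,
    Finset.card_image_of_injective _ (Fin.succ_injective m)]
  · have := w_true_eq b (k := k.val) k.isLt
    rw [Fafter] at this
    simp only [Fin.val_succ]
    omega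
  · rw [Finset.disjoint_left]
    intro q hq hq2
    rw [Finset.mem_Iio] at hq
    obtain ⟨j, hj, hE⟩ := Finset.mem_image.mp hq2
    rw [Finset.mem_filter] at hj
    have h1 : q.val < k.val + 1 := by simpa [Fin.lt_def, Fin.val_succ] using hq
    have h2 : q.val = j.val + 1 := by rw [← hE]; simp [Fin.val_succ]
    have := hj.2.1
    omega

include h312 h132 in
lemma sigma_succ_val_false {k : Fin m} (hb : bits σ k = false) :
    (σ k.succ).val = Fafter (bits σ) k.val := by
  classical
  set b := bits σ with hbdef
  rw [val_eq_card σ k.succ]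
  have hset : (Finset.univ.filter (fun q => σ q < σ k.succ))
      = (Finset.univ.filter (fun j : Fin m => k.val < j.val ∧ ¬ b j)).image Fin.succ := by
    ext q
    simp only [Finset.mem_filter, Finset.mem_univ, true_and, Finset.mem_image]
    rcases lt_trichotomy q k.succ with hq | hq | hq
    · have h1 : σ k.succ < σ q := all_gt_of_false h312 h132 hb q hq
      simp only [not_lt.mpr (le_of_lt h1), false_iff, not_exists]
      rintro j ⟨⟨hj, -⟩, hE⟩
      have hqv : q.val = j.val + 1 := by rw [← hE]; simp [Fin.val_succ]
      have : q.val < k.val + 1 := by simpa [Fin.lt_def, Fin.val_succ] using hq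
      omega
    · subst hq
      simp only [lt_irrefl, false_iff, not_exists]
      rintro j ⟨⟨hj, -⟩, hE⟩
      have : j = k := Fin.succ_injective m hE
      subst this
      exact absurd hj (lt_irrefl _)
    · have hq1 : 0 < q.val := by
        have h' : k.succ.val < q.val := hq
        simp only [Fin.val_succ] at h'
        omega
      have hqm : q.val - 1 < m := by have := q.isLt; omega
      set j : Fin m := ⟨q.val - 1, hqm⟩ with hjdef
      have hjq : j.succ = q := by ext; rw [Fin.val_succ]; show q.val - 1 + 1 = q.val; omega
      have hkj : k.val < j.val := by
        have h' : k.succ.val < q.val := hq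
        simp only [Fin.val_succ] at h'
        show k.val < q.val - 1
        omega
      by_cases hbj : b j = true
      · have h1 : σ k.succ < σ j.succ :=
          all_lt_of_true h312 h132 hbj k.succ (Fin.succ_lt_succ_iff.mpr (by rw [Fin.lt_def]; exact hkj))
        rw [hjq] at h1
        simp only [not_lt.mpr (le_of_lt h1), false_iff, not_exists]
        rintro j' ⟨⟨-, hj'⟩, hE⟩
        have : j' = j := by rw [← hjq] at hE; exact Fin.succ_injective m hE
        subst this
        exact hj' hbj
      · have hbj' : b j = false := by simpa using hbj
        have h1 : σ j.succ < σ k.succ :=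
          all_gt_of_false h312 h132 hbj' k.succ (Fin.succ_lt_succ_iff.mpr (by rw [Fin.lt_def]; exact hkj))
        rw [hjq] at h1
        simp only [h1, true_iff]
        exact ⟨j, ⟨hkj, hbj⟩, hjq⟩
  rw [hset, Finset.card_image_of_injective _ (Fin.succ_injective m), Fafter]

include h312 h132 in
lemma perm_bits_eq : perm (bits σ) = σ := by
  apply Equiv.ext
  intro p
  rw [perm_apply]
  apply Fin.ext
  induction p using Fin.cases with
  | zero =>
    rw [sigma_zero_val h312 h132]
    rfl
  | succ k =>
    show w (bits σ) k.succ.val = _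
    rw [Fin.val_succ]
    by_cases hb : bits σ k = true
    · rw [sigma_succ_val_true h312 h132 hb]
      simp only [w, dif_pos k.isLt]
      rw [if_pos (by simpa [Fin.eta] using hb)]
    · have hb' : bits σ k = false := by simpa using hb
      rw [sigma_succ_val_false h312 h132 hb']
      simp only [w, dif_pos k.isLt]
      rw [if_neg (by simpa [Fin.eta] using hb)]

end

end Stmt6
namespace Stmt6
variable {m : ℕ}

lemma bits_perm (b : Fin m → Bool) : bits (perm b) = b := by
  funext k
  have h0 : ((perm b) 0).val = Fall b := rfl
  have hk : ((perm b) k.succ).val = w b (k.val + 1) := rfl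
  cases hbk : b k with
  | true =>
    apply decide_eq_true
    rw [Fin.lt_def, h0, hk]
    simp only [w, dif_pos k.isLt]
    rw [if_pos (by simpa [Fin.eta] using hbk)]
    have := Tcnt_pos k.isLt (by simpa [Fin.eta] using hbk)
    omega
  | false =>
    apply decide_eq_false
    rw [Fin.lt_def, h0, hk]
    simp only [w, dif_pos k.isLt]
    rw [if_neg (by simp [Fin.eta, hbk])]
    have := Fafter_lt_Fall k.isLt (by simpa [Fin.eta] using hbk)
    omega

lemma sum_step1 :
    ∑ σ ∈ Finset.univ.filter
        (fun σ : Equiv.Perm (Fin (m+1)) => Avoids312 σ ∧ Avoids132 σ), (lis σ : ℚ)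
      = ∑ b : Fin m → Bool, ((Ttot b : ℚ) + 1) := by
  classical
  refine Finset.sum_bij' (fun σ _ => bits σ) (fun b _ => perm b) ?_ ?_ ?_ ?_ ?_
  · intro σ hσ; exact Finset.mem_univ _
  · intro b _
    rw [Finset.mem_filter]
    exact ⟨Finset.mem_univ _, perm_avoids b⟩
  · intro σ hσ
    rw [Finset.mem_filter] at hσ
    exact perm_bits_eq hσ.2.1 hσ.2.2
  · intro b _; exact bits_perm b
  · intro σ hσ
    rw [Finset.mem_filter] at hσ
    show (lis σ : ℚ) = (Ttot (bits σ) : ℚ) + 1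
    have h := lis_perm (bits σ)
    rw [perm_bits_eq hσ.2.1 hσ.2.2] at h
    rw [h]
    push_cast
    ring

lemma sum_bit (j : Fin m) :
    ∑ b : Fin m → Bool, (if b j then (1:ℚ) else 0) = 2 ^ m / 2 := by
  classical
  have hinv : Function.Involutive (fun b : Fin m → Bool => Function.update b j (!(b j))) := by
    intro b; funext k
    by_cases hk : k = j
    · subst hk; simp
    · simp [Function.update_of_ne hk]
  set e := hinv.toPerm with he
  have h1 : ∑ b : Fin m → Bool, (if b j then (1:ℚ) else 0)
      = ∑ b : Fin m → Bool, (if (e b) j then (1:ℚ) else 0) :=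
    (Equiv.sum_comp e (fun b => if b j then (1:ℚ) else 0)).symm
  have h2 : ∀ b : Fin m → Bool, (e b) j = !(b j) := by
    intro b; simp [he, Function.Involutive.toPerm]
  have h3 : ∑ b : Fin m → Bool,
      ((if b j then (1:ℚ) else 0) + (if (e b) j then (1:ℚ) else 0))
      = 2 ^ m := by
    have : ∀ b : Fin m → Bool,
        (if b j then (1:ℚ) else 0) + (if (e b) j then (1:ℚ) else 0) = 1 := by
      intro b; rw [h2 b]; cases b j <;> simp
    rw [Finset.sum_congr rfl (fun b _ => this b), Finset.sum_const]
    simp [Finset.card_univ]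
  rw [Finset.sum_add_distrib, ← h1] at h3
  linarith

lemma sum_Ttot : ∑ b : Fin m → Bool, (Ttot b : ℚ) = m * (2 ^ m / 2) := by
  classical
  have h1 : ∀ b : Fin m → Bool, (Ttot b : ℚ) = ∑ j : Fin m, (if b j then (1:ℚ) else 0) := by
    intro b
    rw [Ttot_eq]
    push_cast
    rw [Finset.card_filter]
    push_cast
    rfl
  rw [Finset.sum_congr rfl (fun b _ => h1 b), Finset.sum_comm]
  rw [Finset.sum_congr rfl (fun j _ => sum_bit j), Finset.sum_const]
  simp only [Finset.card_univ, Fintype.card_fin, nsmul_eq_mul]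

end Stmt6


/-- the sum of `L(σ)` over `S_n(312,132)` equals `2^(n-1)·(n+1)/2`;
equivalently the expectation is `(n+1)/2`. -/
theorem stmt_6 (n : ℕ) (hn : 1 ≤ n) :
    ∑ σ ∈ Finset.univ.filter (fun σ : Equiv.Perm (Fin n) => Avoids312 σ ∧ Avoids132 σ),
        (lis σ : ℚ)
      = 2 ^ (n - 1) * ((n : ℚ) + 1) / 2 := by
  obtain ⟨m, rfl⟩ : ∃ m, n = m + 1 := ⟨n - 1, by omega⟩
  rw [Stmt6.sum_step1, Finset.sum_add_distrib, Stmt6.sum_Ttot, Finset.sum_const]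
  simp only [Finset.card_univ, Fintype.card_fun, Fintype.card_bool, Fintype.card_fin,
    nsmul_eq_mul, mul_one, Nat.add_sub_cancel]
  push_cast
  ring
end

section
/- For every n ≥ 1, the sum over all permutations σ of {1,...,n} avoiding both 312 and 132 of L(σ)² equals 2^{n-1}·n(n+3)/4; equivalently the expectation of L² on S_n(312,132) equals n(n+3)/4. -/
open Equiv Finset

abbrev IncProp {n : ℕ} (σ : Equiv.Perm (Fin n)) (k : ℕ) : Prop :=
  ∃ f : Fin k → Fin n,
    (∀ i j : Fin k, i < j → f i < f j) ∧ (∀ i j : Fin k, i < j → σ (f i) < σ (f j))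

def emax {n : ℕ} (σ : Equiv.Perm (Fin n)) : Equiv.Perm (Fin (n+1)) :=
  finSuccEquivLast.symm.permCongr σ.optionCongr

def ext' {n : ℕ} (σ : Equiv.Perm (Fin n)) (b : Bool) : Equiv.Perm (Fin (n+1)) :=
  if b then emax σ else (finRotate (n+1)) * emax σ

@[simp] lemma emax_castSucc {n : ℕ} (σ : Equiv.Perm (Fin n)) (i : Fin n) :
    emax σ (Fin.castSucc i) = Fin.castSucc (σ i) := by
  simp [emax, Equiv.permCongr_apply]

@[simp] lemma emax_last {n : ℕ} (σ : Equiv.Perm (Fin n)) :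
    emax σ (Fin.last n) = Fin.last n := by
  simp [emax, Equiv.permCongr_apply]

@[simp] lemma ext_true_castSucc {n : ℕ} (σ : Equiv.Perm (Fin n)) (i : Fin n) :
    ext' σ true (Fin.castSucc i) = Fin.castSucc (σ i) := by simp [ext']

@[simp] lemma ext_true_last {n : ℕ} (σ : Equiv.Perm (Fin n)) :
    ext' σ true (Fin.last n) = Fin.last n := by simp [ext']

@[simp] lemma ext_false_castSucc {n : ℕ} (σ : Equiv.Perm (Fin n)) (i : Fin n) :
    ext' σ false (Fin.castSucc i) = (σ i).succ := by
  simp [ext', Equiv.Perm.mul_apply, Fin.coeSucc_eq_succ]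

@[simp] lemma ext_false_last {n : ℕ} (σ : Equiv.Perm (Fin n)) :
    ext' σ false (Fin.last n) = 0 := by
  simp [ext', Equiv.Perm.mul_apply, finRotate_last]

lemma incProp_zero {n : ℕ} (σ : Equiv.Perm (Fin n)) : IncProp σ 0 :=
  ⟨Fin.elim0, fun i => i.elim0, fun i => i.elim0⟩

lemma incProp_card {n : ℕ} {σ : Equiv.Perm (Fin n)} {m : ℕ} (h : IncProp σ m) : m ≤ n := by
  obtain ⟨f, hf, -⟩ := h
  have hinj : Function.Injective f := by
    intro i j hij
    rcases lt_trichotomy i j with h | h | h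
    · exact absurd hij (hf i j h).ne
    · exact h
    · exact absurd hij.symm (hf j i h).ne
  simpa using Fintype.card_le_of_injective f hinj

lemma incProp_mono {n : ℕ} {σ : Equiv.Perm (Fin n)} {j k : ℕ} (h : IncProp σ k) (hjk : j ≤ k) :
    IncProp σ j := by
  obtain ⟨f, hf, hfv⟩ := h
  refine ⟨f ∘ Fin.castLE hjk, fun a b hab => hf _ _ ?_, fun a b hab => hfv _ _ ?_⟩ <;>
    · simp only [Fin.lt_def, Fin.coe_castLE] at hab ⊢; exact hab

lemma le_lis {n : ℕ} {σ : Equiv.Perm (Fin n)} {m : ℕ} (h : IncProp σ m) : m ≤ lis σ :=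
  Nat.le_findGreatest (incProp_card h) h

lemma lis_le {n : ℕ} (σ : Equiv.Perm (Fin n)) : lis σ ≤ n :=
  Nat.findGreatest_le n

lemma lis_spec {n : ℕ} (σ : Equiv.Perm (Fin n)) : IncProp σ (lis σ) :=
  Nat.findGreatest_spec (Nat.zero_le n) (incProp_zero σ)

lemma one_le_lis {n : ℕ} (hn : 1 ≤ n) (σ : Equiv.Perm (Fin n)) : 1 ≤ lis σ := by
  apply le_lis
  refine ⟨fun _ => ⟨0, hn⟩, fun i j hij => ?_, fun i j hij => ?_⟩ <;>
    · exfalso; have := i.2; have := j.2; simp only [Fin.lt_def] at hij; omega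

lemma step_true {n m : ℕ} {σ : Equiv.Perm (Fin n)} (h : IncProp (ext' σ true) (m + 1)) :
    IncProp σ m := by
  obtain ⟨g, hg, hgv⟩ := h
  have hne : ∀ i : Fin m, g i.castSucc ≠ Fin.last n := by
    intro i
    exact Fin.ne_last_of_lt (lt_of_lt_of_le (hg _ _ (Fin.castSucc_lt_last i)) (Fin.le_last _))
  have e1 : ∀ i : Fin m, Fin.castSucc (σ ((g i.castSucc).castPred (hne i)))
      = ext' σ true (g i.castSucc) := by
    intro i
    conv_rhs => rw [← Fin.castSucc_castPred (g i.castSucc) (hne i)]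
    rw [ext_true_castSucc]
  refine ⟨fun i => (g i.castSucc).castPred (hne i), fun i j hij => ?_, fun i j hij => ?_⟩
  · have := hg i.castSucc j.castSucc (Fin.castSucc_lt_castSucc_iff.mpr hij)
    simp only [Fin.lt_def, Fin.coe_castPred] at this ⊢
    exact this
  · refine Fin.castSucc_lt_castSucc_iff.mp ?_
    rw [e1 i, e1 j]
    exact hgv i.castSucc j.castSucc (Fin.castSucc_lt_castSucc_iff.mpr hij)

lemma step_false {n m : ℕ} {σ : Equiv.Perm (Fin n)} (h : IncProp (ext' σ false) (m + 2)) :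
    IncProp σ (m + 2) := by
  obtain ⟨g, hg, hgv⟩ := h
  have hne : ∀ i : Fin (m+2), g i ≠ Fin.last n := by
    intro i hi
    rcases lt_trichotomy i (Fin.last (m+1)) with hlt | heq | hgt
    · exact absurd ((hi ▸ hg i (Fin.last (m+1)) hlt).trans_le (Fin.le_last _)) (lt_irrefl _)
    · have h0 : (0 : Fin (m+2)) < i := by rw [heq]; exact Fin.pos_iff_ne_zero.mpr (by
        simp [Fin.ext_iff, Fin.last])
      have := hgv 0 i h0
      rw [hi, ext_false_last] at this
      exact absurd this (Fin.not_lt_zero _)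
    · exact absurd (Fin.le_last i) (not_le.mpr hgt)
  have e1 : ∀ i : Fin (m+2), (σ ((g i).castPred (hne i))).succ = ext' σ false (g i) := by
    intro i
    conv_rhs => rw [← Fin.castSucc_castPred (g i) (hne i)]
    rw [ext_false_castSucc]
  refine ⟨fun i => (g i).castPred (hne i), fun i j hij => ?_, fun i j hij => ?_⟩
  · have := hg i j hij
    simp only [Fin.lt_def, Fin.coe_castPred] at this ⊢
    exact this
  · refine Fin.succ_lt_succ_iff.mp ?_
    rw [e1 i, e1 j]
    exact hgv i j hij

lemma lis_ext_true {n : ℕ} (σ : Equiv.Perm (Fin n)) : lis (ext' σ true) = lis σ + 1 := by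
  apply le_antisymm
  · by_contra hcon
    push_neg at hcon
    have h2 : IncProp (ext' σ true) (lis σ + 2) :=
      incProp_mono (lis_spec _) (by omega)
    have := le_lis (step_true h2)
    omega
  · obtain ⟨f, hf, hfv⟩ := lis_spec σ
    apply le_lis
    refine ⟨fun i => if h : (i : ℕ) < lis σ then (f ⟨i, h⟩).castSucc else Fin.last n,
      fun i j hij => ?_, fun i j hij => ?_⟩
    · by_cases hj : (j : ℕ) < lis σ
      · have hi : (i : ℕ) < lis σ := lt_trans (by simpa only [Fin.lt_def] using hij) hj
        simp only [dif_pos hi, dif_pos hj, Fin.castSucc_lt_castSucc_iff]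
        apply hf
        simp only [Fin.lt_def] at hij ⊢
        exact hij
      · have hi : (i : ℕ) < lis σ := by
          have := j.2; simp only [Fin.lt_def] at hij; omega
        simp only [dif_pos hi, dif_neg hj]
        exact Fin.castSucc_lt_last _
    · by_cases hj : (j : ℕ) < lis σ
      · have hi : (i : ℕ) < lis σ := lt_trans (by simpa only [Fin.lt_def] using hij) hj
        simp only [dif_pos hi, dif_pos hj, ext_true_castSucc, Fin.castSucc_lt_castSucc_iff]
        apply hfv
        simp only [Fin.lt_def] at hij ⊢
        exact hij
      · have hi : (i : ℕ) < lis σ := by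
          have := j.2; simp only [Fin.lt_def] at hij; omega
        simp only [dif_pos hi, dif_neg hj, ext_true_castSucc, ext_true_last]
        exact Fin.castSucc_lt_last _

lemma lis_ext_false {n : ℕ} (hn : 1 ≤ n) (σ : Equiv.Perm (Fin n)) :
    lis (ext' σ false) = lis σ := by
  apply le_antisymm
  · by_contra hcon
    push_neg at hcon
    have h1 : 1 ≤ lis σ := one_le_lis hn σ
    obtain ⟨s, hs⟩ : ∃ s, lis σ = s + 1 := ⟨lis σ - 1, by omega⟩
    have h2 : IncProp (ext' σ false) (s + 2) :=
      incProp_mono (lis_spec _) (by omega)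
    have := le_lis (step_false h2)
    omega
  · obtain ⟨f, hf, hfv⟩ := lis_spec σ
    apply le_lis
    refine ⟨fun i => (f i).castSucc, fun i j hij => ?_, fun i j hij => ?_⟩
    · exact Fin.castSucc_lt_castSucc_iff.mpr (hf i j hij)
    · rw [ext_false_castSucc, ext_false_castSucc, Fin.succ_lt_succ_iff]
      exact hfv i j hij


lemma ext_true_def {n : ℕ} (σ : Equiv.Perm (Fin n)) : ext' σ true = emax σ := rfl

lemma ext_of_emax {n : ℕ} (σ : Equiv.Perm (Fin n)) :
    ext' σ false = finRotate (n+1) * emax σ := rfl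


lemma ext_lt_iff {n : ℕ} (σ : Equiv.Perm (Fin n)) (b : Bool) (x y : Fin n) :
    ext' σ b (Fin.castSucc x) < ext' σ b (Fin.castSucc y) ↔ σ x < σ y := by
  cases b <;>
    simp [Fin.succ_lt_succ_iff, Fin.castSucc_lt_castSucc_iff]

lemma lt_last_of_ne {n : ℕ} {i : Fin (n+1)} (h : i ≠ Fin.last n) : i < Fin.last n :=
  lt_of_le_of_ne (Fin.le_last i) h

lemma avoids312_ext {n : ℕ} (σ : Equiv.Perm (Fin n)) (b : Bool) :
    Avoids312 (ext' σ b) ↔ Avoids312 σ := by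
  unfold Avoids312
  constructor
  · intro h hex
    apply h
    obtain ⟨i, j, k, h1, h2, h3, h4⟩ := hex
    exact ⟨i.castSucc, j.castSucc, k.castSucc, Fin.castSucc_lt_castSucc_iff.mpr h1,
      Fin.castSucc_lt_castSucc_iff.mpr h2, (ext_lt_iff σ b j k).mpr h3, (ext_lt_iff σ b k i).mpr h4⟩
  · intro h hex
    apply h
    obtain ⟨i, j, k, h1, h2, h3, h4⟩ := hex
    by_cases hk : k = Fin.last n
    · exfalso
      subst hk
      cases b
      · rw [ext_false_last] at h3; exact Fin.not_lt_zero _ h3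
      · rw [ext_true_last] at h4; exact absurd (h4.trans_le (Fin.le_last _)) (lt_irrefl _)
    · have hj : j ≠ Fin.last n := Fin.ne_last_of_lt h2
      have hi : i ≠ Fin.last n := Fin.ne_last_of_lt (h1.trans h2)
      refine ⟨i.castPred hi, j.castPred hj, k.castPred hk,
        Fin.castSucc_lt_castSucc_iff.mp (by rw [Fin.castSucc_castPred, Fin.castSucc_castPred]; exact h1),
        Fin.castSucc_lt_castSucc_iff.mp (by rw [Fin.castSucc_castPred, Fin.castSucc_castPred]; exact h2),
        (ext_lt_iff σ b _ _).mp (by rw [Fin.castSucc_castPred, Fin.castSucc_castPred]; exact h3),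
        (ext_lt_iff σ b _ _).mp (by rw [Fin.castSucc_castPred, Fin.castSucc_castPred]; exact h4)⟩

lemma avoids132_ext {n : ℕ} (σ : Equiv.Perm (Fin n)) (b : Bool) :
    Avoids132 (ext' σ b) ↔ Avoids132 σ := by
  unfold Avoids132
  constructor
  · intro h hex
    apply h
    obtain ⟨i, j, k, h1, h2, h3, h4⟩ := hex
    exact ⟨i.castSucc, j.castSucc, k.castSucc, Fin.castSucc_lt_castSucc_iff.mpr h1,
      Fin.castSucc_lt_castSucc_iff.mpr h2, (ext_lt_iff σ b i k).mpr h3, (ext_lt_iff σ b k j).mpr h4⟩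
  · intro h hex
    apply h
    obtain ⟨i, j, k, h1, h2, h3, h4⟩ := hex
    by_cases hk : k = Fin.last n
    · exfalso
      subst hk
      cases b
      · rw [ext_false_last] at h3; exact Fin.not_lt_zero _ h3
      · rw [ext_true_last] at h4; exact absurd (h4.trans_le (Fin.le_last _)) (lt_irrefl _)
    · have hj : j ≠ Fin.last n := Fin.ne_last_of_lt h2
      have hi : i ≠ Fin.last n := Fin.ne_last_of_lt (h1.trans h2)
      refine ⟨i.castPred hi, j.castPred hj, k.castPred hk,
        Fin.castSucc_lt_castSucc_iff.mp (by rw [Fin.castSucc_castPred, Fin.castSucc_castPred]; exact h1),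
        Fin.castSucc_lt_castSucc_iff.mp (by rw [Fin.castSucc_castPred, Fin.castSucc_castPred]; exact h2),
        (ext_lt_iff σ b _ _).mp (by rw [Fin.castSucc_castPred, Fin.castSucc_castPred]; exact h3),
        (ext_lt_iff σ b _ _).mp (by rw [Fin.castSucc_castPred, Fin.castSucc_castPred]; exact h4)⟩

lemma last_val {n : ℕ} (τ : Equiv.Perm (Fin (n+1))) (h312 : Avoids312 τ) (h132 : Avoids132 τ) :
    τ (Fin.last n) = 0 ∨ τ (Fin.last n) = Fin.last n := by
  rcases Nat.eq_zero_or_pos n with hn | hn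
  · subst hn; left; exact Fin.ext (by omega)
  by_contra hc
  push_neg at hc
  obtain ⟨h0, hl⟩ := hc
  set a := τ.symm 0 with ha_def
  set b := τ.symm (Fin.last n) with hb_def
  have hτa : τ a = 0 := τ.apply_symm_apply 0
  have hτb : τ b = Fin.last n := τ.apply_symm_apply _
  have ha : a ≠ Fin.last n := fun h => h0 (h ▸ hτa)
  have hb : b ≠ Fin.last n := fun h => hl (h ▸ hτb)
  have hab : a ≠ b := fun h => by
    have : (0 : Fin (n+1)) = Fin.last n := by rw [← hτa, h, hτb]
    simp only [Fin.ext_iff, Fin.val_zero, Fin.val_last] at this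
    omega
  have hpos : (0 : Fin (n+1)) < τ (Fin.last n) := Fin.pos_of_ne_zero h0
  have hlt : τ (Fin.last n) < Fin.last n := lt_last_of_ne hl
  rcases lt_or_gt_of_ne hab with h | h
  · exact h132 ⟨a, b, Fin.last n, h, lt_last_of_ne hb, by rw [hτa]; exact hpos,
      by rw [hτb]; exact hlt⟩
  · exact h312 ⟨b, a, Fin.last n, h, lt_last_of_ne ha, by rw [hτa]; exact hpos,
      by rw [hτb]; exact hlt⟩

lemma exists_emax {n : ℕ} (τ : Equiv.Perm (Fin (n+1))) (h : τ (Fin.last n) = Fin.last n) :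
    ∃ σ : Equiv.Perm (Fin n), emax σ = τ := by
  set e : Equiv.Perm (Option (Fin n)) := finSuccEquivLast.permCongr τ with he
  refine ⟨Equiv.removeNone e, Equiv.ext fun x => ?_⟩
  refine Fin.lastCases ?_ (fun i => ?_) x
  · rw [emax_last, h]
  · have hne : τ i.castSucc ≠ Fin.last n := by
      intro hc
      have := τ.injective (hc.trans h.symm)
      exact absurd this (Fin.ne_last_of_lt (Fin.castSucc_lt_last i))
    have hsome : e (some i) = some ((τ i.castSucc).castPred hne) := by
      rw [he]
      simp only [Equiv.permCongr_apply, Equiv.symm_symm]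
      rw [finSuccEquivLast_symm_some]
      conv_lhs => rw [← Fin.castSucc_castPred (τ i.castSucc) hne]
      rw [finSuccEquivLast_castSucc]
    have h2 : some (Equiv.removeNone e i) = e (some i) :=
      Equiv.removeNone_some e ⟨_, hsome⟩
    rw [hsome] at h2
    have h3 : Equiv.removeNone e i = (τ i.castSucc).castPred hne := Option.some_injective _ h2
    rw [emax_castSucc, h3, Fin.castSucc_castPred]

lemma exists_ext {n : ℕ} (τ : Equiv.Perm (Fin (n+1)))
    (h : τ (Fin.last n) = 0 ∨ τ (Fin.last n) = Fin.last n) :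
    ∃ (σ : Equiv.Perm (Fin n)) (b : Bool), ext' σ b = τ := by
  rcases h with h | h
  · set ρ : Equiv.Perm (Fin (n+1)) := (finRotate (n+1))⁻¹ * τ with hρ
    have hρlast : ρ (Fin.last n) = Fin.last n := by
      rw [hρ]
      simp only [Equiv.Perm.mul_apply, h]
      rw [← finRotate_last (n := n)]
      exact Equiv.symm_apply_apply _ _
    obtain ⟨σ, hσ⟩ := exists_emax ρ hρlast
    refine ⟨σ, false, ?_⟩
    rw [ext_of_emax, hσ, hρ, mul_inv_cancel_left]
  · obtain ⟨σ, hσ⟩ := exists_emax τ h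
    exact ⟨σ, true, by rw [ext_true_def, hσ]⟩

lemma ext_inj {n : ℕ}  (hn : 1 ≤ n) (p q : Equiv.Perm (Fin n) × Bool)
    (h : ext' p.1 p.2 = ext' q.1 q.2) : p = q := by
  obtain ⟨σ, b⟩ := p
  obtain ⟨σ', b'⟩ := q
  have hlast : (0 : Fin (n+1)) ≠ Fin.last n := by
    intro hc
    have := congrArg Fin.val hc
    simp only [Fin.val_zero, Fin.val_last] at this
    omega
  have hb : b = b' := by
    cases b <;> cases b' <;> first
      | rfl
      | · exfalso
          have := congrFun (congrArg (fun e => e.toFun) h) (Fin.last n)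
          simp only [Equiv.toFun_as_coe] at this
          first
            | (rw [ext_false_last, ext_true_last] at this; exact hlast this)
            | (rw [ext_true_last, ext_false_last] at this; exact hlast this.symm)
  subst hb
  have hσ : σ = σ' := by
    apply Equiv.ext
    intro i
    have := congrFun (congrArg (fun e => e.toFun) h) (Fin.castSucc i)
    simp only [Equiv.toFun_as_coe] at this
    cases b
    · rw [ext_false_castSucc, ext_false_castSucc] at this
      exact Fin.succ_injective _ this
    · rw [ext_true_castSucc, ext_true_castSucc] at this
      exact Fin.castSucc_injective _ this
  rw [hσ]

def filt (n : ℕ) : Finset (Equiv.Perm (Fin n)) :=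
  Finset.univ.filter (fun σ => Avoids312 σ ∧ Avoids132 σ)

lemma filt_succ (n : ℕ) :
    filt (n+1) = image (fun p : Equiv.Perm (Fin n) × Bool => ext' p.1 p.2) (filt n ×ˢ univ) := by
  ext τ
  simp only [filt, mem_filter, mem_univ, true_and, mem_image, mem_product, and_true]
  constructor
  · rintro ⟨h1, h2⟩
    obtain ⟨σ, b, rfl⟩ := exists_ext τ (last_val τ h1 h2)
    exact ⟨(σ, b), ⟨(avoids312_ext σ b).mp h1, (avoids132_ext σ b).mp h2⟩, rfl⟩
  · rintro ⟨⟨σ, b⟩, ⟨hσ1, hσ2⟩, rfl⟩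
    exact ⟨(avoids312_ext σ b).mpr hσ1, (avoids132_ext σ b).mpr hσ2⟩

lemma sum_filt_succ (n : ℕ) (hn : 1 ≤ n) (F : ℕ → ℚ) :
    ∑ τ ∈ filt (n+1), F (lis τ) = ∑ σ ∈ filt n, (F (lis σ) + F (lis σ + 1)) := by
  rw [filt_succ, Finset.sum_image (fun p _ q _ h => ext_inj hn p q h), Finset.sum_product]
  refine Finset.sum_congr rfl fun σ _ => ?_
  rw [Fintype.sum_bool, lis_ext_true, lis_ext_false hn]
  exact add_comm _ _

lemma key (n : ℕ) (hn : 1 ≤ n) :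
    (∑ _σ ∈ filt n, (1:ℚ)) = 2^(n-1) ∧
    (∑ σ ∈ filt n, (lis σ : ℚ)) = 2^(n-1) * ((n:ℚ)+1) / 2 ∧
    (∑ σ ∈ filt n, (lis σ : ℚ)^2) = 2^(n-1) * ((n:ℚ) * ((n:ℚ)+3)) / 4 := by
  induction n, hn using Nat.le_induction with
  | base =>
    have hall : ∀ σ : Equiv.Perm (Fin 1), σ ∈ filt 1 := by
      intro σ
      refine mem_filter.mpr ⟨mem_univ _, ?_, ?_⟩ <;>
        · rintro ⟨i, j, k, h1, -⟩
          have := i.2; have := j.2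
          simp only [Fin.lt_def] at h1
          omega
    have hfilt : filt 1 = Finset.univ := Finset.eq_univ_iff_forall.mpr hall
    have hlis : ∀ σ : Equiv.Perm (Fin 1), lis σ = 1 :=
      fun σ => le_antisymm (lis_le σ) (one_le_lis le_rfl σ)
    have hcard : (Finset.univ : Finset (Equiv.Perm (Fin 1))).card = 1 := by
      simp [Finset.card_univ]
    refine ⟨?_, ?_, ?_⟩
    · rw [hfilt, Finset.sum_const, hcard]
      norm_num
    · rw [hfilt, Finset.sum_congr rfl (fun σ _ => by rw [hlis σ]; norm_num : ∀ σ ∈ (univ : Finset (Equiv.Perm (Fin 1))), (lis σ : ℚ) = 1),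
        Finset.sum_const, hcard]
      norm_num
    · rw [hfilt, Finset.sum_congr rfl (fun σ _ => by rw [hlis σ]; norm_num : ∀ σ ∈ (univ : Finset (Equiv.Perm (Fin 1))), (lis σ : ℚ)^2 = 1),
        Finset.sum_const, hcard]
      norm_num
  | succ n hn ih =>
    obtain ⟨ih1, ih2, ih3⟩ := ih
    have e2 : (2:ℚ)^(n+1-1) = 2 * 2^(n-1) := by
      obtain ⟨k, rfl⟩ : ∃ k, n = k+1 := ⟨n-1, by omega⟩
      simp only [Nat.add_sub_cancel]
      rw [pow_succ]
      ring
    have hc : ((n:ℚ)+1) = ((n+1 : ℕ) : ℚ) := by push_cast; ring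
    refine ⟨?_, ?_, ?_⟩
    · have e := sum_filt_succ n hn (fun _ => (1:ℚ))
      rw [e, Finset.sum_add_distrib, ih1, e2]
      ring
    · have e := sum_filt_succ n hn (fun k => (k:ℚ))
      rw [e]
      have expand : ∀ σ : Equiv.Perm (Fin n), ((lis σ : ℚ)) + ((lis σ + 1 : ℕ) : ℚ)
          = 2*(lis σ:ℚ) + 1 := by intro σ; push_cast; ring
      rw [Finset.sum_congr rfl (fun σ _ => expand σ), Finset.sum_add_distrib,
        ← Finset.mul_sum, ih1, ih2, e2]
      push_cast
      ring
    · have e := sum_filt_succ n hn (fun k => (k:ℚ)^2)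
      rw [e]
      have expand : ∀ σ : Equiv.Perm (Fin n), ((lis σ : ℚ))^2 + ((lis σ + 1 : ℕ) : ℚ)^2
          = 2*(lis σ:ℚ)^2 + (2*(lis σ:ℚ) + 1) := by intro σ; push_cast; ring
      rw [Finset.sum_congr rfl (fun σ _ => expand σ), Finset.sum_add_distrib,
        Finset.sum_add_distrib, ← Finset.mul_sum, ← Finset.mul_sum, ih1, ih2, ih3, e2]
      push_cast
      ring


/-- the sum of `L(σ)²` over `S_n(312,132)` equals `2^(n-1)·n(n+3)/4`. -/
theorem stmt_7 (n : ℕ) (hn : 1 ≤ n) :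
    ∑ σ ∈ Finset.univ.filter (fun σ : Equiv.Perm (Fin n) => Avoids312 σ ∧ Avoids132 σ),
        (lis σ : ℚ) ^ 2
      = 2 ^ (n - 1) * ((n : ℚ) * (n + 3)) / 4 := by
  exact (key n hn).2.2
end

section
/- For every n ≥ 1, the sum over all permutations σ of {1,...,n} avoiding both 312 and 213 of L(σ) equals 2^{n-1}·(n+1)/2; in particular the expected longest increasing subsequence length on S_n(312,213) equals (n+1)/2. -/
open Finset


variable {n : ℕ}

/-- Position (0-indexed) assigned to value `v` by the unimodal permutation built from
the "up-set" `S`. -/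
def posOf (S : Finset (Fin n)) (v : Fin n) : ℕ :=
  if v ∈ S then (S.filter (· < v)).card else n - 1 - ((Sᶜ.filter (· < v)).card)

lemma posOf_lt_card {S : Finset (Fin n)} {v : Fin n} (hv : v ∈ S) : posOf S v < S.card := by
  rw [posOf, if_pos hv]
  exact Finset.card_lt_card ⟨Finset.filter_subset _ _, fun h => by
    have := h hv; simp at this⟩

lemma posOf_ge {S : Finset (Fin n)} {v : Fin n} (hv : v ∉ S) : S.card ≤ posOf S v := by
  rw [posOf, if_neg hv]
  have h1 : (Sᶜ.filter (· < v)).card < Sᶜ.card :=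
    Finset.card_lt_card ⟨Finset.filter_subset _ _, fun h => by
      have := h (by simpa using hv); simp at this⟩
  have h2 : Sᶜ.card = n - S.card := by
    rw [Finset.card_compl, Fintype.card_fin]
  have h3 : S.card ≤ n := by
    simpa using Finset.card_le_card (Finset.subset_univ S)
  omega

lemma posOf_lt_n (hn : 0 < n) (S : Finset (Fin n)) (v : Fin n) : posOf S v < n := by
  by_cases hv : v ∈ S
  · exact lt_of_lt_of_le (posOf_lt_card hv) (by simpa using Finset.card_le_card (Finset.subset_univ S))
  · rw [posOf, if_neg hv]; omega

lemma posOf_mono {S : Finset (Fin n)} {v w : Fin n} (hv : v ∈ S) (hw : w ∈ S) (hvw : v < w) :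
    posOf S v < posOf S w := by
  rw [posOf, if_pos hv, posOf, if_pos hw]
  apply Finset.card_lt_card
  constructor
  · intro u hu
    simp only [Finset.mem_filter] at hu ⊢
    exact ⟨hu.1, lt_trans hu.2 hvw⟩
  · intro h
    have := h (Finset.mem_filter.2 ⟨hv, by simpa using hvw⟩)
    simp only [Finset.mem_filter] at this
    exact absurd this.2 (lt_irrefl v)

lemma posOf_anti {S : Finset (Fin n)} {v w : Fin n} (hv : v ∉ S) (hw : w ∉ S) (hvw : v < w) :
    posOf S w < posOf S v := by
  rw [posOf, if_neg hw, posOf, if_neg hv]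
  have hcv : (Sᶜ.filter (· < v)).card < (Sᶜ.filter (· < w)).card := by
    apply Finset.card_lt_card
    constructor
    · intro u hu
      simp only [Finset.mem_filter] at hu ⊢
      exact ⟨hu.1, lt_trans hu.2 hvw⟩
    · intro h
      have := h (Finset.mem_filter.2 ⟨by simpa using hv, by simpa using hvw⟩)
      simp only [Finset.mem_filter] at this
      exact absurd this.2 (lt_irrefl v)
  have h1 : (Sᶜ.filter (· < w)).card < Sᶜ.card :=
    Finset.card_lt_card ⟨Finset.filter_subset _ _, fun h => by
      have := h (by simpa using hw); simp at this⟩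
  have h2 : Sᶜ.card ≤ n := by
    simpa using Finset.card_le_card (Finset.subset_univ Sᶜ)
  omega

lemma posOf_injective {S : Finset (Fin n)} : Function.Injective (posOf S) := by
  intro v w h
  by_contra hne
  rcases lt_or_gt_of_ne (fun e => hne e) with hvw | hvw
  all_goals {
    by_cases hv : v ∈ S <;> by_cases hw : w ∈ S
    · first
      | exact absurd h (ne_of_lt (posOf_mono hv hw hvw))
      | exact absurd h.symm (ne_of_lt (posOf_mono hw hv hvw))
    · have := posOf_lt_card hv; have := posOf_ge hw; omega
    · have := posOf_lt_card hw; have := posOf_ge hv; omega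
    · first
      | exact absurd h.symm (ne_of_lt (posOf_anti hv hw hvw))
      | exact absurd h (ne_of_lt (posOf_anti hw hv hvw))
  }

/-- The unimodal permutation (positions → values) determined by the up-set `S`. -/
noncomputable def permOf (hn : 0 < n) (S : Finset (Fin n)) : Equiv.Perm (Fin n) :=
  (Equiv.ofBijective (fun v => (⟨posOf S v, posOf_lt_n hn S v⟩ : Fin n))
    ((Finite.injective_iff_bijective).1 (fun v w h => posOf_injective (by
      simpa [Fin.ext_iff] using h)))).symm

lemma permOf_eq_iff (hn : 0 < n) (S : Finset (Fin n)) (p v : Fin n) :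
    permOf hn S p = v ↔ posOf S v = p.val := by
  rw [permOf, Equiv.symm_apply_eq]
  simp [Equiv.ofBijective, Fin.ext_iff]
  exact comm

lemma posOf_permOf (hn : 0 < n) (S : Finset (Fin n)) (p : Fin n) :
    posOf S (permOf hn S p) = p.val := (permOf_eq_iff hn S p _).1 rfl

lemma mem_iff_posOf_lt {S : Finset (Fin n)} {v : Fin n} : v ∈ S ↔ posOf S v < S.card := by
  constructor
  · exact posOf_lt_card
  · intro h; by_contra hv; exact absurd h (not_lt.2 (posOf_ge hv))

lemma permOf_mem (hn : 0 < n) (S : Finset (Fin n)) (p : Fin n) (hp : p.val < S.card) :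
    permOf hn S p ∈ S := mem_iff_posOf_lt.2 (by rw [posOf_permOf]; exact hp)

lemma permOf_not_mem (hn : 0 < n) (S : Finset (Fin n)) (p : Fin n) (hp : S.card ≤ p.val) :
    permOf hn S p ∉ S := fun h => by
  have := posOf_lt_card h; rw [posOf_permOf] at this; omega

lemma permOf_up_mono (hn : 0 < n) (S : Finset (Fin n)) {p q : Fin n}
    (hpq : p < q) (hq : q.val < S.card) : permOf hn S p < permOf hn S q := by
  have hp : p.val < S.card := lt_trans hpq hq
  have hvp := permOf_mem hn S p hp
  have hvq := permOf_mem hn S q hq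
  rcases lt_trichotomy (permOf hn S p) (permOf hn S q) with h | h | h
  · exact h
  · exact absurd ((permOf hn S).injective h) (ne_of_lt hpq)
  · exfalso
    have := posOf_mono hvq hvp h
    rw [posOf_permOf, posOf_permOf] at this
    exact absurd hpq (not_lt.2 (le_of_lt (by exact_mod_cast this)))

lemma permOf_down_anti (hn : 0 < n) (S : Finset (Fin n)) {p q : Fin n}
    (hp : S.card ≤ p.val) (hpq : p < q) : permOf hn S q < permOf hn S p := by
  have hq : S.card ≤ q.val := le_trans hp (le_of_lt hpq)
  have hvp := permOf_not_mem hn S p hp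
  have hvq := permOf_not_mem hn S q hq
  rcases lt_trichotomy (permOf hn S q) (permOf hn S p) with h | h | h
  · exact h
  · exact absurd ((permOf hn S).injective h) (ne_of_gt hpq)
  · exfalso
    have := posOf_anti hvp hvq h
    rw [posOf_permOf, posOf_permOf] at this
    exact absurd hpq (not_lt.2 (le_of_lt (by exact_mod_cast this)))


lemma permOf_avoids (hn : 0 < n) (S : Finset (Fin n)) :
    Avoids312 (permOf hn S) ∧ Avoids213 (permOf hn S) := by
  constructor
  · rintro ⟨i, j, k, hij, hjk, h1, h2⟩
    by_cases hj : j.val < S.card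
    · exact absurd (permOf_up_mono hn S hij hj) (not_lt.2 (le_of_lt (lt_trans h1 h2)))
    · have hk : S.card ≤ k.val := by push_neg at hj; omega
      exact absurd (permOf_down_anti hn S (not_lt.1 hj) hjk) (not_lt.2 (le_of_lt h1))
  · rintro ⟨i, j, k, hij, hjk, h1, h2⟩
    by_cases hj : j.val < S.card
    · exact absurd (permOf_up_mono hn S hij hj) (not_lt.2 (le_of_lt h1))
    · exact absurd (permOf_down_anti hn S (not_lt.1 hj) hjk) (not_lt.2 (le_of_lt (lt_trans h1 h2)))

/-- The maximal element of `Fin n`. -/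
def topF (hn : 0 < n) : Fin n := ⟨n - 1, by omega⟩

lemma le_topF (hn : 0 < n) (v : Fin n) : v ≤ topF hn := by
  have := v.isLt; exact Fin.mk_le_of_le_val (by simp [topF]; omega)

lemma lt_topF (hn : 0 < n) {v : Fin n} (hv : v ≠ topF hn) : v < topF hn :=
  lt_of_le_of_ne (le_topF hn v) hv

/-- The up-set of a permutation: values appearing no later than the max value. -/
def SOf (hn : 0 < n) (σ : Equiv.Perm (Fin n)) : Finset (Fin n) :=
  Finset.univ.filter (fun v => σ.symm v ≤ σ.symm (topF hn))

lemma topF_mem_SOf (hn : 0 < n) (σ : Equiv.Perm (Fin n)) : topF hn ∈ SOf hn σ := by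
  simp [SOf]

lemma avoid_up_mono (hn : 0 < n) {σ : Equiv.Perm (Fin n)}
    (h : Avoids312 σ ∧ Avoids213 σ) {p q : Fin n}
    (hpq : p < q) (hq : q ≤ σ.symm (topF hn)) : σ p < σ q := by
  rcases lt_or_eq_of_le hq with hq | hq
  · rcases lt_trichotomy (σ p) (σ q) with h1 | h1 | h1
    · exact h1
    · exact absurd (σ.injective h1) (ne_of_lt hpq)
    · exfalso
      refine h.2 ⟨p, q, σ.symm (topF hn), hpq, hq, h1, ?_⟩
      rw [Equiv.apply_symm_apply]
      refine lt_topF hn (fun e => ?_)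
      have hpe : p = σ.symm (topF hn) := by rw [← e]; simp
      rw [hpe] at hpq
      exact absurd (lt_trans hpq hq) (lt_irrefl _)
  · subst hq
    rw [Equiv.apply_symm_apply]
    refine lt_topF hn (fun e => ?_)
    have hpe : p = σ.symm (topF hn) := by rw [← e]; simp
    rw [hpe] at hpq
    exact lt_irrefl _ hpq

lemma avoid_down_anti (hn : 0 < n) {σ : Equiv.Perm (Fin n)}
    (h : Avoids312 σ ∧ Avoids213 σ) {p q : Fin n}
    (hp : σ.symm (topF hn) ≤ p) (hpq : p < q) : σ q < σ p := by
  rcases lt_or_eq_of_le hp with hp | hp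
  · rcases lt_trichotomy (σ q) (σ p) with h1 | h1 | h1
    · exact h1
    · exact absurd (σ.injective h1) (ne_of_gt hpq)
    · exfalso
      refine h.1 ⟨σ.symm (topF hn), p, q, hp, hpq, h1, ?_⟩
      rw [Equiv.apply_symm_apply]
      refine lt_topF hn (fun e => ?_)
      have hqe : q = σ.symm (topF hn) := by rw [← e]; simp
      rw [hqe] at hpq
      exact absurd hpq (not_lt.2 (le_of_lt hp))
  · rw [← hp, Equiv.apply_symm_apply]
    refine lt_topF hn (fun e => ?_)
    have hqe : q = σ.symm (topF hn) := by rw [← e]; simp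
    rw [hqe, ← hp] at hpq
    exact lt_irrefl _ hpq


lemma posOf_SOf (hn : 0 < n) {σ : Equiv.Perm (Fin n)}
    (h : Avoids312 σ ∧ Avoids213 σ) (v : Fin n) :
    posOf (SOf hn σ) v = (σ.symm v).val := by
  by_cases hv : v ∈ SOf hn σ
  · rw [posOf, if_pos hv]
    have hset : (SOf hn σ).filter (· < v) = (Finset.Iio (σ.symm v)).image σ := by
      ext u
      simp only [Finset.mem_filter, Finset.mem_image, Finset.mem_Iio, SOf,
        Finset.mem_univ, true_and] at *
      constructor
      · rintro ⟨hu1, hu2⟩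
        refine ⟨σ.symm u, ?_, by simp⟩
        rcases lt_trichotomy (σ.symm u) (σ.symm v) with h1 | h1 | h1
        · exact h1
        · exact absurd (by rw [← σ.apply_symm_apply u, ← σ.apply_symm_apply v, h1])
            (ne_of_lt hu2)
        · have := avoid_up_mono hn h h1 hu1
          rw [σ.apply_symm_apply, σ.apply_symm_apply] at this
          exact absurd hu2 (not_lt.2 (le_of_lt this))
      · rintro ⟨p, hp, rfl⟩
        have hvS : σ.symm v ≤ σ.symm (topF hn) := by simpa [SOf] using hv
        have := avoid_up_mono hn h hp hvS
        rw [σ.apply_symm_apply] at this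
        exact ⟨by simp; exact le_trans (le_of_lt hp) hvS, this⟩
    rw [hset, Finset.card_image_of_injective _ σ.injective, Fin.card_Iio]
  · rw [posOf, if_neg hv]
    have hvS : σ.symm (topF hn) < σ.symm v := by
      simpa [SOf] using hv
    have hset : (SOf hn σ)ᶜ.filter (· < v) = (Finset.Ioi (σ.symm v)).image σ := by
      ext u
      simp only [Finset.mem_filter, Finset.mem_image, Finset.mem_Ioi, Finset.mem_compl,
        SOf, Finset.mem_univ, true_and, not_le] at *
      constructor
      · rintro ⟨hu1, hu2⟩
        refine ⟨σ.symm u, ?_, by simp⟩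
        rcases lt_trichotomy (σ.symm v) (σ.symm u) with h1 | h1 | h1
        · exact h1
        · exact absurd (by rw [← σ.apply_symm_apply u, ← σ.apply_symm_apply v, h1])
            (ne_of_gt hu2)
        · have := avoid_down_anti hn h (le_of_lt hu1) h1
          rw [σ.apply_symm_apply, σ.apply_symm_apply] at this
          exact absurd hu2 (not_lt.2 (le_of_lt this))
      · rintro ⟨p, hp, rfl⟩
        have := avoid_down_anti hn h (le_of_lt hvS) hp
        rw [σ.apply_symm_apply] at this
        refine ⟨?_, this⟩
        rw [Equiv.symm_apply_apply]
        exact lt_trans hvS hp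
    rw [hset, Finset.card_image_of_injective _ σ.injective, Fin.card_Ioi]
    have := (σ.symm v).isLt
    omega

lemma permOf_SOf (hn : 0 < n) {σ : Equiv.Perm (Fin n)}
    (h : Avoids312 σ ∧ Avoids213 σ) : permOf hn (SOf hn σ) = σ := by
  apply Equiv.ext
  intro p
  rw [permOf_eq_iff, posOf_SOf hn h, Equiv.symm_apply_apply]

lemma permOf_symm_apply (hn : 0 < n) (S : Finset (Fin n)) (v : Fin n) :
    ((permOf hn S).symm v).val = posOf S v := by
  rw [permOf, Equiv.symm_symm]
  rfl

lemma posOf_topF (hn : 0 < n) {S : Finset (Fin n)} (hS : topF hn ∈ S) :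
    posOf S (topF hn) = S.card - 1 := by
  rw [posOf, if_pos hS]
  have : S.filter (· < topF hn) = S.erase (topF hn) := by
    ext u
    simp only [Finset.mem_filter, Finset.mem_erase]
    constructor
    · rintro ⟨h1, h2⟩; exact ⟨ne_of_lt h2, h1⟩
    · rintro ⟨h1, h2⟩; exact ⟨h2, lt_topF hn h1⟩
  rw [this, Finset.card_erase_of_mem hS]

lemma SOf_permOf (hn : 0 < n) {S : Finset (Fin n)} (hS : topF hn ∈ S) :
    SOf hn (permOf hn S) = S := by
  have hc : 1 ≤ S.card := Finset.card_pos.2 ⟨_, hS⟩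
  ext v
  simp only [SOf, Finset.mem_filter, Finset.mem_univ, true_and]
  rw [Fin.le_def, permOf_symm_apply, permOf_symm_apply, posOf_topF hn hS,
    mem_iff_posOf_lt]
  omega


lemma lis_permOf (hn : 0 < n) {S : Finset (Fin n)} (hS : topF hn ∈ S) :
    lis (permOf hn S) = S.card := by
  set σ := permOf hn S with hσdef
  have hcle : S.card ≤ n := by
    simpa using Finset.card_le_card (Finset.subset_univ S)
  have hc1 : 1 ≤ S.card := Finset.card_pos.2 ⟨_, hS⟩
  have hP : ∃ f : Fin S.card → Fin n,
      (∀ i j, i < j → f i < f j) ∧ (∀ i j, i < j → σ (f i) < σ (f j)) := by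
    refine ⟨fun i => ⟨i.val, lt_of_lt_of_le i.isLt hcle⟩, ?_, ?_⟩
    · intro i j hij
      exact Fin.mk_lt_mk.2 hij
    · intro i j hij
      exact permOf_up_mono hn S (Fin.mk_lt_mk.2 hij) j.isLt
  have hnotP : ¬ ∃ f : Fin (S.card + 1) → Fin n,
      (∀ i j, i < j → f i < f j) ∧ (∀ i j, i < j → σ (f i) < σ (f j)) := by
    rintro ⟨f, hf1, hf2⟩
    have hge : ∀ m (hm : m < S.card + 1), m ≤ (f ⟨m, hm⟩).val := by
      intro m
      induction m with
      | zero => intro hm; exact Nat.zero_le _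
      | succ k ih =>
        intro hm
        have hk := ih (by omega)
        have := hf1 ⟨k, by omega⟩ ⟨k + 1, hm⟩ (by simp [Fin.lt_def])
        rw [Fin.lt_def] at this
        omega
    set e : Fin (S.card + 1) := ⟨S.card, by omega⟩ with he
    have hfe : S.card ≤ (f e).val := hge S.card (by omega)
    by_cases hex : ∃ i : Fin (S.card + 1), i < e ∧ S.card ≤ (f i).val
    · obtain ⟨i, hie, hi⟩ := hex
      have h1 := hf2 i e hie
      have h2 := permOf_down_anti hn S hi (hf1 i e hie)
      exact absurd h1 (not_lt.2 (le_of_lt h2))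
    · push_neg at hex
      have hup : ∀ i : Fin (S.card + 1), i < e → (f i).val < S.card := by
        intro i hie
        by_contra hcon
        exact absurd (hex i hie) (by push_neg; omega)
      set w := σ (f e) with hw
      have hwS : w ∉ S := permOf_not_mem hn S (f e) hfe
      have hwtop : w ≠ topF hn := fun hcon => hwS (hcon ▸ hS)
      have hinj : S.card ≤ (S.filter (· < w)).card := by
        have := Finset.card_le_card_of_injOn
          (f := fun i : Fin S.card => σ (f i.castSucc))
          (s := Finset.univ) (t := S.filter (· < w)) ?_ ?_
        · simpa using this
        · intro i _
          have hie : (i.castSucc : Fin (S.card + 1)) < e := by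
            rw [Fin.lt_def]; exact i.isLt
          refine Finset.mem_filter.2 ⟨?_, ?_⟩
          · exact permOf_mem hn S _ (hup _ hie)
          · exact hf2 _ _ hie
        · intro i _ j _ hij
          by_contra hne
          rcases lt_or_gt_of_ne hne with h1 | h1
          · exact absurd hij (ne_of_lt (hf2 _ _ (Fin.castSucc_lt_castSucc_iff.2 h1)))
          · exact absurd hij.symm (ne_of_lt (hf2 _ _ (Fin.castSucc_lt_castSucc_iff.2 h1)))
      have hsub : S.filter (· < w) ⊆ S.erase (topF hn) := by
        intro u hu
        rw [Finset.mem_filter] at hu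
        refine Finset.mem_erase.2 ⟨?_, hu.1⟩
        exact ne_of_lt (lt_trans hu.2 (lt_topF hn hwtop))
      have := Finset.card_le_card hsub
      rw [Finset.card_erase_of_mem hS] at this
      omega
  rw [lis, Nat.findGreatest_eq_iff]
  refine ⟨hcle, fun _ => hP, fun m hm hmn => ?_⟩
  rintro ⟨f, hf1, hf2⟩
  refine hnotP ⟨fun i => f (Fin.castLE hm i), ?_, ?_⟩
  · intro i j hij
    exact hf1 _ _ (by rw [Fin.lt_def] at hij ⊢; exact hij)
  · intro i j hij
    exact hf2 _ _ (by rw [Fin.lt_def] at hij ⊢; exact hij)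


lemma sum_powerset_card' {α : Type*} [DecidableEq α] (A : Finset α) :
    ∑ T ∈ A.powerset, (T.card : ℚ) = A.card * 2 ^ A.card / 2 := by
  have h2 : ∑ T ∈ A.powerset, (T.card : ℚ)
      = ∑ T ∈ A.powerset, ((A \ T).card : ℚ) := by
    refine Finset.sum_bij' (fun T _ => A \ T) (fun T _ => A \ T) ?_ ?_ ?_ ?_ ?_
    · intro T hT
      exact Finset.mem_powerset.2 (Finset.sdiff_subset)
    · intro T hT
      exact Finset.mem_powerset.2 (Finset.sdiff_subset)
    · intro T hT
      exact Finset.sdiff_sdiff_eq_self (Finset.mem_powerset.1 hT)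
    · intro T hT
      exact Finset.sdiff_sdiff_eq_self (Finset.mem_powerset.1 hT)
    · intro T hT
      rw [Finset.sdiff_sdiff_eq_self (Finset.mem_powerset.1 hT)]
  have h3 : ∀ T ∈ A.powerset, ((A \ T).card : ℚ) = A.card - T.card := by
    intro T hT
    rw [Finset.card_sdiff_of_subset (Finset.mem_powerset.1 hT)]
    exact_mod_cast Nat.cast_sub (Finset.card_le_card (Finset.mem_powerset.1 hT))
  have h4 : ∑ T ∈ A.powerset, ((A \ T).card : ℚ)
      = ∑ T ∈ A.powerset, ((A.card : ℚ) - T.card) := Finset.sum_congr rfl h3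
  have h5 : ∑ T ∈ A.powerset, ((A.card : ℚ) - T.card)
      = (A.powerset.card : ℚ) * A.card - ∑ T ∈ A.powerset, (T.card : ℚ) := by
    rw [Finset.sum_sub_distrib, Finset.sum_const, nsmul_eq_mul]
  rw [Finset.card_powerset] at h5
  have : (2:ℚ) * ∑ T ∈ A.powerset, (T.card : ℚ) = 2 ^ A.card * A.card := by
    push_cast at h5
    linarith [h2, h4, h5]
  field_simp
  linarith [this]

/-- the sum of `L(σ)` over `S_n(312,213)` equals `2^(n-1)·(n+1)/2`. -/
theorem stmt_8 (n : ℕ) (hn : 1 ≤ n) :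
    ∑ σ ∈ Finset.univ.filter (fun σ : Equiv.Perm (Fin n) => Avoids312 σ ∧ Avoids213 σ),
        (lis σ : ℚ)
      = 2 ^ (n - 1) * ((n : ℚ) + 1) / 2 := by
  have hn0 : 0 < n := hn
  have himg : Finset.univ.filter (fun σ : Equiv.Perm (Fin n) => Avoids312 σ ∧ Avoids213 σ)
      = (Finset.univ.filter (fun S : Finset (Fin n) => topF hn0 ∈ S)).image (permOf hn0) := by
    ext σ
    simp only [Finset.mem_filter, Finset.mem_univ, true_and, Finset.mem_image]
    constructor
    · intro h
      exact ⟨SOf hn0 σ, topF_mem_SOf hn0 σ, permOf_SOf hn0 h⟩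
    · rintro ⟨S, hS, rfl⟩
      exact permOf_avoids hn0 S
  have hinj : ∀ S1 ∈ Finset.univ.filter (fun S : Finset (Fin n) => topF hn0 ∈ S),
      ∀ S2 ∈ Finset.univ.filter (fun S : Finset (Fin n) => topF hn0 ∈ S),
      permOf hn0 S1 = permOf hn0 S2 → S1 = S2 := by
    intro S1 h1 S2 h2 he
    rw [Finset.mem_filter] at h1 h2
    rw [← SOf_permOf hn0 h1.2, ← SOf_permOf hn0 h2.2, he]
  rw [himg, Finset.sum_image hinj]
  have hcard : ∀ S ∈ Finset.univ.filter (fun S : Finset (Fin n) => topF hn0 ∈ S),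
      (lis (permOf hn0 S) : ℚ) = (S.card : ℚ) := by
    intro S hS
    rw [Finset.mem_filter] at hS
    rw [lis_permOf hn0 hS.2]
  rw [Finset.sum_congr rfl hcard]
  -- now rewrite the index set as an image of a powerset
  set A : Finset (Fin n) := Finset.univ.erase (topF hn0) with hA
  have hAcard : A.card = n - 1 := by
    rw [hA, Finset.card_erase_of_mem (Finset.mem_univ _), Finset.card_univ, Fintype.card_fin]
  have hset : Finset.univ.filter (fun S : Finset (Fin n) => topF hn0 ∈ S)
      = A.powerset.image (insert (topF hn0)) := by
    ext S
    simp only [Finset.mem_filter, Finset.mem_univ, true_and, Finset.mem_image,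
      Finset.mem_powerset]
    constructor
    · intro hS
      refine ⟨S.erase (topF hn0), ?_, Finset.insert_erase hS⟩
      rw [hA]
      exact Finset.erase_subset_erase _ (Finset.subset_univ S)
    · rintro ⟨T, hT, rfl⟩
      exact Finset.mem_insert_self _ _
  have hnotmem : ∀ T ∈ A.powerset, topF hn0 ∉ T := by
    intro T hT hc
    have := Finset.mem_powerset.1 hT hc
    rw [hA] at this
    exact (Finset.mem_erase.1 this).1 rfl
  have hinj2 : ∀ T1 ∈ A.powerset, ∀ T2 ∈ A.powerset,
      insert (topF hn0) T1 = insert (topF hn0) T2 → T1 = T2 := by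
    intro T1 h1 T2 h2 he
    rw [← Finset.erase_insert (hnotmem T1 h1), ← Finset.erase_insert (hnotmem T2 h2), he]
  rw [hset, Finset.sum_image hinj2]
  have hcard2 : ∀ T ∈ A.powerset,
      (((insert (topF hn0) T).card : ℚ)) = (T.card : ℚ) + 1 := by
    intro T hT
    rw [Finset.card_insert_of_notMem (hnotmem T hT)]
    push_cast
    ring
  rw [Finset.sum_congr rfl hcard2, Finset.sum_add_distrib, Finset.sum_const,
    Finset.card_powerset, sum_powerset_card', hAcard]
  have hc : ((n - 1 : ℕ) : ℚ) = (n : ℚ) - 1 := by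
    rw [Nat.cast_sub hn]; norm_num
  rw [hc]
  push_cast
  field_simp
  ring
end

section
/- For every n ≥ 1, the sum over all permutations σ of {1,...,n} avoiding both 312 and 231 of L(σ) equals 2^{n-1}·(n+1)/2; in particular the expected longest increasing subsequence length on S_n(312,231) equals (n+1)/2. -/
namespace Stmt9

open Finset

variable {n : ℕ}

def sF (S : Finset ℕ) : ℕ → ℕ
  | 0 => 0
  | (i+1) => if i ∈ S then sF S i else i+1

def eF (S : Finset ℕ) (n : ℕ) (i : ℕ) : ℕ :=
  if i < n-1 ∧ i ∈ S then eF S n (i+1) else i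
  termination_by n - 1 - i
  decreasing_by omega

lemma eF_eq (S : Finset ℕ) (n i : ℕ) :
    eF S n i = if i < n-1 ∧ i ∈ S then eF S n (i+1) else i := by
  rw [eF]

lemma sF_le (S : Finset ℕ) (i : ℕ) : sF S i ≤ i := by
  induction i with
  | zero => simp [sF]
  | succ i ih => rw [sF]; split <;> omega

lemma sF_mem (S : Finset ℕ) {i j : ℕ} (h1 : sF S i ≤ j) (h2 : j < i) : j ∈ S := by
  induction i with
  | zero => omega
  | succ i ih =>
    rw [sF] at h1
    split at h1
    · rcases Nat.lt_or_ge j i with h | h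
      · exact ih h1 h
      · have : j = i := by omega
        subst this; assumption
    · omega

lemma sF_succ_mem (S : Finset ℕ) {i : ℕ} (h : i ∈ S) : sF S (i+1) = sF S i := by
  rw [sF]; simp [h]

lemma sF_succ_not (S : Finset ℕ) {i : ℕ} (h : i ∉ S) : sF S (i+1) = i+1 := by
  rw [sF]; simp [h]

lemma sF_start (S : Finset ℕ) {i : ℕ} (h : 0 < sF S i) : (sF S i - 1) ∉ S := by
  induction i with
  | zero => simp [sF] at h
  | succ i ih =>
    by_cases hi : i ∈ S
    · rw [sF_succ_mem S hi] at h ⊢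
      exact ih h
    · rw [sF_succ_not S hi] at h ⊢
      simpa using hi

lemma eF_ge (S : Finset ℕ) (n i : ℕ) : i ≤ eF S n i := by
  rw [eF_eq]
  split
  · have := eF_ge S n (i+1); omega
  · omega
  termination_by n - 1 - i
  decreasing_by omega

lemma eF_le (S : Finset ℕ) (n : ℕ) {i : ℕ} (h : i ≤ n-1) : eF S n i ≤ n-1 := by
  rw [eF_eq]
  split
  · exact eF_le S n (by omega)
  · exact h
  termination_by n - 1 - i
  decreasing_by omega

lemma eF_mem (S : Finset ℕ) (n : ℕ) {i j : ℕ} (h1 : i ≤ j) (h2 : j < eF S n i) :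
    j < n-1 ∧ j ∈ S := by
  rw [eF_eq] at h2
  split at h2
  · rcases Nat.lt_or_ge i j with h | h
    · exact eF_mem S n h h2
    · have : j = i := by omega
      subst this; assumption
  · omega
  termination_by n - 1 - i
  decreasing_by
    rename_i hc _
    have := eF_ge S n (i+1)
    omega

lemma eF_end (S : Finset ℕ) (n i : ℕ) : ¬ (eF S n i < n-1 ∧ eF S n i ∈ S) := by
  rw [eF_eq]
  split
  · exact eF_end S n (i+1)
  · assumption
  termination_by n - 1 - i
  decreasing_by omega

lemma eF_le_of (S : Finset ℕ) (n : ℕ) {i j : ℕ} (h1 : j ≤ i) (h2 : ¬ (i < n-1 ∧ i ∈ S)) :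
    eF S n j ≤ i := by
  rw [eF_eq]
  split
  · rcases Nat.lt_or_ge j i with h | h
    · exact eF_le_of S n (by omega) h2
    · have : j = i := by omega
      subst this; exact absurd ‹_› h2
  · exact h1
  termination_by i - j

lemma sF_eq_of (S : Finset ℕ) {i j : ℕ} (h1 : sF S i ≤ j) (h2 : j ≤ i) : sF S j = sF S i := by
  induction i with
  | zero => have : j = 0 := by omega
            subst this; rfl
  | succ i ih =>
    rcases Nat.lt_or_ge j (i+1) with h | h
    · have hm : i ∈ S := sF_mem S (i := i+1) (j := i) (by omega) (by omega)
      rw [sF_succ_mem S hm] at h1 ⊢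
      exact ih h1 (by omega)
    · have : j = i+1 := by omega
      subst this; rfl

lemma sF_up (S : Finset ℕ) (n : ℕ) {i j : ℕ} (h1 : i ≤ j) (h2 : j ≤ eF S n i) :
    sF S j = sF S i := by
  rcases Nat.lt_or_ge i j with h | h
  · have hm : i < n-1 ∧ i ∈ S := eF_mem S n le_rfl (by omega)
    rw [show eF S n i = eF S n (i+1) by rw [eF_eq]; simp [hm]] at h2
    rw [← sF_succ_mem S hm.2]
    exact sF_up S n (by omega) h2
  · have : j = i := by omega
    subst this; rfl
  termination_by j - i

lemma s_blk (S : Finset ℕ) (n : ℕ) {i j : ℕ} (h1 : sF S i ≤ j) (h2 : j ≤ eF S n i) :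
    sF S j = sF S i := by
  rcases Nat.lt_or_ge j i with h | h
  · exact sF_eq_of S h1 (by omega)
  · exact sF_up S n h h2

lemma e_up (S : Finset ℕ) (n : ℕ) {i j : ℕ} (h1 : i ≤ j) (h2 : j ≤ eF S n i) :
    eF S n j = eF S n i := by
  rcases Nat.lt_or_ge i j with h | h
  · have hm : i < n-1 ∧ i ∈ S := eF_mem S n le_rfl (by omega)
    have he : eF S n i = eF S n (i+1) := by rw [eF_eq]; simp [hm]
    rw [he] at h2 ⊢
    exact e_up S n (by omega) h2
  · have : j = i := by omega
    subst this; rfl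
  termination_by j - i

lemma e_down (S : Finset ℕ) (n : ℕ) (hS : ∀ x ∈ S, x < n-1) {i j : ℕ}
    (h1 : sF S i ≤ j) (h2 : j ≤ i) : eF S n j = eF S n i := by
  rcases Nat.lt_or_ge j i with h | h
  · have hm : j ∈ S := sF_mem S h1 h
    have : eF S n j = eF S n (j+1) := by rw [eF_eq]; simp [hm, hS j hm]
    rw [this]
    exact e_down S n hS (by omega) (by omega)
  · have : j = i := by omega
    subst this; rfl
  termination_by i - j

lemma e_blk (S : Finset ℕ) (n : ℕ) (hS : ∀ x ∈ S, x < n-1) {i j : ℕ}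
    (h1 : sF S i ≤ j) (h2 : j ≤ eF S n i) : eF S n j = eF S n i := by
  rcases Nat.lt_or_ge j i with h | h
  · exact e_down S n hS h1 (by omega)
  · exact e_up S n h h2

def fF (S : Finset ℕ) (n i : ℕ) : ℕ := sF S i + eF S n i - i

lemma fF_ge (S : Finset ℕ) (n i : ℕ) : sF S i ≤ fF S n i := by
  have h1 := sF_le S i
  have h2 := eF_ge S n i
  unfold fF; omega

lemma fF_le (S : Finset ℕ) (n i : ℕ) : fF S n i ≤ eF S n i := by
  have h1 := sF_le S i
  have h2 := eF_ge S n i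
  unfold fF; omega

lemma fF_lt (S : Finset ℕ) (n : ℕ) {i : ℕ} (h : i < n) : fF S n i < n := by
  have := fF_le S n i
  have := eF_le S n (i := i) (by omega)
  omega

lemma fF_invol (S : Finset ℕ) (n : ℕ) (hS : ∀ x ∈ S, x < n-1) {i : ℕ} (h : i < n) :
    fF S n (fF S n i) = i := by
  have h1 := sF_le S i
  have h2 := eF_ge S n i
  have hg := fF_ge S n i
  have hl := fF_le S n i
  have hs : sF S (fF S n i) = sF S i := s_blk S n hg hl
  have he : eF S n (fF S n i) = eF S n i := e_blk S n hS hg hl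
  unfold fF at *
  omega


/-- the layered permutation with descent set `S` (intersected with `range (n-1)`). -/
def gPerm (n : ℕ) (S : Finset ℕ) : Equiv.Perm (Fin n) :=
  Function.Involutive.toPerm
    (fun i => ⟨fF (S.filter (· < n-1)) n i, fF_lt _ n i.isLt⟩)
    (by
      intro i
      apply Fin.ext
      exact fF_invol _ n (fun x hx => (Finset.mem_filter.mp hx).2) i.isLt)

lemma gPerm_apply (n : ℕ) (S : Finset ℕ) (i : Fin n) :
    (gPerm n S i : ℕ) = fF (S.filter (· < n-1)) n i := rfl

/-- extension of a permutation of `Fin n` to `ℕ`. -/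
def ext' (σ : Equiv.Perm (Fin n)) (i : ℕ) : ℕ :=
  if h : i < n then (σ ⟨i, h⟩ : ℕ) else i

lemma ext'_lt (σ : Equiv.Perm (Fin n)) {i : ℕ} (h : i < n) : ext' σ i < n := by
  rw [ext', dif_pos h]; exact (σ ⟨i, h⟩).isLt

lemma ext'_inj (σ : Equiv.Perm (Fin n)) {i j : ℕ} (hi : i < n) (hj : j < n)
    (h : ext' σ i = ext' σ j) : i = j := by
  rw [ext', dif_pos hi, ext', dif_pos hj] at h
  have := σ.injective (Fin.ext h : σ ⟨i, hi⟩ = σ ⟨j, hj⟩)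
  exact congrArg Fin.val this

lemma ext'_eq (σ : Equiv.Perm (Fin n)) {i : ℕ} (h : i < n) : ext' σ i = (σ ⟨i, h⟩ : ℕ) :=
  dif_pos h

lemma ext'_apply (σ : Equiv.Perm (Fin n)) (i : Fin n) : ext' σ i = (σ i : ℕ) := by
  rw [ext', dif_pos i.isLt]

/-- descent set -/
def Dset (σ : Equiv.Perm (Fin n)) : Finset ℕ :=
  (Finset.range (n-1)).filter (fun i => ext' σ (i+1) < ext' σ i)

lemma Dset_sub (σ : Equiv.Perm (Fin n)) : ∀ x ∈ Dset σ, x < n-1 := by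
  intro x hx
  exact Finset.mem_range.mp (Finset.mem_filter.mp hx).1

lemma ext'_gPerm (n : ℕ) (S : Finset ℕ) {i : ℕ} (h : i < n) :
    ext' (gPerm n S) i = fF (S.filter (· < n-1)) n i := by
  rw [ext', dif_pos h]
  exact gPerm_apply n S ⟨i, h⟩

lemma Dset_gPerm (n : ℕ) (S : Finset ℕ) (hS : ∀ x ∈ S, x < n-1) :
    Dset (gPerm n S) = S := by
  have hfil : S.filter (· < n-1) = S := Finset.filter_true_of_mem (by simpa using hS)
  ext i
  simp only [Dset, Finset.mem_filter, Finset.mem_range]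
  constructor
  · rintro ⟨h1, h2⟩
    rw [ext'_gPerm n S (by omega), ext'_gPerm n S (by omega), hfil] at h2
    by_contra hi
    have he : eF S n i = i := by rw [eF_eq]; simp [hi]
    have hs : sF S (i+1) = i+1 := sF_succ_not S hi
    have h3 := sF_le S i
    have h4 := eF_ge S n (i+1)
    unfold fF at h2
    omega
  · intro hi
    have h1 : i < n-1 := hS i hi
    refine ⟨h1, ?_⟩
    rw [ext'_gPerm n S (by omega), ext'_gPerm n S (by omega), hfil]
    have he : eF S n i = eF S n (i+1) := by rw [eF_eq]; simp [hi, h1]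
    have hs : sF S (i+1) = sF S i := sF_succ_mem S hi
    have h3 := sF_le S i
    have h4 := eF_ge S n (i+1)
    unfold fF
    omega

lemma fF_blocks (S : Finset ℕ) (n : ℕ) (hS : ∀ x ∈ S, x < n-1) {i j : ℕ}
    (hij : i < j) (hj : j < n) (he : eF S n i < j) : fF S n i < fF S n j := by
  have h1 : eF S n i < sF S j := by
    by_contra h
    have hm : eF S n i ∈ S := sF_mem S (by omega) he
    exact eF_end S n i ⟨hS _ hm, hm⟩
  have := fF_le S n i
  have := fF_ge S n j
  omega

lemma gPerm_avoids (n : ℕ) (S : Finset ℕ) :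
    Avoids312 (gPerm n S) ∧ Avoids231 (gPerm n S) := by
  set T := S.filter (· < n-1) with hT
  have hS : ∀ x ∈ T, x < n-1 := fun x hx => (Finset.mem_filter.mp hx).2
  constructor
  · rintro ⟨i, j, k, hij, hjk, h1, h2⟩
    rw [Fin.lt_def] at hij hjk h1 h2
    rw [gPerm_apply, gPerm_apply] at h1 h2
    rw [← hT] at h1 h2
    -- g j < g k < g i, i < j < k ; j must be in block of i
    have hjei : (j : ℕ) ≤ eF T n i := by
      by_contra h
      have := fF_blocks T n hS hij j.isLt (by omega)
      omega
    have hsij : sF T (j:ℕ) = sF T i := sF_up T n (le_of_lt hij) hjei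
    have heij : eF T n (j:ℕ) = eF T n i := e_up T n (le_of_lt hij) hjei
    set s := sF T (i:ℕ) with hsdef
    set e := eF T n (i:ℕ) with hedef
    have hsi : s ≤ (i:ℕ) := sF_le T (i:ℕ)
    have hei : (i:ℕ) ≤ e := eF_ge T n (i:ℕ)
    have hfi : fF T n i = s + e - (i:ℕ) := rfl
    have hfj : fF T n j = s + e - (j:ℕ) := by unfold fF; rw [hsij, heij]
    set v := fF T n (k:ℕ) with hvdef
    have h1' : s + e - (j:ℕ) < v := by rw [← hfj]; exact h1
    have h2' : v < s + e - (i:ℕ) := by rw [← hfi]; exact h2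
    set q : ℕ := s + e - v with hq
    have hq1 : (i:ℕ) < q := by omega
    have hq2 : q < (j:ℕ) := by omega
    have hsq : sF T q = s := s_blk T n (by omega) (by omega)
    have heq : eF T n q = e := e_blk T n hS (by omega) (by omega)
    have hfq : fF T n q = v := by unfold fF; rw [hsq, heq]; omega
    have e1 : fF T n (fF T n q) = q := fF_invol T n hS (by omega)
    have e2 : fF T n (fF T n (k:ℕ)) = (k:ℕ) := fF_invol T n hS k.isLt
    rw [hfq] at e1
    rw [← hvdef] at e2
    omega
  · rintro ⟨i, j, k, hij, hjk, h1, h2⟩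
    rw [Fin.lt_def] at hij hjk h1 h2
    rw [gPerm_apply, gPerm_apply] at h1 h2
    rw [← hT] at h1 h2
    -- g k < g i < g j, i < j < k : k must be in block of j
    have hkej : (k : ℕ) ≤ eF T n j := by
      by_contra h
      have := fF_blocks T n hS hjk k.isLt (by omega)
      omega
    have hsjk : sF T (k:ℕ) = sF T j := sF_up T n (le_of_lt hjk) hkej
    have hejk : eF T n (k:ℕ) = eF T n j := e_up T n (le_of_lt hjk) hkej
    set s := sF T (j:ℕ) with hsdef
    set e := eF T n (j:ℕ) with hedef
    have hsj : s ≤ (j:ℕ) := sF_le T (j:ℕ)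
    have hej : (j:ℕ) ≤ e := eF_ge T n (j:ℕ)
    have hfj : fF T n j = s + e - (j:ℕ) := rfl
    have hfk : fF T n k = s + e - (k:ℕ) := by unfold fF; rw [hsjk, hejk]
    set v := fF T n (i:ℕ) with hvdef
    have h1' : s + e - (k:ℕ) < v := by rw [← hfk]; exact h1
    have h2' : v < s + e - (j:ℕ) := by rw [← hfj]; exact h2
    set q : ℕ := s + e - v with hq
    have hq1 : (j:ℕ) < q := by omega
    have hq2 : q < (k:ℕ) := by omega
    have hsq : sF T q = s := s_blk T n (by omega) (by omega)
    have heq : eF T n q = e := e_blk T n hS (by omega) (by omega)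
    have hfq : fF T n q = v := by unfold fF; rw [hsq, heq]; omega
    have e1 : fF T n (fF T n q) = q := fF_invol T n hS (by omega)
    have e2 : fF T n (fF T n (i:ℕ)) = (i:ℕ) := fF_invol T n hS i.isLt
    rw [hfq] at e1
    rw [← hvdef] at e2
    omega

section Recon

variable {n : ℕ} (σ : Equiv.Perm (Fin n))

lemma char1 (hA : Avoids312 σ ∧ Avoids231 σ) {i : ℕ} (h : i+1 < n)
    (hd : ext' σ (i+1) < ext' σ i) : ext' σ i = ext' σ (i+1) + 1 := by
  by_contra hne
  have hin : i < n := by omega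
  rw [ext'_eq σ h, ext'_eq σ hin] at hd hne
  set I : Fin n := ⟨i, hin⟩
  set I1 : Fin n := ⟨i+1, h⟩
  have hv : (σ I : ℕ) - 1 < n := by have := (σ I).isLt; omega
  set V : Fin n := ⟨(σ I : ℕ) - 1, hv⟩
  set p : Fin n := σ.symm V with hp
  have hσp : σ p = V := σ.apply_symm_apply V
  have hv1 : (σ I1 : ℕ) < (V : ℕ) := by simp only [V]; omega
  have hv2 : (V : ℕ) < (σ I : ℕ) := by simp only [V]; omega
  rcases Nat.lt_trichotomy (p : ℕ) i with hc | hc | hc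
  · -- 231 at (p, I, I1)
    exact hA.2 ⟨p, I, I1, by exact Fin.lt_def.mpr hc, by simp [Fin.lt_def, I, I1],
      by rw [hσp]; exact Fin.lt_def.mpr hv1, by rw [hσp]; exact Fin.lt_def.mpr hv2⟩
  · -- p = I impossible
    have : p = I := Fin.ext hc
    rw [this] at hσp
    have := congrArg Fin.val hσp
    simp only [V] at this
    omega
  · rcases Nat.lt_or_ge (i+1) (p : ℕ) with hc2 | hc2
    · -- 312 at (I, I1, p)
      exact hA.1 ⟨I, I1, p, by simp [Fin.lt_def, I, I1], by simp [Fin.lt_def, I1, hc2],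
        by rw [hσp]; exact Fin.lt_def.mpr hv1, by rw [hσp]; exact Fin.lt_def.mpr hv2⟩
    · have : p = I1 := Fin.ext (show (p:ℕ) = i+1 by omega)
      rw [this] at hσp
      have := congrArg Fin.val hσp
      simp only [V] at this
      omega

lemma char2 (hA : Avoids312 σ ∧ Avoids231 σ) {i j : ℕ} (h : i+1 < n)
    (ha : ext' σ i < ext' σ (i+1)) (hj : j ≤ i) : ext' σ j < ext' σ (i+1) := by
  rcases Nat.eq_or_lt_of_le hj with rfl | hj
  · exact ha
  · by_contra hc
    have hjn : j < n := by omega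
    have hin : i < n := by omega
    rw [ext'_eq σ h, ext'_eq σ hin] at ha
    rw [ext'_eq σ h, ext'_eq σ hjn] at hc
    set I : Fin n := ⟨i, hin⟩
    set I1 : Fin n := ⟨i+1, h⟩
    set J : Fin n := ⟨j, hjn⟩
    have hne : (σ I1 : ℕ) ≠ (σ J : ℕ) := by
      intro hh
      have : I1 = J := σ.injective (Fin.ext hh)
      have := congrArg Fin.val this
      simp only [I1, J] at this
      omega
    exact hA.1 ⟨J, I, I1, by simp [Fin.lt_def, J, I, hj], by simp [Fin.lt_def, I, I1],
      Fin.lt_def.mpr ha, Fin.lt_def.mpr (by omega)⟩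

lemma run_lemma (hA : Avoids312 σ ∧ Avoids231 σ) {s i : ℕ} (h1 : s ≤ i) (h2 : i < n)
    (hD : ∀ j, s ≤ j → j < i → j ∈ Dset σ) : ext' σ s = ext' σ i + (i - s) := by
  rcases Nat.eq_or_lt_of_le h1 with rfl | h
  · omega
  · have hi1 : i - 1 ∈ Dset σ := hD _ (by omega) (by omega)
    have hlt : ext' σ (i-1+1) < ext' σ (i-1) := (Finset.mem_filter.mp hi1).2
    have hn1 : (i-1) + 1 < n := by
      have := Finset.mem_range.mp (Finset.mem_filter.mp hi1).1
      omega
    have hch := char1 σ hA hn1 hlt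
    have hrec := run_lemma hA (show s ≤ i-1 by omega) (by omega)
      (fun j ha hb => hD j ha (by omega))
    have : i - 1 + 1 = i := by omega
    rw [this] at hch
    omega
  termination_by i - s

lemma IVT (hA : Avoids312 σ ∧ Avoids231 σ) {a b v : ℕ} (hab : a ≤ b) (hb : b < n)
    (h1 : ext' σ b ≤ v) (h2 : v ≤ ext' σ a) : ∃ q, a ≤ q ∧ q ≤ b ∧ ext' σ q = v := by
  rcases Nat.eq_or_lt_of_le h2 with he | hlt
  · exact ⟨a, le_rfl, hab, he.symm⟩
  · have hne : a ≠ b := by intro hh; subst hh; omega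
    have hab' : a < b := by omega
    have ha1 : a + 1 ≤ b := hab'
    rcases Nat.lt_or_ge (ext' σ (a+1)) (ext' σ a) with hd | hd
    · have := char1 σ hA (by omega) hd
      have h2' : v ≤ ext' σ (a+1) := by omega
      obtain ⟨q, hq1, hq2, hq3⟩ := IVT hA ha1 hb h1 h2'
      exact ⟨q, by omega, hq2, hq3⟩
    · have h2' : v ≤ ext' σ (a+1) := by omega
      obtain ⟨q, hq1, hq2, hq3⟩ := IVT hA ha1 hb h1 h2'
      exact ⟨q, by omega, hq2, hq3⟩
  termination_by b - a

lemma perm_lower {i : ℕ} (hlow : ∀ x : Fin n, (x:ℕ) < i → (σ x : ℕ) < i)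
    {p : Fin n} (hp : (σ p : ℕ) < i) : (p : ℕ) < i := by
  classical
  set A : Finset (Fin n) := Finset.univ.filter (fun x => (x:ℕ) < i) with hA
  have hmaps : ∀ x ∈ A, σ x ∈ A := by
    intro x hx
    simp only [A, Finset.mem_filter, Finset.mem_univ, true_and] at hx ⊢
    exact hlow x hx
  have himg : A.image σ = A := by
    apply Finset.eq_of_subset_of_card_le
    · intro y hy
      obtain ⟨x, hx, rfl⟩ := Finset.mem_image.mp hy
      exact hmaps x hx
    · rw [Finset.card_image_of_injective _ σ.injective]
  have hpA : σ p ∈ A := by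
    simp only [A, Finset.mem_filter, Finset.mem_univ, true_and]
    exact hp
  rw [← himg] at hpA
  obtain ⟨x, hx, hxe⟩ := Finset.mem_image.mp hpA
  have : x = p := σ.injective hxe
  subst this
  simpa only [A, Finset.mem_filter, Finset.mem_univ, true_and] using hx

/-- main reconstruction: σ(i) + i = s(i) + e(i) -/
lemma recon (hA : Avoids312 σ ∧ Avoids231 σ) :
    ∀ i, i < n → ext' σ i + i = sF (Dset σ) i + eF (Dset σ) n i := by
  intro i
  induction i using Nat.strong_induction_on with
  | _ i IH =>
    intro hin
    set D := Dset σ with hD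
    have hDsub : ∀ x ∈ D, x < n-1 := Dset_sub σ
    rcases Nat.lt_or_ge (sF D i) i with hlt | hge
    · -- not a block start : i-1 ∈ D
      have hm : i - 1 ∈ D := sF_mem D (i := i) (j := i - 1) (by omega) (by omega)
      have hn1 : i - 1 < n - 1 := hDsub _ hm
      have hd : ext' σ (i-1+1) < ext' σ (i-1) := (Finset.mem_filter.mp hm).2
      have hch := char1 σ hA (by omega) hd
      have hih := IH (i-1) (by omega) (by omega)
      have hs : sF D (i-1+1) = sF D (i-1) := sF_succ_mem D hm
      have he : eF D n (i-1) = eF D n (i-1+1) := by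
        rw [eF_eq]; simp [hm, hn1]
      have hii : i - 1 + 1 = i := by omega
      rw [hii] at hch hs he
      omega
    · -- block start: sF D i = i
      have hsi : sF D i = i := le_antisymm (sF_le D i) hge
      set e := eF D n i with hedef
      have hie : i ≤ e := eF_ge D n i
      have hen : e ≤ n - 1 := eF_le D n (by omega)
      -- (a) all earlier positions have small values
      have hlow : ∀ x : Fin n, (x:ℕ) < i → (σ x : ℕ) < i := by
        intro x hx
        have hih := IH (x:ℕ) hx x.isLt
        rw [ext'_apply] at hih
        have hsx := sF_le D (x:ℕ)
        have hnotD : ¬ ((i-1) < n-1 ∧ (i-1) ∈ D) := by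
          rintro ⟨-, hmem⟩
          have h0 : 0 < sF D i := by omega
          have := sF_start D h0
          rw [hsi] at this
          exact this hmem
        have hex : eF D n (x:ℕ) ≤ i - 1 := eF_le_of D n (by omega) hnotD
        omega
      -- descents along the block
      have hrun : ∀ j, i ≤ j → j ≤ e → ext' σ i = ext' σ j + (j - i) := by
        intro j hj1 hj2
        exact run_lemma σ hA hj1 (by omega)
          (fun q hq1 hq2 => (eF_mem D n hq1 (by omega)).2)
      -- value at e is at least i
      have helow : i ≤ ext' σ e := by
        rw [ext'_eq σ (show e < n by omega)]
        by_contra hcon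
        have := perm_lower σ hlow (p := ⟨e, by omega⟩) (by omega)
        simp only at this
        omega
      have hge2 : e ≤ ext' σ i := by
        have := hrun e hie le_rfl
        omega
      -- value at i is at most e
      have hle2 : ext' σ i ≤ e := by
        by_contra hgt
        push_neg at hgt
        have hilt : ext' σ i < n := ext'_lt σ (by omega)
        have hen' : e < n - 1 := by omega
        have henD : e ∉ D := fun hmem => eF_end D n i ⟨by omega, hmem⟩
        have hasc : ext' σ e < ext' σ (e+1) := by
          have hnd : ¬ (ext' σ (e+1) < ext' σ e) := by
            intro hcon
            exact henD (Finset.mem_filter.mpr ⟨Finset.mem_range.mpr hen', hcon⟩)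
          have hne2 : ext' σ e ≠ ext' σ (e+1) :=
            fun hh => by have := ext'_inj σ (by omega) (by omega) hh; omega
          omega
        have hchar := char2 σ hA (by omega) hasc (show i ≤ e from hie)
        -- position of value i
        set P : Fin n := σ.symm ⟨i, hin⟩ with hP
        have hσP : ext' σ (P:ℕ) = i := by
          rw [ext'_apply σ P]
          simp [P]
        have hPgt : e < (P:ℕ) := by
          rcases Nat.lt_or_ge (P:ℕ) i with hc | hc
          · have := hlow P hc
            rw [ext'_apply] at hσP
            omega
          · rcases Nat.lt_or_ge e (P:ℕ) with hc2 | hc2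
            · exact hc2
            · have := hrun (P:ℕ) hc hc2
              omega
        obtain ⟨q, hq1, hq2, hq3⟩ := IVT σ hA (a := e+1) (b := (P:ℕ)) (v := ext' σ i)
          hPgt P.isLt (by omega) (by omega)
        have := ext'_inj σ (by omega) (by omega) hq3
        omega
      have : ext' σ i = e := le_antisymm hle2 hge2
      omega

lemma gPerm_Dset (hA : Avoids312 σ ∧ Avoids231 σ) : gPerm n (Dset σ) = σ := by
  apply Equiv.ext
  intro x
  apply Fin.ext
  rw [gPerm_apply]
  have hfil : (Dset σ).filter (· < n-1) = Dset σ :=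
    Finset.filter_true_of_mem (by simpa using Dset_sub σ)
  rw [hfil]
  have hrec := recon σ hA (x:ℕ) x.isLt
  rw [ext'_apply] at hrec
  have h1 := sF_le (Dset σ) (x:ℕ)
  have h2 := eF_ge (Dset σ) n (x:ℕ)
  unfold fF
  omega

end Recon

section Lis

variable {n : ℕ}

lemma lis_gPerm (hn : 0 < n) (S : Finset ℕ) (hS : ∀ x ∈ S, x < n-1) :
    lis (gPerm n S) = n - S.card := by
  classical
  have hfil : S.filter (· < n-1) = S := Finset.filter_true_of_mem (by simpa using hS)
  set E : Finset ℕ := Finset.range n \ S with hE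
  have hSsub : S ⊆ Finset.range n := fun x hx => Finset.mem_range.mpr (by have := hS x hx; omega)
  have hScard : S.card ≤ n - 1 := by
    have h1 : S ⊆ Finset.range (n-1) := fun x hx => Finset.mem_range.mpr (hS x hx)
    have := Finset.card_le_card h1
    simpa using this
  have hEcard : E.card = n - S.card := by
    rw [hE, Finset.card_sdiff_of_subset hSsub, Finset.card_range]
  set k := n - S.card with hk
  have hk1 : 1 ≤ k := by omega
  have hkn : k ≤ n := by omega
  have hmemE : ∀ x, x ∈ E ↔ x < n ∧ x ∉ S := by
    intro x
    simp [hE, Finset.mem_sdiff, Finset.mem_range]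
  -- value formula at block ends
  have hval : ∀ a, a ∈ E → fF S n a = sF S a := by
    intro a ha
    rw [hmemE] at ha
    have : eF S n a = a := by rw [eF_eq]; simp [ha.2]
    unfold fF
    have := sF_le S a
    omega
  have hvmono : ∀ a b, a ∈ E → b ∈ E → a < b → sF S a < sF S b := by
    intro a b ha hb hab
    rw [hmemE] at ha hb
    have h1 : a < sF S b := by
      by_contra h
      exact ha.2 (sF_mem S (by omega) hab)
    have := sF_le S a
    omega
  have hupper : lis (gPerm n S) ≤ k := by
    rcases Nat.eq_zero_or_pos (lis (gPerm n S)) with h0 | hpos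
    · omega
    · set m := lis (gPerm n S) with hm
      have hiff := Nat.findGreatest_eq_iff.mp
        (show Nat.findGreatest (fun k => ∃ f : Fin k → Fin n,
          (∀ i j : Fin k, i < j → f i < f j) ∧
          (∀ i j : Fin k, i < j → (gPerm n S) (f i) < (gPerm n S) (f j))) n
          = m from rfl)
      obtain ⟨f, hf1, hf2⟩ := hiff.2.1 (by omega)
      -- map each index to the block end of its position
      have hinj : ∀ i j : Fin m, i < j → eF S n (f i) ≠ eF S n (f j) := by
        intro i j hij heq
        have hpos_lt : (f i : ℕ) < (f j : ℕ) := Fin.lt_def.mp (hf1 i j hij)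
        have hle : (f j : ℕ) ≤ eF S n (f i) := by
          rw [heq]; exact eF_ge S n (f j)
        have hs : sF S (f j : ℕ) = sF S (f i : ℕ) := sF_up S n (le_of_lt hpos_lt) hle
        have hv := Fin.lt_def.mp (hf2 i j hij)
        rw [gPerm_apply, gPerm_apply, hfil] at hv
        unfold fF at hv
        have b1 := sF_le S (f i : ℕ)
        have b2 := eF_ge S n (f i : ℕ)
        omega
      have hmapsE : ∀ i : Fin m, eF S n (f i) ∈ E := by
        intro i
        rw [hmemE]
        constructor
        · have := eF_le S n (i := (f i : ℕ)) (by have := (f i).isLt; omega)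
          omega
        · intro hmem
          exact eF_end S n (f i) ⟨hS _ hmem, hmem⟩
      have hinjOn : Set.InjOn (fun i : Fin m => eF S n (f i)) ↑(Finset.univ : Finset (Fin m)) := by
        intro i _ j _ hij
        rcases Nat.lt_trichotomy (i : ℕ) (j : ℕ) with h | h | h
        · exact absurd hij (hinj i j (Fin.lt_def.mpr h))
        · exact Fin.ext h
        · exact absurd hij.symm (hinj j i (Fin.lt_def.mpr h))
      have hcard := Finset.card_le_card_of_injOn (s := (Finset.univ : Finset (Fin m)))
          (t := E) (fun i : Fin m => eF S n (f i)) (fun i _ => hmapsE i) hinjOn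
      simp only [Finset.card_univ, Fintype.card_fin] at hcard
      omega
  have hlower : k ≤ lis (gPerm n S) := by
    apply Nat.le_findGreatest hkn
    have hEc : E.card = k := by omega
    set eio := E.orderIsoOfFin hEc with heio
    refine ⟨fun i => ⟨(eio i : ℕ), ?_⟩, ?_, ?_⟩
    · have := (eio i).2
      rw [hmemE] at this
      exact this.1
    · intro i j hij
      rw [Fin.lt_def]
      exact_mod_cast (eio.lt_iff_lt.mpr hij)
    · intro i j hij
      rw [Fin.lt_def, gPerm_apply, gPerm_apply, hfil]
      have hai : ((eio i : ℕ)) ∈ E := (eio i).2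
      have haj : ((eio j : ℕ)) ∈ E := (eio j).2
      have hab : ((eio i : ℕ)) < ((eio j : ℕ)) := by
        exact_mod_cast (eio.lt_iff_lt.mpr hij)
      rw [hval _ hai, hval _ haj]
      exact hvmono _ _ hai haj hab
  omega

end Lis


lemma sumcard (u : Finset ℕ) :
    ∑ S ∈ u.powerset, (S.card : ℚ) * 2 = u.card * 2 ^ u.card := by
  classical
  induction u using Finset.induction_on with
  | empty => simp
  | insert a u ha ih =>
    rw [Finset.sum_powerset_insert ha]
    have hcongr : ∑ t ∈ u.powerset, ((insert a t).card : ℚ) * 2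
        = ∑ t ∈ u.powerset, ((t.card : ℚ) * 2 + 2) := by
      apply Finset.sum_congr rfl
      intro t ht
      have hat : a ∉ t := fun hmem => ha (Finset.mem_powerset.mp ht hmem)
      rw [Finset.card_insert_of_notMem hat]
      push_cast
      ring
    rw [hcongr, Finset.sum_add_distrib, ih, Finset.sum_const, Finset.card_powerset,
      Finset.card_insert_of_notMem ha]
    push_cast
    ring

end Stmt9


/-- the sum of `L(σ)` over `S_n(312,231)` equals `2^(n-1)·(n+1)/2`. -/
theorem stmt_9 (n : ℕ) (hn : 1 ≤ n) :
    ∑ σ ∈ Finset.univ.filter (fun σ : Equiv.Perm (Fin n) => Avoids312 σ ∧ Avoids231 σ),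
        (lis σ : ℚ)
      = 2 ^ (n - 1) * ((n : ℚ) + 1) / 2 := by
  classical
  have hmain : ∑ σ ∈ Finset.univ.filter
        (fun σ : Equiv.Perm (Fin n) => Avoids312 σ ∧ Avoids231 σ), (lis σ : ℚ)
      = ∑ S ∈ (Finset.range (n-1)).powerset, ((n : ℚ) - S.card) := by
    apply Finset.sum_nbij' (i := Stmt9.Dset) (j := Stmt9.gPerm n)
    · intro σ hσ
      exact Finset.mem_powerset.mpr
        (fun x hx => Finset.mem_range.mpr (Stmt9.Dset_sub σ x hx))
    · intro S hS
      simp only [Finset.mem_filter, Finset.mem_univ, true_and]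
      exact Stmt9.gPerm_avoids n S
    · intro σ hσ
      exact Stmt9.gPerm_Dset σ (Finset.mem_filter.mp hσ).2
    · intro S hS
      exact Stmt9.Dset_gPerm n S
        (fun x hx => Finset.mem_range.mp (Finset.mem_powerset.mp hS hx))
    · intro σ hσ
      have hA := (Finset.mem_filter.mp hσ).2
      have hl := Stmt9.lis_gPerm (show 0 < n by omega) (Stmt9.Dset σ) (Stmt9.Dset_sub σ)
      rw [Stmt9.gPerm_Dset σ hA] at hl
      have hc : (Stmt9.Dset σ).card ≤ n := by
        have h1 : Stmt9.Dset σ ⊆ Finset.range (n-1) :=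
          fun x hx => Finset.mem_range.mpr (Stmt9.Dset_sub σ x hx)
        have := Finset.card_le_card h1
        simp only [Finset.card_range] at this
        omega
      rw [hl, Nat.cast_sub hc]
  rw [hmain, Finset.sum_sub_distrib, Finset.sum_const, Finset.card_powerset,
    Finset.card_range, nsmul_eq_mul]
  have h2 : (∑ S ∈ (Finset.range (n-1)).powerset, (S.card : ℚ)) * 2
      = ((n:ℚ) - 1) * 2 ^ (n-1) := by
    rw [Finset.sum_mul]
    rw [Stmt9.sumcard (Finset.range (n-1))]
    rw [Finset.card_range]
    rw [Nat.cast_sub hn]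
    push_cast
    ring
  push_cast
  linear_combination (-1/2 : ℚ) * h2
end
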